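/- arXiv:2007.09692 — 4 statements merged into one kernel-verified Lean document; each statement's English description precedes it below -/
import Mathlib

section
/- Let A : [0,∞) → ℝ^{n×n} and a : [0,∞) → ℝⁿ be (Bochner/Lebesgue) integrable on [0,∞). Then for every z ∈ C_lim([0,∞), ℝⁿ) and every τ ∈ [0,∞] there exists a unique x ∈ C_lim([0,∞), ℝⁿ) satisfying x(t) = z(t) + ∫_τ^t (A(s) x(s) + a(s)) ds for all t ∈ [0,∞) (and in the limit t → ∞). -/
open MeasureTheory Filter Topology Set
open scoped ENNReal
open scoped Interval

namespace VolterraAux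

lemma integrableOn_mul_pow {g G : ℝ → ℝ} (hgm : Measurable g) (hgi : Integrable g)
    (hGm : Measurable G) (hG0 : ∀ s, 0 ≤ G s) {c : ℝ} (hGc : ∀ s, G s ≤ c)
    (k : ℕ) (S : Set ℝ) : IntegrableOn (fun s => g s * G s ^ k) S := by
  have hdom : Integrable (fun s => c ^ k * |g s|) (volume.restrict S) :=
    ((hgi.abs).restrict.const_mul _)
  refine hdom.mono' ((hgm.mul (hGm.pow_const k)).aestronglyMeasurable) (ae_of_all _ fun s => ?_)
  have h1 : |G s ^ k| ≤ c ^ k := by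
    rw [abs_of_nonneg (pow_nonneg (hG0 s) k)]
    exact pow_le_pow_left₀ (hG0 s) (hGc s) k
  calc ‖g s * G s ^ k‖ = |g s| * |G s ^ k| := abs_mul _ _
    _ ≤ |g s| * c ^ k := mul_le_mul_of_nonneg_left h1 (abs_nonneg _)
    _ = c ^ k * |g s| := mul_comm _ _

lemma key_low {g : ℝ → ℝ} (hgm : Measurable g) (hgi : Integrable g) (hg0 : ∀ s, 0 ≤ g s)
    (l : ℝ) :
    ∀ (k : ℕ) (b : ℝ), ∫ s in Ioc l b, g s * (∫ r in Ioc l s, g r) ^ k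
      = (∫ s in Ioc l b, g s) ^ (k + 1) / (k + 1) := by
  set G : ℝ → ℝ := fun s => ∫ r in Ioc l s, g r with hGdef
  have hGmono : Monotone G := by
    intro s s' h
    exact setIntegral_mono_set hgi.integrableOn (ae_of_all _ hg0)
      (HasSubset.Subset.eventuallyLE (Ioc_subset_Ioc_right h))
  have hGm : Measurable G := hGmono.measurable
  have hG0 : ∀ s, 0 ≤ G s := fun s => setIntegral_nonneg measurableSet_Ioc fun _ _ => hg0 _
  have hGc : ∀ s, G s ≤ ∫ x, g x := fun s => setIntegral_le_integral hgi (ae_of_all _ hg0)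
  intro k
  induction k with
  | zero => intro b; simp
  | succ k ih =>
    intro b
    by_cases hlb : l ≤ b
    swap
    · rw [Ioc_eq_empty (fun h => hlb h.le)]
      simp
    set S : Set ℝ := Ioc l b with hSdef
    have hSm : MeasurableSet S := measurableSet_Ioc
    have hIk : IntegrableOn (fun s => g s * G s ^ k) S :=
      integrableOn_mul_pow hgm hgi hGm hG0 hGc k S
    have hIk1 : IntegrableOn (fun s => g s * G s ^ (k + 1)) S :=
      integrableOn_mul_pow hgm hgi hGm hG0 hGc (k + 1) S
    -- Step 1
    have h1 : ∫ s in S, (g s * G s ^ k) * (G b - G s)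
        = G b * (G b ^ (k + 1) / (k + 1)) - ∫ s in S, g s * G s ^ (k + 1) := by
      have heq : ∀ s, (g s * G s ^ k) * (G b - G s)
          = G b * (g s * G s ^ k) - g s * G s ^ (k + 1) := by
        intro s; ring
      simp_rw [heq]
      rw [integral_sub (hIk.const_mul _) hIk1, integral_const_mul, ih b]
    -- Step 2 (Fubini)
    have h2 : ∫ s in S, (g s * G s ^ k) * (G b - G s)
        = (∫ s in S, g s * G s ^ (k + 1)) / (k + 1) := by
      have hsplit : ∀ s ∈ S, G b - G s = ∫ u in S, (Ioi s).indicator g u := by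
        intro s hs
        have hunion : Ioc l s ∪ Ioc s b = Ioc l b := Ioc_union_Ioc_eq_Ioc hs.1.le hs.2
        have hGb : G b = G s + ∫ u in Ioc s b, g u := by
          rw [hGdef]
          rw [← setIntegral_union (Ioc_disjoint_Ioc_of_le le_rfl) measurableSet_Ioc
            hgi.integrableOn hgi.integrableOn, hunion]
        rw [setIntegral_indicator measurableSet_Ioi]
        have hset : S ∩ Ioi s = Ioc s b := by
          rw [hSdef, Ioc_inter_Ioi, max_eq_right hs.1.le]
        rw [hset, hGb]; ring
      have hF : Integrable (Function.uncurry fun s u => (g s * G s ^ k) * (Ioi s).indicator g u)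
          ((volume.restrict S).prod (volume.restrict S)) := by
        have hdom : Integrable (fun p : ℝ × ℝ => ((∫ x, g x) ^ k * |g p.1|) * |g p.2|)
            ((volume.restrict S).prod (volume.restrict S)) :=
          ((hgi.abs.restrict.const_mul _).mul_prod hgi.abs.restrict)
        refine hdom.mono' ?_ (ae_of_all _ fun p => ?_)
        · have : (Function.uncurry fun s u => (g s * G s ^ k) * (Ioi s).indicator g u)
              = fun p : ℝ × ℝ => (g p.1 * G p.1 ^ k) *
                ({q : ℝ × ℝ | q.1 < q.2}.indicator (fun q => g q.2) p) := by
            funext p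
            simp only [Function.uncurry, indicator, mem_Ioi, mem_setOf_eq]
          rw [this]
          exact (((hgm.comp measurable_fst).mul
            ((hGm.comp measurable_fst).pow_const k)).mul
            ((hgm.comp measurable_snd).indicator
              (measurableSet_lt measurable_fst measurable_snd))).aestronglyMeasurable
        · rcases p with ⟨s, u⟩
          simp only [Function.uncurry]
          have hind : |(Ioi s).indicator g u| ≤ |g u| := by
            rw [indicator]
            split_ifs
            · exact le_rfl
            · simp
          have hGk : |G s ^ k| ≤ (∫ x, g x) ^ k := by
            rw [abs_of_nonneg (pow_nonneg (hG0 s) k)]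
            exact pow_le_pow_left₀ (hG0 s) (hGc s) k
          calc ‖g s * G s ^ k * (Ioi s).indicator g u‖
              = |g s| * |G s ^ k| * |(Ioi s).indicator g u| := by
                rw [Real.norm_eq_abs, abs_mul, abs_mul]
            _ ≤ |g s| * (∫ x, g x) ^ k * |g u| :=
                mul_le_mul (mul_le_mul_of_nonneg_left hGk (abs_nonneg _)) hind (abs_nonneg _)
                  (mul_nonneg (abs_nonneg _) (pow_nonneg (integral_nonneg hg0) k))
            _ = (∫ x, g x) ^ k * |g s| * |g u| := by ring
      calc ∫ s in S, (g s * G s ^ k) * (G b - G s)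
          = ∫ s in S, ∫ u in S, (g s * G s ^ k) * (Ioi s).indicator g u := by
            refine setIntegral_congr_fun hSm fun s hs => ?_
            rw [hsplit s hs, integral_const_mul]
        _ = ∫ u in S, ∫ s in S, (g s * G s ^ k) * (Ioi s).indicator g u := by
            exact integral_integral_swap hF
        _ = ∫ u in S, g u * (G u ^ (k + 1) / (k + 1)) := by
            refine setIntegral_congr_fun hSm fun u hu => ?_
            have hval : ∀ s, (g s * G s ^ k) * (Ioi s).indicator g u
                = (Iio u).indicator (fun s => (g s * G s ^ k) * g u) s := by
              intro s
              simp only [indicator, mem_Ioi, mem_Iio]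
              split_ifs with h
              · rfl
              · ring
            simp_rw [hval]
            rw [setIntegral_indicator measurableSet_Iio]
            have hset : S ∩ Iio u = Ioo l u := by
              ext s
              simp only [hSdef, mem_inter_iff, mem_Ioc, mem_Iio, mem_Ioo]
              constructor
              · rintro ⟨⟨h1, h2⟩, h3⟩; exact ⟨h1, h3⟩
              · rintro ⟨h1, h3⟩; exact ⟨⟨h1, h3.le.trans hu.2⟩, h3⟩
            rw [hset, setIntegral_congr_set Ioo_ae_eq_Ioc, integral_mul_const, ih u]
            ring
        _ = (∫ u in S, g u * G u ^ (k + 1)) / (k + 1) := by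
            rw [← integral_div]
            refine setIntegral_congr_fun hSm fun u _ => ?_
            ring
    -- combine
    have hpos : (0:ℝ) < (k:ℝ) + 1 := by positivity
    have hmain := h1.symm.trans h2
    set I := ∫ s in S, g s * G s ^ (k + 1) with hI
    have hgoal : I = G b ^ (k + 1 + 1) / ((k:ℝ) + 1 + 1) := by
      have h2pos : (0:ℝ) < (k:ℝ) + 1 + 1 := by positivity
      field_simp at hmain ⊢
      linear_combination -hmain
    calc ∫ s in Ioc l b, g s * (∫ r in Ioc l s, g r) ^ (k+1) = I := rfl
      _ = G b ^ (k + 1 + 1) / ((k:ℝ) + 1 + 1) := hgoal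
      _ = (∫ s in Ioc l b, g s) ^ (k + 1 + 1) / (↑(k + 1) + 1) := by push_cast; rfl

end VolterraAux

namespace VolterraAux

open Function in
lemma key_high {g : ℝ → ℝ} (hgm : Measurable g) (hgi : Integrable g) (hg0 : ∀ s, 0 ≤ g s)
    (U : Set ℝ) (hU : MeasurableSet U) :
    ∀ (k : ℕ) (b : ℝ), ∫ s in U ∩ Ioi b, g s * (∫ r in U ∩ Ioi s, g r) ^ k
      = (∫ s in U ∩ Ioi b, g s) ^ (k + 1) / (k + 1) := by
  set T : ℝ → ℝ := fun s => ∫ r in U ∩ Ioi s, g r with hTdef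
  have hTanti : Antitone T := by
    intro s s' h
    exact setIntegral_mono_set hgi.integrableOn (ae_of_all _ hg0)
      (HasSubset.Subset.eventuallyLE (inter_subset_inter_right U (Ioi_subset_Ioi h)))
  have hTm : Measurable T := hTanti.measurable
  have hT0 : ∀ s, 0 ≤ T s := fun s =>
    setIntegral_nonneg (hU.inter measurableSet_Ioi) fun _ _ => hg0 _
  have hTc : ∀ s, T s ≤ ∫ x, g x := fun s => setIntegral_le_integral hgi (ae_of_all _ hg0)
  intro k
  induction k with
  | zero => intro b; simp
  | succ k ih =>
    intro b
    set S : Set ℝ := U ∩ Ioi b with hSdef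
    have hSm : MeasurableSet S := hU.inter measurableSet_Ioi
    have hIk : IntegrableOn (fun s => g s * T s ^ k) S :=
      integrableOn_mul_pow hgm hgi hTm hT0 hTc k S
    have hIk1 : IntegrableOn (fun s => g s * T s ^ (k + 1)) S :=
      integrableOn_mul_pow hgm hgi hTm hT0 hTc (k + 1) S
    have h1 : ∫ s in S, (g s * T s ^ k) * (T b - T s)
        = T b * (T b ^ (k + 1) / (k + 1)) - ∫ s in S, g s * T s ^ (k + 1) := by
      have heq : ∀ s, (g s * T s ^ k) * (T b - T s)
          = T b * (g s * T s ^ k) - g s * T s ^ (k + 1) := by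
        intro s; ring
      simp_rw [heq]
      rw [integral_sub (hIk.const_mul _) hIk1, integral_const_mul, ih b]
    have h2 : ∫ s in S, (g s * T s ^ k) * (T b - T s)
        = (∫ s in S, g s * T s ^ (k + 1)) / (k + 1) := by
      have hsplit : ∀ s ∈ S, T b - T s = ∫ u in S, (Iio s).indicator g u := by
        intro s hs
        have hbs : b < s := hs.2
        have hunion : (U ∩ Ioc b s) ∪ (U ∩ Ioi s) = U ∩ Ioi b := by
          rw [← inter_union_distrib_left, Ioc_union_Ioi_eq_Ioi hbs.le]
        have hdisj : Disjoint (U ∩ Ioc b s) (U ∩ Ioi s) :=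
          Disjoint.mono inter_subset_right inter_subset_right
            (Set.disjoint_left.mpr fun u hu hu' => (not_lt.mpr hu.2) hu')
        have hTb : T b = (∫ u in U ∩ Ioc b s, g u) + T s := by
          rw [hTdef]
          rw [← setIntegral_union hdisj (hU.inter measurableSet_Ioi)
            hgi.integrableOn hgi.integrableOn, hunion]
        rw [setIntegral_indicator measurableSet_Iio]
        have hset : S ∩ Iio s = U ∩ Ioo b s := by
          rw [hSdef, inter_assoc, Ioi_inter_Iio]
        rw [hset, setIntegral_congr_set (show (U ∩ Ioo b s : Set ℝ) =ᵐ[volume] (U ∩ Ioc b s : Set ℝ) from (EventuallyEq.refl _ U).inter Ioo_ae_eq_Ioc),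
          hTb]
        ring
      have hF : Integrable (uncurry fun s u => (g s * T s ^ k) * (Iio s).indicator g u)
          ((volume.restrict S).prod (volume.restrict S)) := by
        have hdom : Integrable (fun p : ℝ × ℝ => ((∫ x, g x) ^ k * |g p.1|) * |g p.2|)
            ((volume.restrict S).prod (volume.restrict S)) :=
          ((hgi.abs.restrict.const_mul _).mul_prod hgi.abs.restrict)
        refine hdom.mono' ?_ (ae_of_all _ fun p => ?_)
        · have : (uncurry fun s u => (g s * T s ^ k) * (Iio s).indicator g u)
              = fun p : ℝ × ℝ => (g p.1 * T p.1 ^ k) *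
                ({q : ℝ × ℝ | q.2 < q.1}.indicator (fun q => g q.2) p) := by
            funext p
            simp only [uncurry, indicator, mem_Iio, mem_setOf_eq]
          rw [this]
          exact (((hgm.comp measurable_fst).mul
            ((hTm.comp measurable_fst).pow_const k)).mul
            ((hgm.comp measurable_snd).indicator
              (measurableSet_lt measurable_snd measurable_fst))).aestronglyMeasurable
        · rcases p with ⟨s, u⟩
          simp only [uncurry]
          have hind : |(Iio s).indicator g u| ≤ |g u| := by
            rw [indicator]
            split_ifs
            · exact le_rfl
            · simp
          have hTk : |T s ^ k| ≤ (∫ x, g x) ^ k := by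
            rw [abs_of_nonneg (pow_nonneg (hT0 s) k)]
            exact pow_le_pow_left₀ (hT0 s) (hTc s) k
          calc ‖g s * T s ^ k * (Iio s).indicator g u‖
              = |g s| * |T s ^ k| * |(Iio s).indicator g u| := by
                rw [Real.norm_eq_abs, abs_mul, abs_mul]
            _ ≤ |g s| * (∫ x, g x) ^ k * |g u| :=
                mul_le_mul (mul_le_mul_of_nonneg_left hTk (abs_nonneg _)) hind (abs_nonneg _)
                  (mul_nonneg (abs_nonneg _) (pow_nonneg (integral_nonneg hg0) k))
            _ = (∫ x, g x) ^ k * |g s| * |g u| := by ring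
      calc ∫ s in S, (g s * T s ^ k) * (T b - T s)
          = ∫ s in S, ∫ u in S, (g s * T s ^ k) * (Iio s).indicator g u := by
            refine setIntegral_congr_fun hSm fun s hs => ?_
            rw [hsplit s hs, integral_const_mul]
        _ = ∫ u in S, ∫ s in S, (g s * T s ^ k) * (Iio s).indicator g u :=
            integral_integral_swap hF
        _ = ∫ u in S, g u * (T u ^ (k + 1) / (k + 1)) := by
            refine setIntegral_congr_fun hSm fun u hu => ?_
            have hval : ∀ s, (g s * T s ^ k) * (Iio s).indicator g u
                = (Ioi u).indicator (fun s => (g s * T s ^ k) * g u) s := by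
              intro s
              simp only [indicator, mem_Iio, mem_Ioi]
              split_ifs with h
              · rfl
              · ring
            simp_rw [hval]
            rw [setIntegral_indicator measurableSet_Ioi]
            have hset : S ∩ Ioi u = U ∩ Ioi u := by
              rw [hSdef, inter_assoc, Ioi_inter_Ioi, sup_eq_right.mpr hu.2.le]
            rw [hset, integral_mul_const, ih u]
            ring
        _ = (∫ u in S, g u * T u ^ (k + 1)) / (k + 1) := by
            rw [← integral_div]
            refine setIntegral_congr_fun hSm fun u _ => ?_
            ring
    have hmain := h1.symm.trans h2
    set I := ∫ s in S, g s * T s ^ (k + 1) with hI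
    have hgoal : I = T b ^ (k + 1 + 1) / ((k:ℝ) + 1 + 1) := by
      have h2pos : (0:ℝ) < (k:ℝ) + 1 + 1 := by positivity
      have hpos : (0:ℝ) < (k:ℝ) + 1 := by positivity
      field_simp at hmain ⊢
      linear_combination -hmain
    calc ∫ s in U ∩ Ioi b, g s * (∫ r in U ∩ Ioi s, g r) ^ (k+1) = I := rfl
      _ = T b ^ (k + 1 + 1) / ((k:ℝ) + 1 + 1) := hgoal
      _ = (∫ s in U ∩ Ioi b, g s) ^ (k + 1 + 1) / (↑(k + 1) + 1) := by push_cast; rfl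

end VolterraAux

namespace VolterraAux

variable {E : Type*} [NormedAddCommGroup E] [NormedSpace ℝ E] [CompleteSpace E]

open Classical in
noncomputable def prim (τ : ℝ≥0∞) (f : ℝ → E) (t : ℝ) : E :=
  if τ = ⊤ then -(∫ s in Ioi t, f s) else ∫ s in τ.toReal..t, f s

open Classical in
noncomputable def Sset (τ : ℝ≥0∞) (t : ℝ) : Set ℝ :=
  if τ = ⊤ then Ioi t else Ι τ.toReal t

lemma measurableSet_Sset (τ : ℝ≥0∞) (t : ℝ) : MeasurableSet (Sset τ t) := by
  unfold Sset; split_ifs; exacts [measurableSet_Ioi, measurableSet_uIoc]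

lemma Sset_subset_Ioi (τ : ℝ≥0∞) {t : ℝ} (ht : 0 ≤ t) : Sset τ t ⊆ Ioi 0 := by
  unfold Sset; split_ifs with h
  · exact Ioi_subset_Ioi ht
  · intro s hs
    have h1 : min τ.toReal t < s := hs.1
    have h2 : (0:ℝ) ≤ min τ.toReal t := le_min ENNReal.toReal_nonneg ht
    exact mem_Ioi.mpr (lt_of_le_of_lt h2 h1)

lemma integral_Ioi_eq (f : ℝ → E) (hf : Integrable f) (t : ℝ) :
    ∫ s in Ioi t, f s = (∫ s in Ioi 0, f s) - ∫ s in (0:ℝ)..t, f s := by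
  rcases le_total 0 t with h | h
  · have hdisj : Disjoint (Ioc 0 t) (Ioi t) :=
      Set.disjoint_left.mpr fun u hu hu' => absurd hu' (not_lt.mpr hu.2)
    have hsplit : ∫ s in Ioi (0:ℝ), f s = (∫ s in Ioc (0:ℝ) t, f s) + ∫ s in Ioi t, f s := by
      rw [← Ioc_union_Ioi_eq_Ioi h]
      exact setIntegral_union hdisj measurableSet_Ioi hf.integrableOn hf.integrableOn
    rw [intervalIntegral.integral_of_le h, hsplit]; abel
  · have hdisj : Disjoint (Ioc t 0) (Ioi 0) :=
      Set.disjoint_left.mpr fun u hu hu' => absurd hu' (not_lt.mpr hu.2)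
    have hsplit : ∫ s in Ioi t, f s = (∫ s in Ioc t 0, f s) + ∫ s in Ioi (0:ℝ), f s := by
      rw [← Ioc_union_Ioi_eq_Ioi h]
      exact setIntegral_union hdisj measurableSet_Ioi hf.integrableOn hf.integrableOn
    rw [intervalIntegral.integral_of_ge h, hsplit]; abel

lemma continuous_prim (τ : ℝ≥0∞) {f : ℝ → E} (hf : Integrable f) :
    Continuous (prim τ f) := by
  unfold prim; split_ifs with h
  · have heq : (fun t => -(∫ s in Ioi t, f s))
        = fun t => (∫ s in (0:ℝ)..t, f s) - ∫ s in Ioi 0, f s := by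
      funext t; rw [integral_Ioi_eq f hf t]; abel
    rw [heq]
    exact (hf.continuous_primitive 0).sub continuous_const
  · exact hf.continuous_primitive _

lemma norm_prim_le (τ : ℝ≥0∞) {f : ℝ → E} (t : ℝ) :
    ‖prim τ f t‖ ≤ ∫ s in Sset τ t, ‖f s‖ := by
  unfold prim Sset; split_ifs with h
  · rw [norm_neg]; exact norm_integral_le_integral_norm _
  · exact intervalIntegral.norm_integral_le_integral_norm_uIoc

lemma tendsto_prim (τ : ℝ≥0∞) {f : ℝ → E} (hf : Integrable f) :
    ∃ L, Tendsto (prim τ f) atTop (𝓝 L) := by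
  have hprim : Tendsto (fun t => ∫ s in (0:ℝ)..t, f s) atTop (𝓝 (∫ s in Ioi 0, f s)) :=
    intervalIntegral_tendsto_integral_Ioi 0 hf.integrableOn tendsto_id
  unfold prim; split_ifs with h
  · refine ⟨0, ?_⟩
    have heq : (fun t => -(∫ s in Ioi t, f s))
        = fun t => (∫ s in (0:ℝ)..t, f s) - ∫ s in Ioi 0, f s := by
      funext t; rw [integral_Ioi_eq f hf t]; abel
    rw [heq]
    simpa using hprim.sub_const (∫ s in Ioi 0, f s)
  · exact ⟨_, intervalIntegral_tendsto_integral_Ioi _ hf.integrableOn tendsto_id⟩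

lemma prim_sub (τ : ℝ≥0∞) {f g : ℝ → E} (hf : Integrable f) (hg : Integrable g) (t : ℝ) :
    prim τ f t - prim τ g t = prim τ (fun s => f s - g s) t := by
  unfold prim; split_ifs with h
  · rw [integral_sub hf.integrableOn hg.integrableOn]; abel
  · rw [intervalIntegral.integral_sub hf.intervalIntegrable hg.intervalIntegrable]

lemma prim_congr (τ : ℝ≥0∞) {f g : ℝ → E} (h : ∀ᵐ s, s ∈ Ioi (0:ℝ) → f s = g s) {t : ℝ}
    (ht : 0 ≤ t) : prim τ f t = prim τ g t := by
  unfold prim; split_ifs with hτ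
  · congr 1
    refine setIntegral_congr_ae measurableSet_Ioi ?_
    filter_upwards [h] with s hs hmem
    exact hs (mem_Ioi.mpr (lt_of_le_of_lt ht hmem))
  · refine intervalIntegral.integral_congr_ae ?_
    filter_upwards [h] with s hs hmem
    refine hs ?_
    have h1 : min τ.toReal t < s := hmem.1
    exact mem_Ioi.mpr (lt_of_le_of_lt (le_min ENNReal.toReal_nonneg ht) h1)

lemma key_Sset {g : ℝ → ℝ} (hgm : Measurable g) (hgi : Integrable g) (hg0 : ∀ s, 0 ≤ g s)
    (τ : ℝ≥0∞) (k : ℕ) (t : ℝ) :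
    ∫ s in Sset τ t, g s * (∫ r in Sset τ s, g r) ^ k
      = (∫ s in Sset τ t, g s) ^ (k + 1) / (k + 1) := by
  unfold Sset; split_ifs with h
  · simpa [univ_inter] using key_high hgm hgi hg0 univ MeasurableSet.univ k t
  · rcases le_or_gt τ.toReal t with hle | hlt
    · rw [uIoc_of_le hle,
        setIntegral_congr_fun measurableSet_Ioc
          (fun s hs => by rw [uIoc_of_le hs.1.le] :
            ∀ s ∈ Ioc τ.toReal t, g s * (∫ r in Ι τ.toReal s, g r) ^ k
              = g s * (∫ r in Ioc τ.toReal s, g r) ^ k)]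
      exact key_low hgm hgi hg0 τ.toReal k t
    · rw [uIoc_of_ge hlt.le]
      have hU := key_high hgm hgi hg0 (Iic τ.toReal) measurableSet_Iic k t
      rw [show Iic τ.toReal ∩ Ioi t = Ioc t τ.toReal from by rw [inter_comm, Ioi_inter_Iic] ] at hU
      rw [setIntegral_congr_fun measurableSet_Ioc
          (fun s hs => by
            rw [uIoc_of_ge hs.2, show Iic τ.toReal ∩ Ioi s = Ioc s τ.toReal from by
              rw [inter_comm, Ioi_inter_Iic] ] :
            ∀ s ∈ Ioc t τ.toReal, g s * (∫ r in Iic τ.toReal ∩ Ioi s, g r) ^ k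
              = g s * (∫ r in Ι τ.toReal s, g r) ^ k)] at hU
      exact hU

lemma gronwall {g : ℝ → ℝ} (hgm : Measurable g) (hgi : Integrable g) (hg0 : ∀ s, 0 ≤ g s)
    (τ : ℝ≥0∞) (T : Set ℝ) (hT : ∀ t ∈ T, Sset τ t ⊆ T)
    (h : ℕ → ℝ → ℝ) (hc : ∀ k, Continuous (h k))
    (hb : ∀ k, ∃ C, ∀ t, |h k t| ≤ C)
    (B : ℝ) (hB : 0 ≤ B) (h0 : ∀ t ∈ T, h 0 t ≤ B)
    (hstep : ∀ k, ∀ t ∈ T, h (k + 1) t ≤ ∫ s in Sset τ t, g s * h k s) :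
    ∀ k, ∀ t ∈ T, h k t ≤ (∫ s in Sset τ t, g s) ^ k / (Nat.factorial k) * B := by
  set D : ℝ → ℝ := fun t => ∫ s in Sset τ t, g s with hDdef
  have hD0 : ∀ t, 0 ≤ D t := fun t =>
    setIntegral_nonneg (measurableSet_Sset τ t) fun _ _ => hg0 _
  have hDc : ∀ t, D t ≤ ∫ x, g x := fun t => setIntegral_le_integral hgi (ae_of_all _ hg0)
  have hDcont : Continuous D := by
    rw [hDdef]; unfold Sset; split_ifs with hτ
    · have heq : (fun t => ∫ s in Ioi t, g s)
          = fun t => (∫ s in Ioi 0, g s) - ∫ s in (0:ℝ)..t, g s := by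
        funext t; rw [integral_Ioi_eq g hgi t]
      rw [heq]
      exact continuous_const.sub (hgi.continuous_primitive 0)
    · have heq : (fun t => ∫ s in Ι τ.toReal t, g s) = fun t => |∫ s in τ.toReal..t, g s| := by
        funext t
        rcases le_total τ.toReal t with hle | hle
        · rw [uIoc_of_le hle, intervalIntegral.integral_of_le hle,
            abs_of_nonneg (setIntegral_nonneg measurableSet_Ioc fun _ _ => hg0 _)]
        · rw [uIoc_of_ge hle, intervalIntegral.integral_of_ge hle,
            abs_of_nonpos (neg_nonpos.mpr (setIntegral_nonneg measurableSet_Ioc fun _ _ => hg0 _)),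
            neg_neg]
      rw [heq]
      exact (hgi.continuous_primitive _).abs
  have hDm : Measurable D := hDcont.measurable
  intro k
  induction k with
  | zero => intro t ht; simpa using h0 t ht
  | succ k ih =>
    intro t ht
    obtain ⟨C, hC⟩ := hb k
    have hint1 : IntegrableOn (fun s => g s * h k s) (Sset τ t) := by
      refine ((hgi.abs.restrict.const_mul C).mono'
        ((hgm.aestronglyMeasurable.mul ((hc k).measurable.aestronglyMeasurable)).restrict)
        (ae_of_all _ fun s => ?_) : Integrable _ _)
      show ‖g s * h k s‖ ≤ C * |g s|
      rw [Real.norm_eq_abs, abs_mul]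
      calc |g s| * |h k s| ≤ |g s| * C := mul_le_mul_of_nonneg_left (hC s) (abs_nonneg _)
        _ = C * |g s| := mul_comm _ _
    have hint2 : IntegrableOn (fun s => (g s * D s ^ k) * (B / Nat.factorial k)) (Sset τ t) :=
      (integrableOn_mul_pow hgm hgi hDm hD0 hDc k _).mul_const _
    have hmono : ∫ s in Sset τ t, g s * h k s
        ≤ ∫ s in Sset τ t, (g s * D s ^ k) * (B / Nat.factorial k) := by
      refine setIntegral_mono_on hint1 hint2 (measurableSet_Sset τ t) fun s hs => ?_
      have hIH := ih s (hT t ht hs)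
      calc g s * h k s ≤ g s * (D s ^ k / Nat.factorial k * B) :=
            mul_le_mul_of_nonneg_left hIH (hg0 s)
        _ = (g s * D s ^ k) * (B / Nat.factorial k) := by ring
    have hkey : ∫ s in Sset τ t, (g s * D s ^ k) * (B / Nat.factorial k)
        = (D t ^ (k + 1) / (k + 1)) * (B / Nat.factorial k) := by
      rw [integral_mul_const, key_Sset hgm hgi hg0 τ k t]
    have hfac : (D t ^ (k + 1) / (k + 1)) * (B / Nat.factorial k)
        = D t ^ (k + 1) / (Nat.factorial (k + 1)) * B := by
      rw [Nat.factorial_succ]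
      have h1 : ((Nat.factorial k : ℝ)) ≠ 0 := Nat.cast_ne_zero.mpr (Nat.factorial_ne_zero k)
      have h2 : ((k : ℝ) + 1) ≠ 0 := by positivity
      push_cast
      field_simp
      try ring
    calc h (k + 1) t ≤ ∫ s in Sset τ t, g s * h k s := hstep k t ht
      _ ≤ ∫ s in Sset τ t, (g s * D s ^ k) * (B / Nat.factorial k) := hmono
      _ = D t ^ (k + 1) / (Nat.factorial (k + 1)) * B := by rw [hkey, hfac]

end VolterraAux

namespace VolterraAux

variable {E : Type*} [NormedAddCommGroup E]

lemma exists_bound (f : ℝ → E) (hc : ContinuousOn f (Ici 0)) {L : E}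
    (hl : Tendsto f atTop (𝓝 L)) : ∃ B : ℝ, 0 ≤ B ∧ ∀ t ∈ Ici (0:ℝ), ‖f t‖ ≤ B := by
  have hev : ∀ᶠ t in atTop, ‖f t‖ ≤ ‖L‖ + 1 := by
    have := hl.norm.eventually_le_const (lt_add_of_pos_right ‖L‖ one_pos)
    exact this
  obtain ⟨T, hT⟩ := hev.exists_forall_of_atTop
  obtain ⟨C, hC⟩ := (isCompact_Icc (a := (0:ℝ)) (b := max T 0)).exists_bound_of_continuousOn
    (hc.mono (fun s hs => hs.1))
  refine ⟨max C (‖L‖ + 1), le_max_of_le_right (by positivity), fun t ht => ?_⟩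
  rcases le_total t (max T 0) with h | h
  · exact le_max_of_le_left (hC t ⟨ht, h⟩)
  · exact le_max_of_le_right (hT t ((le_max_left T 0).trans h))

end VolterraAux


-- The integral `∫_τ^t (A(s) x(s) + a(s)) ds`, for a base point `τ ∈ [0,∞]`
-- (for `τ = ∞` it is interpreted as `-∫_t^∞`).
open Classical in
noncomputable def volterraInt (n : ℕ)
    (A : ℝ → (EuclideanSpace ℝ (Fin n) →L[ℝ] EuclideanSpace ℝ (Fin n)))
    (a : ℝ → EuclideanSpace ℝ (Fin n)) (τ : ℝ≥0∞)
    (x : ℝ → EuclideanSpace ℝ (Fin n)) (t : ℝ) : EuclideanSpace ℝ (Fin n) :=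
  if τ = ⊤ then -(∫ s in Set.Ioi t, (A s (x s) + a s))
  else ∫ s in τ.toReal..t, (A s (x s) + a s)

open VolterraAux

/-- For integrable `A`, `a` on `[0,∞)`, every `z ∈ C_lim([0,∞),ℝⁿ)` and every `τ ∈ [0,∞]`,
there is a unique `x ∈ C_lim([0,∞),ℝⁿ)` with `x(t) = z(t) + ∫_τ^t (A(s)x(s)+a(s)) ds`
for all `t ∈ [0,∞)`. -/
theorem volterra_existence_uniqueness (n : ℕ)
    (A : ℝ → (EuclideanSpace ℝ (Fin n) →L[ℝ] EuclideanSpace ℝ (Fin n)))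
    (a : ℝ → EuclideanSpace ℝ (Fin n))
    (hA : IntegrableOn A (Ici (0:ℝ))) (ha : IntegrableOn a (Ici (0:ℝ)))
    (z : ℝ → EuclideanSpace ℝ (Fin n)) (zl : EuclideanSpace ℝ (Fin n))
    (hzc : ContinuousOn z (Ici (0:ℝ))) (hzl : Tendsto z atTop (𝓝 zl))
    (τ : ℝ≥0∞) :
    ∃ x : ℝ → EuclideanSpace ℝ (Fin n),
      (ContinuousOn x (Ici (0:ℝ)) ∧ (∃ L, Tendsto x atTop (𝓝 L)) ∧
        ∀ t ≥ (0:ℝ), x t = z t + volterraInt n A a τ x t) ∧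
      ∀ y : ℝ → EuclideanSpace ℝ (Fin n),
        (ContinuousOn y (Ici (0:ℝ)) ∧ (∃ L, Tendsto y atTop (𝓝 L)) ∧
          ∀ t ≥ (0:ℝ), y t = z t + volterraInt n A a τ y t) →
        ∀ t ≥ (0:ℝ), y t = x t := by
  have hA' : Integrable ((Ici (0:ℝ)).indicator A) := IntegrableOn.integrable_indicator (ε' := EuclideanSpace ℝ (Fin n) →L[ℝ] EuclideanSpace ℝ (Fin n)) hA measurableSet_Ici
  have ha' : Integrable ((Ici (0:ℝ)).indicator a) := ha.integrable_indicator measurableSet_Ici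
  obtain ⟨Am, hAm_sm, hAm_ae⟩ :
      ∃ Am : ℝ → (EuclideanSpace ℝ (Fin n) →L[ℝ] EuclideanSpace ℝ (Fin n)),
        StronglyMeasurable Am ∧ (Ici (0:ℝ)).indicator A =ᵐ[volume] Am :=
    ⟨_, hA'.aestronglyMeasurable.stronglyMeasurable_mk, hA'.aestronglyMeasurable.ae_eq_mk⟩
  obtain ⟨am, ham_sm, ham_ae⟩ :
      ∃ am : ℝ → EuclideanSpace ℝ (Fin n),
        StronglyMeasurable am ∧ (Ici (0:ℝ)).indicator a =ᵐ[volume] am :=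
    ⟨_, ha'.aestronglyMeasurable.stronglyMeasurable_mk, ha'.aestronglyMeasurable.ae_eq_mk⟩
  have hAmi : Integrable Am := hA'.congr hAm_ae
  have hami : Integrable am := ha'.congr ham_ae
  set g : ℝ → ℝ := fun s => ‖Am s‖ with hgdef
  have hgm : Measurable g := hAm_sm.measurable.norm
  have hgi : Integrable g := hAmi.norm
  have hg0 : ∀ s, 0 ≤ g s := fun s => norm_nonneg _
  set c0 : ℝ := ∫ s, g s with hc0def
  have hc00 : 0 ≤ c0 := integral_nonneg hg0
  -- the shifted data
  set z' : ℝ → EuclideanSpace ℝ (Fin n) := fun t => z (max t 0) with hz'def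
  have hz'c : Continuous z' := by
    have := hzc.comp_continuous (continuous_id.max continuous_const)
      (fun t => mem_Ici.mpr (le_max_right t 0))
    exact this
  have hz'eq : ∀ t : ℝ, 0 ≤ t → z' t = z t := fun t ht => by
    rw [hz'def]; simp [max_eq_left ht]
  have hz'l : Tendsto z' atTop (𝓝 zl) :=
    hzl.comp (tendsto_atTop_mono (fun t => le_max_left t 0) tendsto_id)
  obtain ⟨Bz, hBz0, hBzIci⟩ := exists_bound z' hz'c.continuousOn hz'l
  have hBz : ∀ t, ‖z' t‖ ≤ Bz := by
    intro t
    have h1 : z' t = z' (max t 0) := by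
      rw [hz'def]; simp [max_eq_left (le_max_right t 0)]
    rw [h1]
    exact hBzIci _ (mem_Ici.mpr (le_max_right t 0))
  -- a.e. identification on the positive axis
  have hae : ∀ᵐ s : ℝ, s ∈ Ioi (0:ℝ) → (A s = Am s ∧ a s = am s) := by
    filter_upwards [hAm_ae, ham_ae] with s h1 h2 hs
    have hmem : s ∈ Ici (0:ℝ) := mem_Ici.mpr (le_of_lt hs)
    constructor
    · rw [← h1, indicator_of_mem hmem]
    · rw [← h2, indicator_of_mem hmem]
  -- integrability of the integrand
  have hintf : ∀ (u : ℝ → EuclideanSpace ℝ (Fin n)) (Cu : ℝ), Continuous u →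
      (∀ s, ‖u s‖ ≤ Cu) → Integrable (fun s => Am s (u s) + am s) := by
    intro u Cu hu hCu
    have hsm : StronglyMeasurable (fun s => Am s (u s)) :=
      isBoundedBilinearMap_apply.continuous.comp_stronglyMeasurable
        (hAm_sm.prodMk hu.stronglyMeasurable)
    refine ((hgi.const_mul Cu).add hami.norm).mono'
      ((hsm.add ham_sm).aestronglyMeasurable) (ae_of_all _ fun s => ?_)
    calc ‖Am s (u s) + am s‖ ≤ ‖Am s (u s)‖ + ‖am s‖ := norm_add_le _ _
      _ ≤ ‖Am s‖ * ‖u s‖ + ‖am s‖ := by gcongr; exact (Am s).le_opNorm _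
      _ ≤ Cu * g s + ‖am s‖ := by
          gcongr ?_ + _
          calc ‖Am s‖ * ‖u s‖ ≤ ‖Am s‖ * Cu := mul_le_mul_of_nonneg_left (hCu s) (hg0 s)
            _ = Cu * g s := mul_comm _ _
  -- the operator
  have hΦex : ∀ x : BoundedContinuousFunction ℝ (EuclideanSpace ℝ (Fin n)),
      ∃ y : BoundedContinuousFunction ℝ (EuclideanSpace ℝ (Fin n)),
        ∀ t, y t = z' t + prim τ (fun s => Am s (x s) + am s) t := by
    intro x
    have hint := hintf x ‖x‖ x.continuous x.norm_coe_le_norm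
    refine ⟨BoundedContinuousFunction.ofNormedAddCommGroup _
      (hz'c.add (continuous_prim τ hint)) (Bz + ∫ s, ‖Am s (x s) + am s‖) (fun t => ?_),
      fun t => rfl⟩
    calc ‖z' t + prim τ (fun s => Am s (x s) + am s) t‖
        ≤ ‖z' t‖ + ‖prim τ (fun s => Am s (x s) + am s) t‖ := norm_add_le _ _
      _ ≤ Bz + ∫ s, ‖Am s (x s) + am s‖ := by
          refine add_le_add (hBz t) ((norm_prim_le τ t).trans ?_)
          exact setIntegral_le_integral hint.norm (ae_of_all _ fun s => norm_nonneg _)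
  choose Φ hΦ using hΦex
  -- iterate estimates
  have hiter : ∀ (x y : BoundedContinuousFunction ℝ (EuclideanSpace ℝ (Fin n))) (k : ℕ) (t : ℝ),
      ‖(Φ^[k] x) t - (Φ^[k] y) t‖
        ≤ (∫ s in Sset τ t, g s) ^ k / (Nat.factorial k) * dist x y := by
    intro x y k t
    refine gronwall hgm hgi hg0 τ univ (fun _ _ => subset_univ _)
      (fun k t => ‖(Φ^[k] x) t - (Φ^[k] y) t‖)
      (fun k => ((Φ^[k] x).continuous.sub (Φ^[k] y).continuous).norm)
      (fun k => ⟨dist (Φ^[k] x) (Φ^[k] y), fun t => by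
        show |‖(Φ^[k] x) t - (Φ^[k] y) t‖| ≤ _
        rw [abs_of_nonneg (norm_nonneg _), ← dist_eq_norm]
        exact BoundedContinuousFunction.dist_coe_le_dist t⟩)
      (dist x y) dist_nonneg
      (fun t _ => by
        show ‖(Φ^[0] x) t - (Φ^[0] y) t‖ ≤ dist x y
        simp only [Function.iterate_zero_apply, ← dist_eq_norm]
        exact BoundedContinuousFunction.dist_coe_le_dist t)
      ?_ k t (mem_univ t)
    intro k t _
    show ‖(Φ^[k+1] x) t - (Φ^[k+1] y) t‖
        ≤ ∫ s in Sset τ t, g s * ‖(Φ^[k] x) s - (Φ^[k] y) s‖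
    rw [Function.iterate_succ_apply', Function.iterate_succ_apply']
    set u := Φ^[k] x with hu
    set v := Φ^[k] y with hv
    have hui := hintf u ‖u‖ u.continuous u.norm_coe_le_norm
    have hvi := hintf v ‖v‖ v.continuous v.norm_coe_le_norm
    have hwi : Integrable (fun s => Am s (u s - v s)) := by
      refine (hui.sub hvi).congr (ae_of_all _ fun s => ?_)
      simp only [Pi.sub_apply]; rw [add_sub_add_right_eq_sub, map_sub]
    have hsub : (Φ u) t - (Φ v) t = prim τ (fun s => Am s (u s - v s)) t := by
      rw [hΦ u t, hΦ v t, add_sub_add_left_eq_sub, prim_sub τ hui hvi t]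
      congr 1
      funext s
      rw [add_sub_add_right_eq_sub, map_sub]
    have hint2 : IntegrableOn (fun s => g s * ‖u s - v s‖) (Sset τ t) := by
      refine ((hgi.abs.restrict.const_mul (‖u - v‖ : ℝ)).mono'
        ((hgm.aestronglyMeasurable.mul
          ((u.continuous.sub v.continuous).norm.measurable.aestronglyMeasurable)).restrict)
        (ae_of_all _ fun s => ?_) : Integrable _ _)
      show ‖g s * ‖u s - v s‖‖ ≤ ‖u - v‖ * |g s|
      rw [Real.norm_eq_abs, abs_mul, abs_of_nonneg (norm_nonneg (u s - v s))]
      calc |g s| * ‖u s - v s‖ ≤ |g s| * ‖u - v‖ := by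
            refine mul_le_mul_of_nonneg_left ?_ (abs_nonneg _)
            have := (u - v).norm_coe_le_norm s
            simpa using this
        _ = ‖u - v‖ * |g s| := mul_comm _ _
    calc ‖(Φ u) t - (Φ v) t‖ = ‖prim τ (fun s => Am s (u s - v s)) t‖ := by rw [hsub]
      _ ≤ ∫ s in Sset τ t, ‖Am s (u s - v s)‖ := norm_prim_le τ t
      _ ≤ ∫ s in Sset τ t, g s * ‖u s - v s‖ := by
          refine setIntegral_mono_on hwi.norm.integrableOn hint2 (measurableSet_Sset τ t)
            fun s _ => (Am s).le_opNorm _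
  -- contraction of an iterate
  obtain ⟨m, hm⟩ : ∃ m : ℕ, c0 ^ m / (Nat.factorial m) < 1 :=
    (Filter.Tendsto.eventually_lt_const one_pos
      (FloorSemiring.tendsto_pow_div_factorial_atTop c0)).exists
  have hmKnn : 0 ≤ c0 ^ m / (Nat.factorial m) := by positivity
  set K : NNReal := Real.toNNReal (c0 ^ m / (Nat.factorial m)) with hKdef
  have hKcoe : (K : ℝ) = c0 ^ m / (Nat.factorial m) := Real.coe_toNNReal _ hmKnn
  have hK1 : K < 1 := by
    rw [← NNReal.coe_lt_coe, hKcoe]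
    simpa using hm
  have hDle : ∀ t, (∫ s in Sset τ t, g s) ≤ c0 :=
    fun t => setIntegral_le_integral hgi (ae_of_all _ hg0)
  have hD0 : ∀ t, 0 ≤ ∫ s in Sset τ t, g s :=
    fun t => setIntegral_nonneg (measurableSet_Sset τ t) fun _ _ => hg0 _
  have hlip : LipschitzWith K (Φ^[m]) := by
    refine LipschitzWith.of_dist_le_mul fun x y => ?_
    rw [BoundedContinuousFunction.dist_le (by positivity)]
    intro t
    rw [dist_eq_norm]
    refine (hiter x y m t).trans ?_
    rw [hKcoe]
    have h1 : (∫ s in Sset τ t, g s) ^ m ≤ c0 ^ m := pow_le_pow_left₀ (hD0 t) (hDle t) m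
    have h2 : (∫ s in Sset τ t, g s) ^ m / (Nat.factorial m) ≤ c0 ^ m / (Nat.factorial m) := by
      gcongr
    exact mul_le_mul_of_nonneg_right h2 dist_nonneg
  have hcontr : ContractingWith K (Φ^[m]) := ⟨hK1, hlip⟩
  set xhat := hcontr.fixedPoint (Φ^[m]) with hxhatdef
  have hfix : Φ xhat = xhat := hcontr.isFixedPt_fixedPoint_iterate
  have hintx := hintf xhat ‖xhat‖ xhat.continuous xhat.norm_coe_le_norm
  have hxhat_eq : ∀ t, xhat t = z' t + prim τ (fun s => Am s (xhat s) + am s) t := by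
    intro t
    conv_lhs => rw [← hfix]
    exact hΦ xhat t
  -- translation between `volterraInt` and `prim`
  have hprim_eq : ∀ (u : ℝ → EuclideanSpace ℝ (Fin n)) (u' : ℝ → EuclideanSpace ℝ (Fin n)),
      (∀ s : ℝ, 0 < s → u s = u' s) → ∀ t : ℝ, 0 ≤ t →
      volterraInt n A a τ u t = prim τ (fun s => Am s (u' s) + am s) t := by
    intro u u' huu t ht
    have h1 : volterraInt n A a τ u t = prim τ (fun s => A s (u s) + a s) t := rfl
    rw [h1]
    refine prim_congr τ ?_ ht
    filter_upwards [hae] with s hs hmem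
    rw [(hs hmem).1, (hs hmem).2, huu s hmem]
  refine ⟨fun t => xhat t, ⟨xhat.continuous.continuousOn, ?_, ?_⟩, ?_⟩
  · obtain ⟨Lp, hLp⟩ := tendsto_prim τ hintx
    exact ⟨zl + Lp, Tendsto.congr (fun t => (hxhat_eq t).symm) (hz'l.add hLp)⟩
  · intro t ht
    rw [hprim_eq (fun t => xhat t) (fun t => xhat t) (fun _ _ => rfl) t ht, ← hz'eq t ht]
    exact hxhat_eq t
  -- uniqueness
  intro y ⟨hyc, ⟨Ly, hyl⟩, hyeq⟩ t ht
  obtain ⟨By, hBy0, hBy⟩ := exists_bound y hyc hyl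
  set yh : ℝ → EuclideanSpace ℝ (Fin n) := fun t => y (max t 0) with hyhdef
  have hyhc : Continuous yh := by
    have := hyc.comp_continuous (continuous_id.max continuous_const)
      (fun t => mem_Ici.mpr (le_max_right t 0))
    exact this
  have hyhb : ∀ s, ‖yh s‖ ≤ By := fun s => hBy _ (mem_Ici.mpr (le_max_right s 0))
  have hyh_eq : ∀ s : ℝ, 0 ≤ s → yh s = y s := fun s hs => by
    rw [hyhdef]; simp [max_eq_left hs]
  have hinty := hintf yh By hyhc hyhb
  have hdi : Integrable (fun s => Am s (yh s - xhat s)) := by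
    refine (hinty.sub hintx).congr (ae_of_all _ fun s => ?_)
    simp only [Pi.sub_apply]; rw [add_sub_add_right_eq_sub, map_sub]
  set B : ℝ := By + ‖xhat‖ with hBdef
  have hB0 : 0 ≤ B := add_nonneg hBy0 (norm_nonneg _)
  have hd : ∀ t : ℝ, 0 ≤ t → yh t - xhat t = prim τ (fun s => Am s (yh s - xhat s)) t := by
    intro t ht
    have h2 : volterraInt n A a τ y t = prim τ (fun s => Am s (yh s) + am s) t :=
      hprim_eq y yh (fun s hs => (hyh_eq s hs.le).symm) t ht
    have h3 : yh t - xhat t = prim τ (fun s => Am s (yh s) + am s) t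
        - prim τ (fun s => Am s (xhat s) + am s) t := by
      rw [hyh_eq t ht, hyeq t ht, hxhat_eq t, hz'eq t ht, h2]
      abel
    rw [h3, prim_sub τ hinty hintx t]
    congr 1
    funext s
    rw [add_sub_add_right_eq_sub, map_sub]
  have hgr := gronwall hgm hgi hg0 τ (Ici 0)
    (fun t ht => (Sset_subset_Ioi τ ht).trans Ioi_subset_Ici_self)
    (fun _ t => ‖yh t - xhat t‖)
    (fun _ => (hyhc.sub xhat.continuous).norm)
    (fun _ => ⟨B, fun t => by
      show |‖yh t - xhat t‖| ≤ B
      rw [abs_of_nonneg (norm_nonneg _)]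
      exact (norm_sub_le _ _).trans (add_le_add (hyhb t) (xhat.norm_coe_le_norm t))⟩)
    B hB0
    (fun t _ => (norm_sub_le _ _).trans (add_le_add (hyhb t) (xhat.norm_coe_le_norm t)))
    ?_
  swap
  · intro k t ht
    show ‖yh t - xhat t‖ ≤ ∫ s in Sset τ t, g s * ‖yh s - xhat s‖
    rw [hd t ht]
    have hint2 : IntegrableOn (fun s => g s * ‖yh s - xhat s‖) (Sset τ t) := by
      refine ((hgi.abs.restrict.const_mul B).mono'
        ((hgm.aestronglyMeasurable.mul
          ((hyhc.sub xhat.continuous).norm.measurable.aestronglyMeasurable)).restrict)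
        (ae_of_all _ fun s => ?_) : Integrable _ _)
      show ‖g s * ‖yh s - xhat s‖‖ ≤ B * |g s|
      rw [Real.norm_eq_abs, abs_mul, abs_of_nonneg (norm_nonneg (yh s - xhat s))]
      calc |g s| * ‖yh s - xhat s‖ ≤ |g s| * B := by
            refine mul_le_mul_of_nonneg_left ?_ (abs_nonneg _)
            exact (norm_sub_le _ _).trans (add_le_add (hyhb s) (xhat.norm_coe_le_norm s))
        _ = B * |g s| := mul_comm _ _
    refine (norm_prim_le τ t).trans ?_
    exact setIntegral_mono_on hdi.norm.integrableOn hint2 (measurableSet_Sset τ t)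
      fun s _ => (Am s).le_opNorm _
  have hlim : Tendsto (fun k : ℕ => c0 ^ k / (Nat.factorial k) * B) atTop (𝓝 0) := by
    simpa using (FloorSemiring.tendsto_pow_div_factorial_atTop c0).mul_const B
  have hle : ∀ k : ℕ, ‖yh t - xhat t‖ ≤ c0 ^ k / (Nat.factorial k) * B := by
    intro k
    refine (hgr k t ht).trans ?_
    have h1 : (∫ s in Sset τ t, g s) ^ k ≤ c0 ^ k := pow_le_pow_left₀ (hD0 t) (hDle t) k
    have h2 : (∫ s in Sset τ t, g s) ^ k / (Nat.factorial k) ≤ c0 ^ k / (Nat.factorial k) := by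
      gcongr
    exact mul_le_mul_of_nonneg_right h2 hB0
  have hzero : ‖yh t - xhat t‖ ≤ 0 := ge_of_tendsto' hlim hle |>.trans_eq rfl
  have : yh t = xhat t := by
    have := le_antisymm hzero (norm_nonneg _)
    rwa [norm_sub_eq_zero_iff] at this
  rw [← hyh_eq t ht]
  exact this
end

section
/- Let A : [0,∞) → ℝ^{n×n} be integrable on [0,∞) (∫_0^∞ ‖A(t)‖ dt < ∞). Then the only absolutely continuous solution z : [0,∞) → ℝⁿ of the linear ODE ż(t) = −A(t)ᵀ z(t) satisfying lim_{t→∞} z(t) = 0 is z ≡ 0. -/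
open MeasureTheory Filter Topology Set

set_option maxHeartbeats 1000000

/-- If `a` is integrable on `[0,b]` with `b > 0`, we can find `c ∈ [0,b)` such that the
integral of `a` over `(c,b]` is at most `1/2`. -/
lemma small_tail_left_aux (a : ℝ → ℝ) {b : ℝ} (hb : 0 < b)
    (ha : IntegrableOn a (Icc 0 b)) :
    ∃ c, 0 ≤ c ∧ c < b ∧ ∫ t in Ioc c b, a t ≤ 1 / 2 := by
  have hcont : ContinuousOn (fun x => ∫ t in Ioc 0 x, a t) (Icc 0 b) :=
    intervalIntegral.continuousOn_primitive ha
  have hb_mem : b ∈ Icc (0:ℝ) b := ⟨hb.le, le_rfl⟩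
  have htt : Tendsto (fun x => ∫ t in Ioc 0 x, a t) (𝓝[Ico 0 b] b)
      (𝓝 (∫ t in Ioc 0 b, a t)) :=
    (hcont b hb_mem).mono_left (nhdsWithin_mono _ Ico_subset_Icc_self)
  have hne : (𝓝[Ico 0 b] b).NeBot := by
    rw [← mem_closure_iff_nhdsWithin_neBot, closure_Ico hb.ne]
    exact hb_mem
  have hev : ∀ᶠ x in 𝓝[Ico 0 b] b,
      |(∫ t in Ioc 0 x, a t) - ∫ t in Ioc 0 b, a t| < 1 / 2 := by
    have h2 : Tendsto (fun x => |(∫ t in Ioc 0 x, a t) - ∫ t in Ioc 0 b, a t|)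
        (𝓝[Ico 0 b] b) (𝓝 |(∫ t in Ioc 0 b, a t) - ∫ t in Ioc 0 b, a t|) :=
      ((htt.sub tendsto_const_nhds).abs)
    rw [sub_self, abs_zero] at h2
    exact h2.eventually_lt_const (by norm_num)
  obtain ⟨c, hc1, hc2⟩ := (hev.and self_mem_nhdsWithin).exists
  refine ⟨c, hc2.1, hc2.2, ?_⟩
  have hsplit : (∫ t in Ioc 0 c, a t) + ∫ t in Ioc c b, a t = ∫ t in Ioc 0 b, a t := by
    rw [← setIntegral_union (Ioc_disjoint_Ioc_of_le le_rfl) measurableSet_Ioc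
      (ha.mono_set (Ioc_subset_Icc_self.trans (Icc_subset_Icc le_rfl hc2.2.le)))
      (ha.mono_set ((Ioc_subset_Icc_self).trans (Icc_subset_Icc hc2.1 le_rfl))),
      Ioc_union_Ioc_eq_Ioc hc2.1 hc2.2.le]
  have := abs_lt.mp hc1
  linarith

/-- For `A` integrable on `[0,∞)`, the only (Carathéodory, i.e. absolutely continuous,
here expressed in integral form) solution of `ż(t) = −A(t)ᵀ z(t)` with `z(t) → 0`
as `t → ∞` is `z ≡ 0` on `[0,∞)`. -/
theorem adjoint_ode_vanishing_limit_zero (n : ℕ)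
    (A : ℝ → (EuclideanSpace ℝ (Fin n) →L[ℝ] EuclideanSpace ℝ (Fin n)))
    (hA : IntegrableOn A (Ici (0:ℝ)))
    (z : ℝ → EuclideanSpace ℝ (Fin n))
    (hz : ∀ t ≥ (0:ℝ), z t = z 0 - ∫ s in (0:ℝ)..t, ContinuousLinearMap.adjoint (A s) (z s))
    (hlim : Tendsto z atTop (𝓝 (0 : EuclideanSpace ℝ (Fin n)))) :
    ∀ t ≥ (0:ℝ), z t = 0 := by
  set f : ℝ → EuclideanSpace ℝ (Fin n) :=
    fun s => ContinuousLinearMap.adjoint (A s) (z s) with hfdef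
  set a : ℝ → ℝ := fun s => ‖A s‖ with hadef
  have hane : ∀ s, 0 ≤ a s := fun s => norm_nonneg _
  have haint : IntegrableOn a (Ici 0) := hA.norm
  have hAm : AEStronglyMeasurable (fun s => ContinuousLinearMap.adjoint (A s))
      (volume.restrict (Ici 0)) :=
    (ContinuousLinearMap.adjoint.continuous.comp_aestronglyMeasurable hA.aestronglyMeasurable)
  have hfm : ∀ s : Set ℝ, s ⊆ Ici 0 → AEStronglyMeasurable z (volume.restrict s) →
      AEStronglyMeasurable f (volume.restrict s) := by
    intro s hs hzm
    have h1 : AEStronglyMeasurable (fun t => ContinuousLinearMap.adjoint (A t))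
        (volume.restrict s) := hAm.mono_measure (Measure.restrict_mono hs le_rfl)
    exact isBoundedBilinearMap_apply.continuous.comp_aestronglyMeasurable (h1.prodMk hzm)
  have hnorm_f : ∀ s, ‖f s‖ ≤ a s * ‖z s‖ := by
    intro s
    calc ‖f s‖ ≤ ‖ContinuousLinearMap.adjoint (A s)‖ * ‖z s‖ :=
          (ContinuousLinearMap.adjoint (A s)).le_opNorm (z s)
      _ = a s * ‖z s‖ := by rw [ContinuousLinearMap.adjoint.norm_map (A s)]
  have hcontOn : ∀ d : ℝ, 0 ≤ d → IntegrableOn f (Ioc 0 d) → ContinuousOn z (Icc 0 d) := by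
    intro d hd hint
    have h1 : ContinuousOn (fun x => ∫ t in Ioc 0 x, f t) (Icc 0 d) :=
      intervalIntegral.continuousOn_primitive (by rwa [integrableOn_Icc_iff_integrableOn_Ioc])
    have h2 : ∀ x ∈ Icc 0 d, z x = z 0 - ∫ t in Ioc 0 x, f t := by
      intro x hx
      rw [hz x hx.1, intervalIntegral.integral_of_le hx.1]
    exact (continuousOn_const.sub h1).congr h2
  -- bootstrap: `f` is integrable on each `(0, t]`.
  have hSint : ∀ t : ℝ, 0 ≤ t → IntegrableOn f (Ioc 0 t) := by
    by_contra hcon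
    push_neg at hcon
    obtain ⟨t0, ht00, ht0n⟩ := hcon
    set S : Set ℝ := {t : ℝ | 0 ≤ t ∧ IntegrableOn f (Ioc 0 t)} with hSdef
    have hS0 : (0:ℝ) ∈ S := ⟨le_rfl, by simp [integrableOn_empty]⟩
    have hdc : ∀ ⦃u t : ℝ⦄, t ∈ S → 0 ≤ u → u ≤ t → u ∈ S :=
      fun u t ht hu hut => ⟨hu, ht.2.mono_set (Ioc_subset_Ioc_right hut)⟩
    have hbdd : BddAbove S := by
      refine ⟨t0, fun s hs => ?_⟩
      by_contra hlt
      exact ht0n (hdc hs ht00 (not_le.mp hlt).le).2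
    set b := sSup S with hbdef
    have hb0 : 0 ≤ b := le_csSup hbdd hS0
    have hbmem : ∀ t : ℝ, 0 ≤ t → t < b → t ∈ S := by
      intro t ht htb
      obtain ⟨s, hsS, hts⟩ := exists_lt_of_lt_csSup ⟨0, hS0⟩ htb
      exact hdc hsS ht hts.le
    have hzconst : ∀ s, b < s → z s = z 0 := by
      intro s hbs
      have hs0 : 0 ≤ s := hb0.trans hbs.le
      have hnot : ¬ IntervalIntegrable f volume 0 s := by
        rw [intervalIntegrable_iff_integrableOn_Ioc_of_le hs0]
        intro h
        exact absurd (le_csSup hbdd ⟨hs0, h⟩) (not_le.mpr hbs)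
      rw [hz s hs0, intervalIntegral.integral_undef hnot, sub_zero]
    have hbS : b ∈ S := by
      rcases eq_or_lt_of_le hb0 with h0 | h0
      · exact h0 ▸ hS0
      obtain ⟨c, hc0, hcb, hchalf⟩ :=
        small_tail_left_aux a h0 (haint.mono_set Icc_subset_Ici_self)
      have hcS : c ∈ S := hbmem c hc0 hcb
      obtain ⟨M0, hM0⟩ := isCompact_Icc.exists_bound_of_continuousOn (hcontOn c hc0 hcS.2)
      have hM0c : ‖z c‖ ≤ M0 := hM0 c ⟨hc0, le_rfl⟩
      have hM0nn : 0 ≤ M0 := (norm_nonneg _).trans hM0c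
      have hdbl : ∀ d, d ∈ Ico c b → ∀ t, t ∈ Icc c d → ‖z t‖ ≤ 2 * M0 := by
        intro d hd
        have hd0 : 0 ≤ d := hc0.trans hd.1
        have hdS : d ∈ S := hbmem d hd0 hd.2
        have hcont_d : ContinuousOn z (Icc 0 d) := hcontOn d hd0 hdS.2
        have hcd : ContinuousOn (fun t => ‖z t‖) (Icc c d) :=
          (hcont_d.mono (Icc_subset_Icc hc0 le_rfl)).norm
        set m := sSup ((fun t => ‖z t‖) '' Icc c d) with hmdef
        have hne : ((fun t => ‖z t‖) '' Icc c d).Nonempty :=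
          ⟨_, mem_image_of_mem _ (left_mem_Icc.mpr hd.1)⟩
        have hbdd' : BddAbove ((fun t => ‖z t‖) '' Icc c d) :=
          (isCompact_Icc.image_of_continuousOn hcd).bddAbove
        have hmem_le : ∀ t, t ∈ Icc c d → ‖z t‖ ≤ m :=
          fun t ht => le_csSup hbdd' (mem_image_of_mem _ ht)
        have hm0 : 0 ≤ m := (norm_nonneg _).trans (hmem_le c (left_mem_Icc.mpr hd.1))
        have hkey : ∀ t, t ∈ Icc c d → ‖z t‖ ≤ M0 + 1 / 2 * m := by
          intro t ht
          have ht0 : 0 ≤ t := hc0.trans ht.1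
          have hIt : IntervalIntegrable f volume 0 t := by
            rw [intervalIntegrable_iff_integrableOn_Ioc_of_le ht0]
            exact hdS.2.mono_set (Ioc_subset_Ioc_right ht.2)
          have hIc : IntervalIntegrable f volume 0 c := by
            rw [intervalIntegrable_iff_integrableOn_Ioc_of_le hc0]
            exact hcS.2
          have hzt : z t = z c - ∫ s in c..t, f s := by
            rw [hz t ht0, hz c hc0, ← intervalIntegral.integral_interval_sub_left hIt hIc]
            abel
          have hIct : IntegrableOn f (Ioc c t) :=
            hdS.2.mono_set (Ioc_subset_Ioc hc0 ht.2)
          have haICT : IntegrableOn a (Ioc c t) :=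
            haint.mono_set (fun x hx => (hc0.trans hx.1.le : (0:ℝ) ≤ x))
          have hstep : ‖∫ s in c..t, f s‖ ≤ 1 / 2 * m := by
            rw [intervalIntegral.integral_of_le ht.1]
            calc ‖∫ s in Ioc c t, f s‖ ≤ ∫ s in Ioc c t, ‖f s‖ :=
                  norm_integral_le_integral_norm _
              _ ≤ ∫ s in Ioc c t, a s * m := by
                  refine setIntegral_mono_on hIct.norm (haICT.mul_const m)
                    measurableSet_Ioc (fun s hs => ?_)
                  exact (hnorm_f s).trans (mul_le_mul_of_nonneg_left
                    (hmem_le s ⟨hs.1.le, hs.2.trans ht.2⟩) (hane s))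
              _ ≤ ∫ s in Ioc c b, a s * m := by
                  refine setIntegral_mono_set
                    ((haint.mono_set (fun x hx => (hc0.trans hx.1.le : (0:ℝ) ≤ x))).mul_const m)
                    (ae_of_all _ (fun s => mul_nonneg (hane s) hm0))
                    (HasSubset.Subset.eventuallyLE
                      (Ioc_subset_Ioc_right (ht.2.trans hd.2.le)))
              _ = (∫ s in Ioc c b, a s) * m := by rw [integral_mul_const]
              _ ≤ 1 / 2 * m := mul_le_mul_of_nonneg_right hchalf hm0
          calc ‖z t‖ = ‖z c - ∫ s in c..t, f s‖ := by rw [hzt]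
            _ ≤ ‖z c‖ + ‖∫ s in c..t, f s‖ := norm_sub_le _ _
            _ ≤ M0 + 1 / 2 * m := add_le_add hM0c hstep
        have hmle : m ≤ M0 + 1 / 2 * m := by
          refine csSup_le hne ?_
          rintro x ⟨t, ht, rfl⟩
          exact hkey t ht
        intro t ht
        have : m ≤ 2 * M0 := by linarith
        exact (hmem_le t ht).trans this
      have hub : ∀ t, 0 ≤ t → t < b → ‖z t‖ ≤ 2 * M0 := by
        intro t ht htb
        rcases le_or_gt t c with h | h
        · exact (hM0 t ⟨ht, h⟩).trans (by linarith)
        · exact hdbl t ⟨h.le, htb⟩ t ⟨h.le, le_rfl⟩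
      have hmeasIoo : AEStronglyMeasurable f (volume.restrict (Ioo 0 b)) := by
        have hcover : Ioo 0 b ⊆ ⋃ k : ℕ, Ioc 0 (b - b / (k + 2)) := by
          intro x hx
          have hbx : 0 < b - x := sub_pos.mpr hx.2
          obtain ⟨k, hk⟩ := exists_nat_gt (b / (b - x))
          refine mem_iUnion.mpr ⟨k, hx.1, ?_⟩
          have h1 : b / (b - x) < (k:ℝ) + 2 := by linarith
          have h2 : b < ((k:ℝ) + 2) * (b - x) := (div_lt_iff₀ hbx).mp h1
          have h3 : b / ((k:ℝ) + 2) < b - x := by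
            rw [div_lt_iff₀ (by positivity)]
            linarith [h2]
          linarith
        have hn : ∀ k : ℕ, AEStronglyMeasurable f (volume.restrict (Ioc 0 (b - b / (k + 2)))) := by
          intro k
          have hpos : (0:ℝ) < (k:ℝ) + 2 := by positivity
          have hlt : b - b / ((k:ℝ) + 2) < b := by
            have : 0 < b / ((k:ℝ) + 2) := by positivity
            linarith
          have hge : 0 ≤ b - b / ((k:ℝ) + 2) := by
            have : b / ((k:ℝ) + 2) ≤ b := div_le_self h0.le (by linarith [Nat.cast_nonneg (α := ℝ) k])
            linarith
          exact ((hbmem _ hge hlt).2).aestronglyMeasurable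
        exact (AEStronglyMeasurable.iUnion hn).mono_measure
          (Measure.restrict_mono hcover le_rfl)
      have hrestr : volume.restrict (Ioo 0 b) = volume.restrict (Ioc 0 b) :=
        Measure.restrict_congr_set Ioo_ae_eq_Ioc
      refine ⟨hb0, ?_⟩
      refine Integrable.mono'
        ((haint.mono_set (fun x hx => hx.1.le)).mul_const (2 * M0))
        (hrestr ▸ hmeasIoo) ?_
      rw [← hrestr]
      refine (ae_restrict_iff' measurableSet_Ioo).mpr (ae_of_all _ fun s hs => ?_)
      exact (hnorm_f s).trans (mul_le_mul_of_nonneg_left (hub s hs.1.le hs.2) (hane s))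
    -- extend past b, contradiction
    obtain ⟨M1, hM1⟩ := isCompact_Icc.exists_bound_of_continuousOn (hcontOn b hb0 hbS.2)
    set C := max M1 ‖z 0‖ with hCdef
    have hzleC : ∀ s, s ∈ Ioc 0 (b + 1) → ‖z s‖ ≤ C := by
      intro s hs
      rcases le_or_gt s b with h | h
      · exact le_max_of_le_left (hM1 s ⟨hs.1.le, h⟩)
      · rw [hzconst s h]; exact le_max_right _ _
    have hmeas2 : AEStronglyMeasurable f (volume.restrict (Ioc b (b + 1))) := by
      have hz2 : AEStronglyMeasurable z (volume.restrict (Ioc b (b + 1))) := by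
        refine (aestronglyMeasurable_const (b := z 0)).congr ?_
        refine (ae_restrict_iff' measurableSet_Ioc).mpr (ae_of_all _ fun s hs => ?_)
        exact (hzconst s hs.1).symm
      exact hfm _ (fun x hx => (hb0.trans hx.1.le : (0:ℝ) ≤ x)) hz2
    have hunion : Ioc 0 b ∪ Ioc b (b + 1) = Ioc 0 (b + 1) :=
      Ioc_union_Ioc_eq_Ioc hb0 (by linarith)
    have hmeasTot : AEStronglyMeasurable f (volume.restrict (Ioc 0 (b + 1))) := by
      rw [← hunion]
      exact aestronglyMeasurable_union_iff.mpr ⟨hbS.2.aestronglyMeasurable, hmeas2⟩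
    have hSb1 : (b + 1) ∈ S := by
      refine ⟨by linarith, Integrable.mono'
        ((haint.mono_set (fun x hx => hx.1.le)).mul_const C) hmeasTot ?_⟩
      refine (ae_restrict_iff' measurableSet_Ioc).mpr (ae_of_all _ fun s hs => ?_)
      exact (hnorm_f s).trans (mul_le_mul_of_nonneg_left (hzleC s hs) (hane s))
    have := le_csSup hbdd hSb1
    linarith
  -- global bound on `‖z‖`
  have hcont : ∀ d : ℝ, 0 ≤ d → ContinuousOn z (Icc 0 d) :=
    fun d hd => hcontOn d hd (hSint d hd)
  obtain ⟨K, hK⟩ : ∃ K, ∀ t, 0 ≤ t → ‖z t‖ ≤ K := by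
    have h1 : ∀ᶠ t in atTop, ‖z t‖ ≤ 1 := by
      have h2 := hlim.norm
      rw [norm_zero] at h2
      exact h2.eventually (eventually_le_nhds one_pos)
    obtain ⟨T, hT⟩ := eventually_atTop.mp h1
    obtain ⟨M2, hM2⟩ :=
      isCompact_Icc.exists_bound_of_continuousOn (hcont (max T 0) (le_max_right _ _))
    refine ⟨max M2 1, fun t ht => ?_⟩
    rcases le_or_gt t (max T 0) with h | h
    · exact le_max_of_le_left (hM2 t ⟨ht, h⟩)
    · exact le_max_of_le_right (hT t ((le_max_left _ _).trans h.le))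
  have hK0 : 0 ≤ K := (norm_nonneg _).trans (hK 0 le_rfl)
  -- `f` is integrable on `(0,∞)`
  have hfint : IntegrableOn f (Ioi 0) := by
    have hcover : Ioi (0:ℝ) = ⋃ k : ℕ, Ioc 0 (k:ℝ) := by
      ext x
      simp only [mem_Ioi, mem_iUnion, mem_Ioc]
      exact ⟨fun hx => (exists_nat_ge x).imp fun k hk => ⟨hx, hk⟩, fun ⟨k, hk⟩ => hk.1⟩
    have hmeas : AEStronglyMeasurable f (volume.restrict (Ioi 0)) := by
      rw [hcover]
      exact AEStronglyMeasurable.iUnion fun k =>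
        (hSint k (Nat.cast_nonneg k)).aestronglyMeasurable
    refine Integrable.mono' ((haint.mono_set Ioi_subset_Ici_self).mul_const K) hmeas ?_
    refine (ae_restrict_iff' measurableSet_Ioi).mpr (ae_of_all _ fun s hs => ?_)
    exact (hnorm_f s).trans (mul_le_mul_of_nonneg_left (hK s hs.le) (hane s))
  -- tail representation
  have hz0eq : z 0 = ∫ s in Ioi 0, f s := by
    have h1 : Tendsto (fun t => ∫ s in (0:ℝ)..t, f s) atTop (𝓝 (∫ s in Ioi 0, f s)) :=
      intervalIntegral_tendsto_integral_Ioi 0 hfint tendsto_id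
    have h2 : Tendsto z atTop (𝓝 (z 0 - ∫ s in Ioi 0, f s)) := by
      refine (tendsto_const_nhds.sub h1).congr' ?_
      exact (eventually_ge_atTop 0).mono fun t ht => (hz t ht).symm
    have h3 := tendsto_nhds_unique hlim h2
    exact sub_eq_zero.mp h3.symm
  have htail : ∀ t, 0 ≤ t → z t = ∫ s in Ioi t, f s := by
    intro t ht
    have hu : Ioc 0 t ∪ Ioi t = Ioi 0 := Ioc_union_Ioi_eq_Ioi ht
    have hsplit : ∫ s in Ioi 0, f s = (∫ s in Ioc 0 t, f s) + ∫ s in Ioi t, f s := by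
      rw [← hu]
      exact setIntegral_union Ioc_disjoint_Ioi_same measurableSet_Ioi (hSint t ht)
        (hfint.mono_set (Ioi_subset_Ioi ht))
    rw [hz t ht, intervalIntegral.integral_of_le ht, hz0eq, hsplit]
    abel
  have hf_zero : ∀ T : ℝ, (∀ s, T < s → z s = 0) → ∫ s in Ioi T, f s = 0 := by
    intro T hT
    rw [setIntegral_congr_fun measurableSet_Ioi
      (fun s (hs : s ∈ Ioi T) => show f s = (fun _ => (0:EuclideanSpace ℝ (Fin n))) s by
        simp only [hfdef, hT s hs, map_zero]), integral_zero]
  -- find a tail where z vanishes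
  obtain ⟨T₁, hT₁0, hT₁⟩ : ∃ T, 0 ≤ T ∧ ∀ t, T ≤ t → z t = 0 := by
    have h1 : Tendsto (fun t => ∫ s in (0:ℝ)..t, a s) atTop (𝓝 (∫ s in Ioi 0, a s)) :=
      intervalIntegral_tendsto_integral_Ioi 0 (haint.mono_set Ioi_subset_Ici_self) tendsto_id
    have h2 : Tendsto (fun t => ∫ s in Ioi t, a s) atTop (𝓝 0) := by
      have h3 : Tendsto (fun t => (∫ s in Ioi 0, a s) - ∫ s in (0:ℝ)..t, a s) atTop
          (𝓝 ((∫ s in Ioi 0, a s) - ∫ s in Ioi 0, a s)) := tendsto_const_nhds.sub h1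
      rw [sub_self] at h3
      refine h3.congr' ?_
      refine (eventually_ge_atTop 0).mono fun t ht => ?_
      show (∫ s in Ioi 0, a s) - ∫ s in (0:ℝ)..t, a s = ∫ s in Ioi t, a s
      have hu : Ioc 0 t ∪ Ioi t = Ioi 0 := Ioc_union_Ioi_eq_Ioi ht
      have hsplit : ∫ s in Ioi 0, a s = (∫ s in Ioc 0 t, a s) + ∫ s in Ioi t, a s := by
        rw [← hu]
        exact setIntegral_union Ioc_disjoint_Ioi_same measurableSet_Ioi
          ((haint.mono_set (fun x hx => hx.1.le)))
          (haint.mono_set (fun x hx => (ht.trans hx.le : (0:ℝ) ≤ x)))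
      rw [intervalIntegral.integral_of_le ht, hsplit]
      ring
    have h4 : ∀ᶠ t in atTop, (∫ s in Ioi t, a s) ≤ 1 / 2 :=
      h2.eventually (eventually_le_nhds (by norm_num))
    obtain ⟨T0, hT0⟩ := eventually_atTop.mp h4
    set T := max T0 0 with hTdef
    have hT00 : 0 ≤ T := le_max_right _ _
    have hhalf : (∫ s in Ioi T, a s) ≤ 1 / 2 := hT0 T (le_max_left _ _)
    set m := sSup ((fun t => ‖z t‖) '' Ici T) with hmdef
    have hne : ((fun t => ‖z t‖) '' Ici T).Nonempty := ⟨_, mem_image_of_mem _ self_mem_Ici⟩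
    have hbdd' : BddAbove ((fun t => ‖z t‖) '' Ici T) := by
      refine ⟨K, ?_⟩
      rintro x ⟨t, ht, rfl⟩
      exact hK t (hT00.trans ht)
    have hmem_le : ∀ t, T ≤ t → ‖z t‖ ≤ m :=
      fun t ht => le_csSup hbdd' (mem_image_of_mem _ ht)
    have hm0 : 0 ≤ m := (norm_nonneg _).trans (hmem_le T le_rfl)
    have hkey : ∀ t, T ≤ t → ‖z t‖ ≤ 1 / 2 * m := by
      intro t ht
      have ht0 : 0 ≤ t := hT00.trans ht
      rw [htail t ht0]
      calc ‖∫ s in Ioi t, f s‖ ≤ ∫ s in Ioi t, ‖f s‖ := norm_integral_le_integral_norm _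
        _ ≤ ∫ s in Ioi t, a s * m := by
            refine setIntegral_mono_on ((hfint.mono_set (Ioi_subset_Ioi ht0)).norm)
              ((haint.mono_set (fun x hx => (ht0.trans hx.le : (0:ℝ) ≤ x))).mul_const m)
              measurableSet_Ioi (fun s hs => ?_)
            exact (hnorm_f s).trans
              (mul_le_mul_of_nonneg_left (hmem_le s (ht.trans hs.le)) (hane s))
        _ ≤ ∫ s in Ioi T, a s * m := by
            refine setIntegral_mono_set
              ((haint.mono_set (fun x hx => (hT00.trans hx.le : (0:ℝ) ≤ x))).mul_const m)
              (ae_of_all _ (fun s => mul_nonneg (hane s) hm0))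
              (HasSubset.Subset.eventuallyLE (Ioi_subset_Ioi ht))
        _ = (∫ s in Ioi T, a s) * m := by rw [integral_mul_const]
        _ ≤ 1 / 2 * m := mul_le_mul_of_nonneg_right hhalf hm0
    have hmle : m ≤ 1 / 2 * m := by
      refine csSup_le hne ?_
      rintro x ⟨t, ht, rfl⟩
      exact hkey t ht
    have hmz : m ≤ 0 := by linarith
    exact ⟨T, hT00, fun t ht => norm_le_zero_iff.mp ((hmem_le t ht).trans hmz)⟩
  -- propagate backwards using the infimum
  set V : Set ℝ := {T : ℝ | 0 ≤ T ∧ ∀ t, T ≤ t → z t = 0} with hVdef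
  have hVne : V.Nonempty := ⟨T₁, hT₁0, hT₁⟩
  have hVbdd : BddBelow V := ⟨0, fun x hx => hx.1⟩
  set T' := sInf V with hT'def
  have hT'0 : 0 ≤ T' := le_csInf hVne fun x hx => hx.1
  have hT'gt : ∀ t, T' < t → z t = 0 := by
    intro t ht
    obtain ⟨T₂, hT₂V, hT₂t⟩ := exists_lt_of_csInf_lt hVne ht
    exact hT₂V.2 t hT₂t.le
  have hT'V : ∀ t, T' ≤ t → z t = 0 := by
    intro t ht
    rcases eq_or_lt_of_le ht with h | h
    · rw [← h, htail T' hT'0, hf_zero T' hT'gt]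
    · exact hT'gt t h
  have hT'eq : T' = 0 := by
    by_contra hne'
    have hpos : 0 < T' := lt_of_le_of_ne hT'0 (Ne.symm hne')
    obtain ⟨c, hc0, hcT, hchalf⟩ :=
      small_tail_left_aux a hpos (haint.mono_set Icc_subset_Ici_self)
    set m := sSup ((fun t => ‖z t‖) '' Icc c T') with hmdef
    have hne2 : ((fun t => ‖z t‖) '' Icc c T').Nonempty :=
      ⟨_, mem_image_of_mem _ (left_mem_Icc.mpr hcT.le)⟩
    have hbdd' : BddAbove ((fun t => ‖z t‖) '' Icc c T') := by
      refine ⟨K, ?_⟩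
      rintro x ⟨t, ht, rfl⟩
      exact hK t (hc0.trans ht.1)
    have hmem_le : ∀ t, t ∈ Icc c T' → ‖z t‖ ≤ m :=
      fun t ht => le_csSup hbdd' (mem_image_of_mem _ ht)
    have hm0 : 0 ≤ m := (norm_nonneg _).trans (hmem_le c (left_mem_Icc.mpr hcT.le))
    have hkey : ∀ t, t ∈ Icc c T' → ‖z t‖ ≤ 1 / 2 * m := by
      intro t ht
      have ht0 : 0 ≤ t := hc0.trans ht.1
      have hIocT : IntegrableOn f (Ioc t T') :=
        (hSint T' hT'0).mono_set (Ioc_subset_Ioc_left ht0)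
      have hsplit : ∫ s in Ioi t, f s = (∫ s in Ioc t T', f s) + ∫ s in Ioi T', f s := by
        rw [← Ioc_union_Ioi_eq_Ioi ht.2]
        exact setIntegral_union Ioc_disjoint_Ioi_same measurableSet_Ioi hIocT
          (hfint.mono_set (Ioi_subset_Ioi hT'0))
      rw [htail t ht0, hsplit, hf_zero T' hT'gt, add_zero]
      calc ‖∫ s in Ioc t T', f s‖ ≤ ∫ s in Ioc t T', ‖f s‖ := norm_integral_le_integral_norm _
        _ ≤ ∫ s in Ioc t T', a s * m := by
            refine setIntegral_mono_on hIocT.norm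
              ((haint.mono_set (fun x hx => (ht0.trans hx.1.le : (0:ℝ) ≤ x))).mul_const m)
              measurableSet_Ioc (fun s hs => ?_)
            exact (hnorm_f s).trans (mul_le_mul_of_nonneg_left
              (hmem_le s ⟨ht.1.trans hs.1.le, hs.2⟩) (hane s))
        _ ≤ ∫ s in Ioc c T', a s * m := by
            refine setIntegral_mono_set
              ((haint.mono_set (fun x hx => (hc0.trans hx.1.le : (0:ℝ) ≤ x))).mul_const m)
              (ae_of_all _ (fun s => mul_nonneg (hane s) hm0))
              (HasSubset.Subset.eventuallyLE (Ioc_subset_Ioc_left ht.1))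
        _ = (∫ s in Ioc c T', a s) * m := by rw [integral_mul_const]
        _ ≤ 1 / 2 * m := mul_le_mul_of_nonneg_right hchalf hm0
    have hmle : m ≤ 1 / 2 * m := by
      refine csSup_le hne2 ?_
      rintro x ⟨t, ht, rfl⟩
      exact hkey t ht
    have hmz : m ≤ 0 := by linarith
    have hcV : c ∈ V := by
      refine ⟨hc0, fun t ht => ?_⟩
      rcases le_or_gt t T' with h | h
      · exact norm_le_zero_iff.mp ((hmem_le t ⟨ht, h⟩).trans hmz)
      · exact hT'gt t h
    have := csInf_le hVbdd hcV
    linarith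
  intro t ht
  exact hT'V t (hT'eq ▸ ht)
end

section
/- Let A : [0,∞) → ℝ^{n×n} be integrable on [0,∞) and a : [0,∞) → ℝⁿ integrable. Then for every z ∈ ℝⁿ and every τ ∈ [0,∞] (including τ = ∞) there exists a unique solution x of ẋ(t) = A(t)x(t) + a(t) on [0,∞) which belongs to C_lim([0,∞), ℝⁿ) and satisfies x(τ) = z (for τ = ∞, this means lim_{t→∞} x(t) = z). -/
open MeasureTheory Filter Topology Set
open scoped ENNReal

namespace LinODEAux

lemma uIoc_sub_uIcc (a b : ℝ) : Set.uIoc a b ⊆ Set.uIcc a b := Set.Ioc_subset_Icc_self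


lemma abs_pow_sub_pow_le (k : ℕ) {a b R : ℝ} (ha : |a| ≤ R) (hb : |b| ≤ R) :
    |a ^ k - b ^ k| ≤ k * R ^ (k - 1) * |a - b| := by
  have hR : 0 ≤ R := le_trans (abs_nonneg a) ha
  induction k with
  | zero => simp
  | succ k ih =>
    have key : a ^ (k+1) - b ^ (k+1) = a ^ k * (a - b) + (a ^ k - b ^ k) * b := by ring
    have h1 : |a ^ (k+1) - b ^ (k+1)| ≤ |a| ^ k * |a-b| + |a^k - b^k| * |b| := by
      rw [key]
      refine le_trans (abs_add_le _ _) ?_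
      rw [abs_mul, abs_mul, abs_pow]
    have h2 : |a| ^ k * |a-b| ≤ R ^ k * |a-b| := by
      gcongr
    have h3 : |a^k - b^k| * |b| ≤ (k * R ^ (k-1) * |a-b|) * R := by
      gcongr
    have h4 : (k : ℝ) * R ^ (k-1) * |a-b| * R ≤ k * R ^ k * |a-b| := by
      cases k with
      | zero => simp
      | succ m =>
        refine le_of_eq ?_
        rw [Nat.add_sub_cancel]
        ring
    have h5 : R ^ k * |a-b| + (k:ℝ) * R ^ k * |a-b| = ((k+1 : ℕ) : ℝ) * R ^ k * |a-b| := by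
      push_cast; ring
    calc |a ^ (k+1) - b ^ (k+1)| ≤ R ^ k * |a-b| + (k * R ^ (k-1) * |a-b|) * R :=
          le_trans h1 (add_le_add h2 h3)
      _ ≤ R ^ k * |a-b| + k * R ^ k * |a-b| := by linarith [h4]
      _ = ((k+1 : ℕ) : ℝ) * R ^ k * |a-b| := h5
      _ = ((k+1 : ℕ) : ℝ) * R ^ ((k+1) - 1) * |a-b| := by rw [Nat.add_sub_cancel]

lemma cont_ident_right (H : ℝ → ℝ) (hH : Continuous H) (c t δ : ℝ) (k : ℕ) :
    ∫ s in c..t, H s * (δ + ∫ u in c..s, H u) ^ k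
      = ((δ + ∫ u in c..t, H u) ^ (k+1) - (δ + ∫ u in c..c, H u) ^ (k+1)) / (k+1) := by
  set G : ℝ → ℝ := fun u => δ + ∫ v in c..u, H v with hG
  have hGc : Continuous G := by
    exact continuous_const.add (intervalIntegral.continuous_primitive
      (fun a b => hH.intervalIntegrable a b) c)
  have hder : ∀ x ∈ uIcc c t, HasDerivAt (fun u => G u ^ (k+1) / (k+1)) (H x * G x ^ k) x := by
    intro x _
    have h1 : HasDerivAt (fun u => ∫ v in c..u, H v) (H x) x :=
      intervalIntegral.integral_hasDerivAt_right (hH.intervalIntegrable c x)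
        (hH.stronglyMeasurable.stronglyMeasurableAtFilter)
        hH.continuousAt
    have h2 : HasDerivAt G (H x) x := h1.const_add δ
    have h3 : HasDerivAt (fun u => G u ^ (k+1)) ((k+1 : ℕ) * G x ^ k * H x) x := by
      have := h2.pow (k+1)
      simpa [Pi.pow_def] using this
    have h4 := h3.div_const ((k+1 : ℕ) : ℝ)
    have : ((k+1 : ℕ) : ℝ) * G x ^ k * H x / ((k+1 : ℕ) : ℝ) = H x * G x ^ k := by
      field_simp
    rw [this] at h4
    exact_mod_cast h4
  have hint : IntervalIntegrable (fun x => H x * G x ^ k) volume c t :=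
    (hH.mul (hGc.pow k)).intervalIntegrable c t
  have := intervalIntegral.integral_eq_sub_of_hasDerivAt hder hint
  rw [this]
  ring


set_option maxHeartbeats 1000000 in
lemma key_right (h : ℝ → ℝ) (c t δ : ℝ) (k : ℕ) (hI : IntegrableOn h (uIcc c t)) :
    ∫ s in c..t, h s * (δ + ∫ u in c..s, h u) ^ k
      = ((δ + ∫ u in c..t, h u) ^ (k+1) - δ ^ (k+1)) / (k+1) := by
  set Gh : ℝ → ℝ := fun s => δ + ∫ u in c..s, h u with hGh_def
  have habs : IntegrableOn (fun s => |h s|) (uIcc c t) := hI.norm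
  set Mh : ℝ := ∫ s in uIcc c t, |h s| with hMh_def
  have hMh0 : 0 ≤ Mh := setIntegral_nonneg measurableSet_uIcc (fun s _ => abs_nonneg _)
  set R : ℝ := |δ| + Mh + 1 with hR_def
  have hR0 : (0:ℝ) < R := by positivity
  have hsubint : ∀ s ∈ uIcc c t, IntervalIntegrable h volume c s := by
    intro s hs
    exact intervalIntegrable_iff.2 (hI.mono_set
      ((uIoc_sub_uIcc c s).trans (uIcc_subset_uIcc left_mem_uIcc hs)))
  have hIi : IntervalIntegrable h volume c t := hsubint t right_mem_uIcc
  have hGh_bound : ∀ s ∈ uIcc c t, |Gh s| ≤ |δ| + Mh := by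
    intro s hs
    have h1 : ‖∫ u in c..s, h u‖ ≤ ∫ u in uIoc c s, ‖h u‖ :=
      intervalIntegral.norm_integral_le_integral_norm_uIoc
    have h2 : ∫ u in uIoc c s, ‖h u‖ ≤ Mh := by
      rw [hMh_def]
      refine setIntegral_mono_set habs ?_ ?_
      · exact Filter.Eventually.of_forall (fun s => abs_nonneg _)
      · exact Filter.Eventually.of_forall
          ((uIoc_sub_uIcc c s).trans (uIcc_subset_uIcc left_mem_uIcc hs))
    calc |Gh s| ≤ |δ| + ‖∫ u in c..s, h u‖ := by
          rw [hGh_def]; exact (abs_add_le _ _).trans (by rw [Real.norm_eq_abs])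
      _ ≤ |δ| + Mh := by linarith [h1.trans h2]
  have hGhc : ContinuousOn Gh (uIcc c t) :=
    continuousOn_const.add (intervalIntegral.continuousOn_primitive_interval hI)
  have main : ∀ ε : ℝ, 0 < ε →
      |(∫ s in c..t, h s * Gh s ^ k) -
        ((δ + ∫ u in c..t, h u) ^ (k+1) - δ ^ (k+1)) / (k+1)| ≤ ε := by
    intro ε hε
    set Kc : ℝ := 2 * R ^ k + (Mh + 1) * (k * R ^ (k-1)) + 1 with hKc_def
    have hKc0 : 0 < Kc := by positivity
    set ε' : ℝ := min 1 (ε / Kc) with hε'_def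
    have hε'0 : 0 < ε' := lt_min one_pos (div_pos hε hKc0)
    have hε'1 : ε' ≤ 1 := min_le_left _ _
    have hε'K : Kc * ε' ≤ ε := by
      have : ε' ≤ ε / Kc := min_le_right _ _
      calc Kc * ε' ≤ Kc * (ε / Kc) := by nlinarith
        _ = ε := by field_simp
    set hbar : ℝ → ℝ := (uIcc c t).indicator h with hhbar_def
    have hbar_int : Integrable hbar := hI.integrable_indicator measurableSet_uIcc
    obtain ⟨g, -, hg_close, hg_cont, hg_int⟩ :=
      hbar_int.exists_hasCompactSupport_integral_sub_le hε'0
    set Gg : ℝ → ℝ := fun s => δ + ∫ u in c..s, g u with hGg_def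
    have hGgc : Continuous Gg :=
      continuous_const.add (intervalIntegral.continuous_primitive
        (fun a b => hg_cont.intervalIntegrable a b) c)
    have hdiff_int : Integrable (fun s => |hbar s - g s|) := (hbar_int.sub hg_int).norm
    -- closeness of primitives
    have est0 : ∀ s ∈ uIcc c t, |Gh s - Gg s| ≤ ε' := by
      intro s hs
      have hsplit : Gh s - Gg s = ∫ u in c..s, (h u - g u) := by
        rw [hGh_def, hGg_def]
        rw [intervalIntegral.integral_sub (hsubint s hs) (hg_int.intervalIntegrable)]
        ring
      rw [hsplit]
      have h1 : ‖∫ u in c..s, (h u - g u)‖ ≤ ∫ u in uIoc c s, ‖h u - g u‖ :=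
        intervalIntegral.norm_integral_le_integral_norm_uIoc
      have hsub2 : uIoc c s ⊆ uIcc c t :=
        (uIoc_sub_uIcc c s).trans (uIcc_subset_uIcc left_mem_uIcc hs)
      have h2 : ∫ u in uIoc c s, ‖h u - g u‖ = ∫ u in uIoc c s, |hbar u - g u| := by
        refine setIntegral_congr_fun measurableSet_uIoc (fun u hu => ?_)
        rw [Real.norm_eq_abs, hhbar_def, Set.indicator_of_mem (hsub2 hu)]
      have h3 : ∫ u in uIoc c s, |hbar u - g u| ≤ ∫ u, |hbar u - g u| :=
        setIntegral_le_integral hdiff_int (Filter.Eventually.of_forall (fun u => abs_nonneg _))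
      have h4 : (∫ u, |hbar u - g u|) ≤ ε' := by
        simpa [Real.norm_eq_abs] using hg_close
      rw [Real.norm_eq_abs] at h1
      linarith
    have hGg_bound : ∀ s ∈ uIcc c t, |Gg s| ≤ R := by
      intro s hs
      have h5 := est0 s hs
      have h6 := hGh_bound s hs
      have h7 : |Gg s| - |Gh s| ≤ |Gg s - Gh s| := abs_sub_abs_le_abs_sub _ _
      rw [abs_sub_comm] at h7
      rw [hR_def]
      linarith
    have hGh_boundR : ∀ s ∈ uIcc c t, |Gh s| ≤ R := fun s hs =>
      (hGh_bound s hs).trans (by rw [hR_def]; linarith)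
    have idg := cont_ident_right g hg_cont c t δ k
    simp only [intervalIntegral.integral_same, add_zero] at idg
    -- integral of |h - g| over subintervals
    have estInt : ∀ s ∈ uIcc c t, ∫ u in uIoc c s, |h u - g u| ≤ ε' := by
      intro s hs
      have hsub2 : uIoc c s ⊆ uIcc c t :=
        (uIoc_sub_uIcc c s).trans (uIcc_subset_uIcc left_mem_uIcc hs)
      have h2 : ∫ u in uIoc c s, |h u - g u| = ∫ u in uIoc c s, |hbar u - g u| := by
        refine setIntegral_congr_fun measurableSet_uIoc (fun u hu => ?_)
        rw [hhbar_def, Set.indicator_of_mem (hsub2 hu)]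
      have h3 : ∫ u in uIoc c s, |hbar u - g u| ≤ ∫ u, |hbar u - g u| :=
        setIntegral_le_integral hdiff_int (Filter.Eventually.of_forall (fun u => abs_nonneg _))
      have h4 : (∫ u, |hbar u - g u|) ≤ ε' := by
        simpa [Real.norm_eq_abs] using hg_close
      linarith
    -- pointwise estimate
    set Ck : ℝ := k * R ^ (k-1) * ε' with hCk_def
    have hCk0 : 0 ≤ Ck := by
      rw [hCk_def]; positivity
    have ptwise : ∀ s ∈ uIoc c t, |h s * Gh s ^ k - g s * Gg s ^ k|
        ≤ |h s - g s| * R ^ k + |g s| * Ck := by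
      intro s hs
      have hs' : s ∈ uIcc c t := uIoc_sub_uIcc c t hs
      have e1 : |Gh s| ^ k ≤ R ^ k := pow_le_pow_left₀ (abs_nonneg _) (hGh_boundR s hs') k
      have e2 : |Gh s ^ k - Gg s ^ k| ≤ k * R ^ (k-1) * |Gh s - Gg s| :=
        abs_pow_sub_pow_le k (hGh_boundR s hs') (hGg_bound s hs')
      have e3 : |Gh s ^ k - Gg s ^ k| ≤ Ck := by
        rw [hCk_def]
        refine e2.trans ?_
        have := est0 s hs'
        have hc0 : (0:ℝ) ≤ k * R ^ (k-1) := by positivity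
        nlinarith
      have split : h s * Gh s ^ k - g s * Gg s ^ k
          = (h s - g s) * Gh s ^ k + g s * (Gh s ^ k - Gg s ^ k) := by ring
      calc |h s * Gh s ^ k - g s * Gg s ^ k|
          ≤ |(h s - g s) * Gh s ^ k| + |g s * (Gh s ^ k - Gg s ^ k)| := by
            rw [split]; exact abs_add_le _ _
        _ = |h s - g s| * |Gh s ^ k| + |g s| * |Gh s ^ k - Gg s ^ k| := by
            rw [abs_mul, abs_mul]
        _ ≤ |h s - g s| * R ^ k + |g s| * Ck := by
            refine add_le_add ?_ ?_
            · refine mul_le_mul_of_nonneg_left ?_ (abs_nonneg _)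
              rw [abs_pow]; exact e1
            · exact mul_le_mul_of_nonneg_left e3 (abs_nonneg _)
    -- integrabilities
    have intg1 : IntervalIntegrable (fun s => h s * Gh s ^ k) volume c t :=
      hIi.mul_continuousOn (hGhc.pow k)
    have intg2 : IntervalIntegrable (fun s => g s * Gg s ^ k) volume c t :=
      (hg_cont.mul (hGgc.pow k)).intervalIntegrable c t
    have intg_sub := intg1.sub intg2
    have I1 : IntegrableOn (fun s => |h s - g s|) (uIoc c t) :=
      ((hI.mono_set (uIoc_sub_uIcc c t)).sub hg_int.integrableOn).norm
    have Ig : IntegrableOn (fun s => |g s|) (uIoc c t) := hg_int.integrableOn.norm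
    have Ibound : IntegrableOn (fun s => |h s - g s| * R ^ k + |g s| * Ck) (uIoc c t) :=
      (I1.mul_const _).add (Ig.mul_const _)
    -- D1
    have intg_g_bound : ∫ u in uIoc c t, |g u| ≤ Mh + 1 := by
      have p1 : ∀ u, |g u| ≤ |hbar u - g u| + |hbar u| := by
        intro u
        have w1 : |g u| - |hbar u| ≤ |g u - hbar u| := abs_sub_abs_le_abs_sub _ _
        rw [abs_sub_comm] at w1
        linarith
      have p2 : ∫ u in uIoc c t, |g u| ≤ ∫ u in uIoc c t, (|hbar u - g u| + |hbar u|) := by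
        refine setIntegral_mono_on Ig ?_ measurableSet_uIoc (fun u _ => p1 u)
        exact (hdiff_int.integrableOn).add (hbar_int.integrableOn.norm)
      have p3 : ∫ u in uIoc c t, (|hbar u - g u| + |hbar u|)
          = (∫ u in uIoc c t, |hbar u - g u|) + ∫ u in uIoc c t, |hbar u| :=
        integral_add hdiff_int.integrableOn (hbar_int.integrableOn.norm)
      have p4 : ∫ u in uIoc c t, |hbar u - g u| ≤ ε' :=
        le_trans (setIntegral_le_integral hdiff_int
          (Filter.Eventually.of_forall (fun u => abs_nonneg _)))
          (by simpa [Real.norm_eq_abs] using hg_close)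
      have p5 : ∫ u in uIoc c t, |hbar u| ≤ Mh := by
        have : ∫ u in uIoc c t, |hbar u| = ∫ u in uIoc c t, |h u| := by
          refine setIntegral_congr_fun measurableSet_uIoc (fun u hu => ?_)
          rw [hhbar_def, Set.indicator_of_mem (uIoc_sub_uIcc c t hu)]
        rw [this, hMh_def]
        refine setIntegral_mono_set habs ?_ ?_
        · exact Filter.Eventually.of_forall (fun s => abs_nonneg _)
        · exact Filter.Eventually.of_forall (uIoc_sub_uIcc c t)
      linarith
    have D1 : |(∫ s in c..t, h s * Gh s ^ k) - ∫ s in c..t, g s * Gg s ^ k|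
        ≤ R ^ k * ε' + Ck * (Mh + 1) := by
      have q1 : (∫ s in c..t, h s * Gh s ^ k) - (∫ s in c..t, g s * Gg s ^ k)
          = ∫ s in c..t, (h s * Gh s ^ k - g s * Gg s ^ k) :=
        (intervalIntegral.integral_sub intg1 intg2).symm
      rw [q1]
      have q2 : ‖∫ s in c..t, (h s * Gh s ^ k - g s * Gg s ^ k)‖
          ≤ ∫ s in uIoc c t, ‖h s * Gh s ^ k - g s * Gg s ^ k‖ :=
        intervalIntegral.norm_integral_le_integral_norm_uIoc
      have q3 : ∫ s in uIoc c t, ‖h s * Gh s ^ k - g s * Gg s ^ k‖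
          ≤ ∫ s in uIoc c t, (|h s - g s| * R ^ k + |g s| * Ck) := by
        refine setIntegral_mono_on ?_ Ibound measurableSet_uIoc (fun s hs => ?_)
        · exact (intervalIntegrable_iff.1 intg_sub).norm
        · rw [Real.norm_eq_abs]; exact ptwise s hs
      have q4 : ∫ s in uIoc c t, (|h s - g s| * R ^ k + |g s| * Ck)
          = (∫ s in uIoc c t, |h s - g s|) * R ^ k + (∫ s in uIoc c t, |g s|) * Ck := by
        rw [integral_add (I1.mul_const _) (Ig.mul_const _),
          integral_mul_const, integral_mul_const]
      have q5 : (∫ s in uIoc c t, |h s - g s|) ≤ ε' := estInt t right_mem_uIcc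
      have q6 : (∫ s in uIoc c t, |h s - g s|) * R ^ k ≤ ε' * R ^ k := by
        have : (0:ℝ) ≤ R ^ k := by positivity
        nlinarith
      have q7 : (∫ s in uIoc c t, |g s|) * Ck ≤ (Mh + 1) * Ck := by
        nlinarith [intg_g_bound, hCk0]
      rw [Real.norm_eq_abs] at q2
      have q8 : ∫ s in uIoc c t, ‖h s * Gh s ^ k - g s * Gg s ^ k‖
          ≤ ε' * R ^ k + (Mh + 1) * Ck := by linarith
      calc |∫ s in c..t, (h s * Gh s ^ k - g s * Gg s ^ k)|
          ≤ ε' * R ^ k + (Mh + 1) * Ck := le_trans q2 q8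
        _ = R ^ k * ε' + Ck * (Mh + 1) := by ring
    -- D2
    have est0t := est0 t right_mem_uIcc
    have D2 : |((δ + ∫ u in c..t, h u) ^ (k+1) - δ ^ (k+1)) / (k+1)
        - ((δ + ∫ u in c..t, g u) ^ (k+1) - δ ^ (k+1)) / (k+1)| ≤ R ^ k * ε' := by
      have r0 : Gh t = δ + ∫ u in c..t, h u := rfl
      have r0' : Gg t = δ + ∫ u in c..t, g u := rfl
      have r1 : |Gh t ^ (k+1) - Gg t ^ (k+1)| ≤ ((k:ℝ)+1) * R ^ k * |Gh t - Gg t| := by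
        have w := abs_pow_sub_pow_le (k+1) (hGh_boundR t right_mem_uIcc)
          (hGg_bound t right_mem_uIcc)
        rw [Nat.add_sub_cancel] at w
        push_cast at w ⊢
        linarith
      have r2 : |Gh t ^ (k+1) - Gg t ^ (k+1)| ≤ ((k:ℝ)+1) * R ^ k * ε' := by
        refine r1.trans ?_
        have : (0:ℝ) ≤ (k+1) * R ^ k := by positivity
        nlinarith
      have r3 : ((δ + ∫ u in c..t, h u) ^ (k+1) - δ ^ (k+1)) / (k+1)
          - ((δ + ∫ u in c..t, g u) ^ (k+1) - δ ^ (k+1)) / (k+1)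
          = (Gh t ^ (k+1) - Gg t ^ (k+1)) / (k+1) := by
        rw [← r0, ← r0']
        ring
      rw [r3, abs_div]
      have r4 : |((k:ℝ)+1)| = (k:ℝ)+1 := abs_of_pos (by positivity)
      rw [r4]
      rw [div_le_iff₀ (by positivity : (0:ℝ) < (k:ℝ)+1)]
      calc |Gh t ^ (k+1) - Gg t ^ (k+1)| ≤ ((k:ℝ)+1) * R ^ k * ε' := r2
        _ = R ^ k * ε' * ((k:ℝ)+1) := by ring
    -- assemble
    have final : |(∫ s in c..t, h s * Gh s ^ k)
        - ((δ + ∫ u in c..t, h u) ^ (k+1) - δ ^ (k+1)) / (k+1)|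
        ≤ 2 * (R ^ k * ε') + Ck * (Mh + 1) := by
      have tri : |(∫ s in c..t, h s * Gh s ^ k)
          - ((δ + ∫ u in c..t, h u) ^ (k+1) - δ ^ (k+1)) / (k+1)|
          ≤ |(∫ s in c..t, h s * Gh s ^ k) - ∫ s in c..t, g s * Gg s ^ k|
            + |(∫ s in c..t, g s * Gg s ^ k)
              - ((δ + ∫ u in c..t, h u) ^ (k+1) - δ ^ (k+1)) / (k+1)| := by
        exact abs_sub_le _ _ _
      have mid : |(∫ s in c..t, g s * Gg s ^ k)
          - ((δ + ∫ u in c..t, h u) ^ (k+1) - δ ^ (k+1)) / (k+1)|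
          ≤ R ^ k * ε' := by
        rw [idg, abs_sub_comm]
        exact D2
      linarith
    refine final.trans ?_
    have : 2 * (R ^ k * ε') + Ck * (Mh + 1) ≤ Kc * ε' := by
      rw [hKc_def, hCk_def]
      nlinarith [hε'0.le, hMh0, pow_nonneg hR0.le k, pow_nonneg hR0.le (k-1)]
    linarith
  have h0 : |(∫ s in c..t, h s * Gh s ^ k) -
      ((δ + ∫ u in c..t, h u) ^ (k+1) - δ ^ (k+1)) / (k+1)| ≤ 0 :=
    le_of_forall_pos_le_add (fun ε hε => by simpa using main ε hε)
  have h1 := abs_nonpos_iff.mp h0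
  have h2 := sub_eq_zero.mp h1
  exact h2

lemma key_left (h : ℝ → ℝ) (c t δ : ℝ) (k : ℕ) (hI : IntegrableOn h (uIcc c t)) :
    ∫ s in c..t, h s * (δ + ∫ u in s..t, h u) ^ k
      = ((δ + ∫ u in c..t, h u) ^ (k+1) - δ ^ (k+1)) / (k+1) := by
  set d : ℝ := c + t with hd
  have hIi : IntervalIntegrable h volume c t :=
    intervalIntegrable_iff.2 (hI.mono_set (uIoc_sub_uIcc c t))
  have hIi' : IntervalIntegrable (fun v => h (d - v)) volume c t := by
    have w := (hIi.comp_sub_left d).symm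
    have e1 : d - c = t := by rw [hd]; ring
    have e2 : d - t = c := by rw [hd]; ring
    rwa [e1, e2] at w
  have hI' : IntegrableOn (fun v => h (d - v)) (uIcc c t) := by
    have h1 : IntegrableOn (fun v => h (d - v)) (Set.uIoc c t) := intervalIntegrable_iff.1 hIi'
    exact h1.congr_set_ae (Ioc_ae_eq_Icc.symm)
  have inner : ∀ x, ∫ v in c..x, h (d - v) = ∫ u in (d - x)..t, h u := by
    intro x
    have w := intervalIntegral.integral_comp_sub_left h d (a := c) (b := x)
    rw [w]
    congr 1
    rw [hd]; ring
  have total : ∫ v in c..t, h (d - v) = ∫ u in c..t, h u := by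
    rw [inner t]
    congr 1
    rw [hd]; ring
  have lhs_eq : ∫ s in c..t, h s * (δ + ∫ u in s..t, h u) ^ k
      = ∫ x in c..t, h (d - x) * (δ + ∫ v in c..x, h (d - v)) ^ k := by
    have step : ∀ x ∈ uIcc c t, h (d - x) * (δ + ∫ v in c..x, h (d - v)) ^ k
        = (fun s => h s * (δ + ∫ u in s..t, h u) ^ k) (d - x) := by
      intro x _
      simp only []
      rw [inner x]
    have w := intervalIntegral.integral_comp_sub_left
      (fun s => h s * (δ + ∫ u in s..t, h u) ^ k) d (a := c) (b := t)
    have e1 : d - c = t := by rw [hd]; ring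
    have e2 : d - t = c := by rw [hd]; ring
    rw [e2, e1] at w
    rw [← w]
    exact (intervalIntegral.integral_congr (fun x hx => step x hx)).symm
  rw [lhs_eq, key_right (fun v => h (d - v)) c t δ k hI', total]

section IoiSplit

variable {E : Type*} [NormedAddCommGroup E] [NormedSpace ℝ E]

lemma integral_Ioi_split {f : ℝ → E} (hf : Integrable f) {u v : ℝ} (huv : u ≤ v) :
    ∫ x in Ioi u, f x = (∫ x in u..v, f x) + ∫ x in Ioi v, f x := by
  rw [intervalIntegral.integral_of_le huv, ← setIntegral_union
    (Set.Ioc_disjoint_Ioi le_rfl) measurableSet_Ioi hf.integrableOn hf.integrableOn,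
    Set.Ioc_union_Ioi_eq_Ioi huv]

lemma integral_Ioi_prim {f : ℝ → E} (hf : Integrable f) (s : ℝ) :
    ∫ x in Ioi s, f x = (∫ x in Ioi 0, f x) - ∫ x in (0:ℝ)..s, f x := by
  rcases le_total 0 s with h0 | h0
  · rw [integral_Ioi_split hf h0]
    abel
  · rw [integral_Ioi_split hf (v := (0:ℝ)) h0, intervalIntegral.integral_symm]
    abel

lemma continuous_integral_Ioi {f : ℝ → E} (hf : Integrable f) :
    Continuous (fun s => ∫ x in Ioi s, f x) := by
  have w : (fun s => ∫ x in Ioi s, f x)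
      = fun s => (∫ x in Ioi 0, f x) - ∫ x in (0:ℝ)..s, f x := by
    funext s; exact integral_Ioi_prim hf s
  rw [w]
  exact continuous_const.sub (intervalIntegral.continuous_primitive
    (fun a b => hf.intervalIntegrable) 0)

lemma tendsto_integral_Ioi_zero {f : ℝ → E} (hf : Integrable f) :
    Tendsto (fun s => ∫ x in Ioi s, f x) atTop (𝓝 0) := by
  have h1 : Tendsto (fun s : ℝ => ∫ x in (0:ℝ)..s, f x) atTop (𝓝 (∫ x in Ioi 0, f x)) :=
    MeasureTheory.intervalIntegral_tendsto_integral_Ioi 0 hf.integrableOn tendsto_id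
  have w : (fun s => ∫ x in Ioi s, f x)
      = fun s => (∫ x in Ioi 0, f x) - ∫ x in (0:ℝ)..s, f x := by
    funext s; exact integral_Ioi_prim hf s
  rw [w]
  have h2 := (tendsto_const_nhds (x := ∫ x in Ioi 0, f x) (f := atTop (α := ℝ))).sub h1
  simpa using h2

end IoiSplit

lemma key_tail (h : ℝ → ℝ) (hI : Integrable h) (hpos : ∀ s, 0 ≤ h s) (t : ℝ) (k : ℕ) :
    ∫ s in Ioi t, h s * (∫ u in Ioi s, h u) ^ k
      ≤ (∫ u in Ioi t, h u) ^ (k+1) / (k+1) := by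
  set g : ℝ → ℝ := fun s => ∫ u in Ioi s, h u with hg
  have hgpos : ∀ s, 0 ≤ g s := fun s =>
    setIntegral_nonneg measurableSet_Ioi (fun u _ => hpos u)
  have hMtot : ∀ s, g s ≤ ∫ u, h u := fun s =>
    setIntegral_le_integral hI (Filter.Eventually.of_forall hpos)
  have hgc : Continuous g := continuous_integral_Ioi hI
  have hFint : IntegrableOn (fun s => h s * g s ^ k) (Ioi t) := by
    have hb : Integrable (fun s => g s ^ k * h s) :=
      hI.bdd_mul (c := (∫ u, h u) ^ k) ((hgc.pow k).aestronglyMeasurable)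
        (Filter.Eventually.of_forall fun s => by
          rw [Real.norm_eq_abs, abs_pow, abs_of_nonneg (hgpos s)]
          exact pow_le_pow_left₀ (hgpos s) (hMtot s) k)
    have w : (fun s => h s * g s ^ k) = fun s => g s ^ k * h s := by
      funext s; ring
    rw [w]
    exact hb.integrableOn
  have tends : Tendsto (fun T => ∫ s in t..T, h s * g s ^ k) atTop
      (𝓝 (∫ s in Ioi t, h s * g s ^ k)) :=
    MeasureTheory.intervalIntegral_tendsto_integral_Ioi t hFint tendsto_id
  have evbound : ∀ᶠ T in atTop, (∫ s in t..T, h s * g s ^ k)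
      ≤ (g t) ^ (k+1) / (k+1) := by
    filter_upwards [eventually_ge_atTop t] with T hT
    have hIT : IntegrableOn h (uIcc t T) := hI.integrableOn
    have congr1 : ∫ s in t..T, h s * g s ^ k
        = ∫ s in t..T, h s * (g T + ∫ u in s..T, h u) ^ k := by
      refine intervalIntegral.integral_congr (fun s hs => ?_)
      have hsT : s ≤ T := by
        rcases Set.mem_uIcc.1 hs with ⟨_, h2⟩ | ⟨_, h2⟩
        · exact h2
        · exact h2.trans hT
      have w : g s = (∫ u in s..T, h u) + g T := by
        rw [hg]
        exact integral_Ioi_split hI hsT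
      rw [w]
      ring_nf
    rw [congr1, key_left h t T (g T) k hIT]
    have hsplit : g t = (∫ u in t..T, h u) + g T := integral_Ioi_split hI hT
    have w2 : g T + ∫ u in t..T, h u = g t := by rw [hsplit]; ring
    rw [w2]
    have h1 : (0:ℝ) ≤ g T ^ (k+1) := pow_nonneg (hgpos T) _
    have h2 : (0:ℝ) < (k:ℝ)+1 := by positivity
    rw [div_le_div_iff₀ h2 h2]
    nlinarith
  exact le_of_tendsto tends evbound

lemma iter_fixed {α : Type*} [MetricSpace α] [Nonempty α] [CompleteSpace α]
    (Φ : α → α) (K : NNReal) (hK : K < 1) (m : ℕ)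
    (hL : ∀ x y, dist (Φ^[m] x) (Φ^[m] y) ≤ (K:ℝ) * dist x y) :
    ∃ x, Φ x = x ∧ ∀ y, Φ y = y → y = x := by
  have hC : ContractingWith K (Φ^[m]) := ⟨hK, LipschitzWith.of_dist_le_mul hL⟩
  set p := ContractingWith.fixedPoint (Φ^[m]) hC with hp_def
  have hp : Φ^[m] p = p := hC.fixedPoint_isFixedPt
  have h1 : Φ^[m] (Φ p) = Φ p := by
    calc Φ^[m] (Φ p) = Φ^[m+1] p := (Function.iterate_succ_apply Φ m p).symm
      _ = Φ (Φ^[m] p) := Function.iterate_succ_apply' Φ m p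
      _ = Φ p := by rw [hp]
  refine ⟨p, hC.fixedPoint_unique h1, fun y hy => hC.fixedPoint_unique ?_⟩
  exact Function.IsFixedPt.iterate hy m

section Fixed
variable {V : Type*} [NormedAddCommGroup V] [NormedSpace ℝ V] [CompleteSpace V]

lemma integrable_app {B : ℝ → V →L[ℝ] V} (hB : Integrable B) {x : ℝ → V}
    (hxc : Continuous x) (C : ℝ) (hxb : ∀ t, ‖x t‖ ≤ C) :
    Integrable (fun s => B s (x s)) := by
  refine Integrable.mono' (hB.norm.mul_const C) ?_ ?_
  · exact (isBoundedBilinearMap_apply.continuous).comp_aestronglyMeasurable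
      (hB.aestronglyMeasurable.prodMk hxc.aestronglyMeasurable)
  · refine Filter.Eventually.of_forall (fun s => ?_)
    calc ‖B s (x s)‖ ≤ ‖B s‖ * ‖x s‖ := (B s).le_opNorm _
      _ ≤ ‖B s‖ * C := mul_le_mul_of_nonneg_left (hxb s) (norm_nonneg _)

variable {B : ℝ → V →L[ℝ] V} {b : ℝ → V}

lemma integrable_f (hB : Integrable B) (hb : Integrable b) (x : BoundedContinuousFunction ℝ V) :
    Integrable (fun s => B s (x s) + b s) :=
  (integrable_app hB x.continuous ‖x‖ (fun t => x.norm_coe_le_norm t)).add hb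

lemma abs_intervalIntegral_mono {c t : ℝ} {u v : ℝ → ℝ}
    (hu : IntervalIntegrable u volume c t) (hv : IntervalIntegrable v volume c t)
    (h0 : ∀ s ∈ uIcc c t, 0 ≤ u s) (h1 : ∀ s ∈ uIcc c t, u s ≤ v s) :
    |∫ s in c..t, u s| ≤ |∫ s in c..t, v s| := by
  rcases le_total c t with hct | htc
  · rw [uIcc_of_le hct] at h0 h1
    have i1 : (0:ℝ) ≤ ∫ s in c..t, u s := intervalIntegral.integral_nonneg hct h0
    have i2 := intervalIntegral.integral_mono_on hct hu hv h1
    rw [abs_of_nonneg i1, abs_of_nonneg (le_trans i1 i2)]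
    exact i2
  · rw [uIcc_comm, uIcc_of_le htc] at h0 h1
    rw [intervalIntegral.integral_symm, intervalIntegral.integral_symm (a := t) (b := c),
      abs_neg, abs_neg]
    have i1 : (0:ℝ) ≤ ∫ s in t..c, u s := intervalIntegral.integral_nonneg htc h0
    have i2 := intervalIntegral.integral_mono_on htc hu.symm hv.symm h1
    rw [abs_of_nonneg i1, abs_of_nonneg (le_trans i1 i2)]
    exact i2

lemma fixed_finite (hB : Integrable B) (hb : Integrable b) (c : ℝ) (z : V) :
    ∃ x : BoundedContinuousFunction ℝ V,
      (∀ t, x t = z + ∫ s in c..t, (B s (x s) + b s)) ∧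
      ∀ y : BoundedContinuousFunction ℝ V,
        (∀ t, y t = z + ∫ s in c..t, (B s (y s) + b s)) → y = x := by
  classical
  set hnorm : ℝ → ℝ := fun s => ‖B s‖ with hhnorm
  have hh_int : Integrable hnorm := hB.norm
  have hhpos : ∀ s, 0 ≤ hnorm s := fun s => norm_nonneg _
  set M : ℝ := ∫ s, hnorm s with hM_def
  have hM0 : 0 ≤ M := integral_nonneg hhpos
  set g : ℝ → ℝ := fun t => |∫ s in c..t, hnorm s| with hg_def
  have hgc : Continuous g :=
    (intervalIntegral.continuous_primitive (fun a b => hh_int.intervalIntegrable) c).abs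
  have hg0 : ∀ t, 0 ≤ g t := fun t => abs_nonneg _
  have hgM : ∀ t, g t ≤ M := by
    intro t
    have h1 : ‖∫ s in c..t, hnorm s‖ ≤ ∫ s in uIoc c t, ‖hnorm s‖ :=
      intervalIntegral.norm_integral_le_integral_norm_uIoc
    have h2 : ∫ s in uIoc c t, ‖hnorm s‖ = ∫ s in uIoc c t, hnorm s :=
      setIntegral_congr_fun measurableSet_uIoc (fun s _ => abs_of_nonneg (hhpos s))
    have h3 : ∫ s in uIoc c t, hnorm s ≤ M :=
      setIntegral_le_integral hh_int (Filter.Eventually.of_forall hhpos)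
    rw [Real.norm_eq_abs] at h1
    rw [hg_def]
    simp only []
    linarith
  -- the key integral identity for |∫ h g^k|
  have ident : ∀ (k : ℕ) (t : ℝ),
      |∫ s in c..t, hnorm s * g s ^ k| = g t ^ (k+1) / (k+1) := by
    intro k t
    rcases le_total c t with hct | htc
    · have e : EqOn (fun s => hnorm s * g s ^ k)
          (fun s => hnorm s * ((0:ℝ) + ∫ u in c..s, hnorm u) ^ k) (uIcc c t) := by
        intro s hs
        rw [uIcc_of_le hct] at hs
        have hgs : g s = (0:ℝ) + ∫ u in c..s, hnorm u := by
          rw [hg_def]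
          simp only [zero_add]
          exact abs_of_nonneg (intervalIntegral.integral_nonneg hs.1 (fun u _ => hhpos u))
        show hnorm s * g s ^ k = hnorm s * ((0:ℝ) + ∫ u in c..s, hnorm u) ^ k
        rw [← hgs]
      rw [intervalIntegral.integral_congr e, key_right hnorm c t 0 k hh_int.integrableOn]
      have hgt : g t = (0:ℝ) + ∫ u in c..t, hnorm u := by
        rw [hg_def]
        simp only [zero_add]
        exact abs_of_nonneg (intervalIntegral.integral_nonneg hct (fun u _ => hhpos u))
      rw [← hgt]
      rw [zero_pow (Nat.succ_ne_zero k), sub_zero]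
      exact abs_of_nonneg (by positivity)
    · have e : EqOn (fun s => hnorm s * g s ^ k)
          (fun s => hnorm s * ((0:ℝ) + ∫ u in s..c, hnorm u) ^ k) (uIcc t c) := by
        intro s hs
        rw [uIcc_of_le htc] at hs
        have hgs : g s = (0:ℝ) + ∫ u in s..c, hnorm u := by
          rw [hg_def]
          simp only [zero_add]
          rw [intervalIntegral.integral_symm, abs_neg]
          exact abs_of_nonneg (intervalIntegral.integral_nonneg hs.2 (fun u _ => hhpos u))
        show hnorm s * g s ^ k = hnorm s * ((0:ℝ) + ∫ u in s..c, hnorm u) ^ k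
        rw [← hgs]
      have flip : |∫ s in c..t, hnorm s * g s ^ k| = |∫ s in t..c, hnorm s * g s ^ k| := by
        rw [intervalIntegral.integral_symm, abs_neg]
      rw [flip, intervalIntegral.integral_congr e,
        key_left hnorm t c 0 k hh_int.integrableOn]
      have hgt : g t = (0:ℝ) + ∫ u in t..c, hnorm u := by
        rw [hg_def]
        simp only [zero_add]
        rw [intervalIntegral.integral_symm, abs_neg]
        exact abs_of_nonneg (intervalIntegral.integral_nonneg htc (fun u _ => hhpos u))
      rw [← hgt]
      rw [zero_pow (Nat.succ_ne_zero k), sub_zero]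
      exact abs_of_nonneg (by positivity)
  -- the operator
  have hf : ∀ x : BoundedContinuousFunction ℝ V, Integrable (fun s => B s (x s) + b s) :=
    fun x => integrable_f hB hb x
  have hbound : ∀ (x : BoundedContinuousFunction ℝ V) (t : ℝ),
      ‖z + ∫ s in c..t, (B s (x s) + b s)‖ ≤ ‖z‖ + ∫ s, ‖B s (x s) + b s‖ := by
    intro x t
    refine (norm_add_le _ _).trans ?_
    have h1 : ‖∫ s in c..t, (B s (x s) + b s)‖ ≤ ∫ s in uIoc c t, ‖B s (x s) + b s‖ :=
      intervalIntegral.norm_integral_le_integral_norm_uIoc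
    have h2 : ∫ s in uIoc c t, ‖B s (x s) + b s‖ ≤ ∫ s, ‖B s (x s) + b s‖ :=
      setIntegral_le_integral (hf x).norm
        (Filter.Eventually.of_forall (fun s => norm_nonneg _))
    linarith
  set Φ : (BoundedContinuousFunction ℝ V) → (BoundedContinuousFunction ℝ V) := fun x =>
    BoundedContinuousFunction.ofNormedAddCommGroup
      (fun t => z + ∫ s in c..t, (B s (x s) + b s))
      (continuous_const.add (intervalIntegral.continuous_primitive
        (fun a b => (hf x).intervalIntegrable) c))
      (‖z‖ + ∫ s, ‖B s (x s) + b s‖) (hbound x) with hΦ_def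
  have hΦapp : ∀ (x : BoundedContinuousFunction ℝ V) (t : ℝ), Φ x t = z + ∫ s in c..t, (B s (x s) + b s) :=
    fun x t => rfl
  -- pointwise iterate estimate
  have estimate : ∀ (x y : BoundedContinuousFunction ℝ V) (k : ℕ) (t : ℝ),
      ‖(Φ^[k] x) t - (Φ^[k] y) t‖ ≤ g t ^ k / (Nat.factorial k) * dist x y := by
    intro x y k
    induction k with
    | zero =>
      intro t
      simp only [Function.iterate_zero_apply, pow_zero, Nat.factorial_zero, Nat.cast_one,
        div_one, one_mul]
      rw [← dist_eq_norm]
      exact BoundedContinuousFunction.dist_coe_le_dist t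
    | succ k ih =>
      intro t
      rw [Function.iterate_succ_apply', Function.iterate_succ_apply']
      set X := Φ^[k] x with hX
      set Y := Φ^[k] y with hY
      set D : ℝ := dist x y with hD
      have hD0 : 0 ≤ D := dist_nonneg
      have sub_eq : Φ X t - Φ Y t = ∫ s in c..t, B s (X s - Y s) := by
        rw [hΦapp, hΦapp]
        have e1 : z + (∫ s in c..t, (B s (X s) + b s)) - (z + ∫ s in c..t, (B s (Y s) + b s))
            = (∫ s in c..t, (B s (X s) + b s)) - ∫ s in c..t, (B s (Y s) + b s) := by abel
        rw [e1, ← intervalIntegral.integral_sub (hf X).intervalIntegrable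
          (hf Y).intervalIntegrable]
        refine intervalIntegral.integral_congr (fun s _ => ?_)
        simp only [map_sub]
        abel
      have hXYint : Integrable (fun s => B s (X s - Y s)) := by
        have := integrable_app hB (X - Y).continuous ‖X - Y‖
          (fun t => (X - Y).norm_coe_le_norm t)
        refine this.congr (Filter.Eventually.of_forall (fun s => ?_))
        simp
      have n1 : ‖Φ X t - Φ Y t‖ ≤ |∫ s in c..t, ‖B s (X s - Y s)‖| := by
        rw [sub_eq]
        exact intervalIntegral.norm_integral_le_abs_integral_norm
      have n2 : |∫ s in c..t, ‖B s (X s - Y s)‖|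
          ≤ |∫ s in c..t, (hnorm s * g s ^ k) * (D / (Nat.factorial k))| := by
        refine abs_intervalIntegral_mono hXYint.norm.intervalIntegrable ?_
          (fun s _ => norm_nonneg _) (fun s _ => ?_)
        · have base : IntervalIntegrable (fun s => hnorm s * g s ^ k) volume c t :=
            hh_int.intervalIntegrable.mul_continuousOn ((hgc.pow k).continuousOn)
          exact base.mul_const _
        · calc ‖B s (X s - Y s)‖ ≤ ‖B s‖ * ‖X s - Y s‖ := (B s).le_opNorm _
            _ ≤ hnorm s * (g s ^ k / (Nat.factorial k) * D) := by
                refine mul_le_mul_of_nonneg_left ?_ (norm_nonneg _)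
                have := ih s
                calc ‖X s - Y s‖ = ‖(Φ^[k] x) s - (Φ^[k] y) s‖ := by rw [hX, hY]
                  _ ≤ g s ^ k / (Nat.factorial k) * D := ih s
            _ = (hnorm s * g s ^ k) * (D / (Nat.factorial k)) := by ring
      have n3 : |∫ s in c..t, (hnorm s * g s ^ k) * (D / (Nat.factorial k))|
          = |∫ s in c..t, hnorm s * g s ^ k| * (D / (Nat.factorial k)) := by
        rw [intervalIntegral.integral_mul_const, abs_mul,
          abs_of_nonneg (by positivity : (0:ℝ) ≤ D / (Nat.factorial k))]
      have n4 := ident k t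
      have final : ‖Φ X t - Φ Y t‖ ≤ (g t ^ (k+1) / (k+1)) * (D / (Nat.factorial k)) := by
        rw [n4] at n3
        calc ‖Φ X t - Φ Y t‖ ≤ |∫ s in c..t, (hnorm s * g s ^ k) * (D / (Nat.factorial k))| :=
              le_trans n1 n2
          _ = (g t ^ (k+1) / (k+1)) * (D / (Nat.factorial k)) := n3
      refine final.trans (le_of_eq ?_)
      rw [Nat.factorial_succ]
      push_cast
      field_simp
  -- contraction of the iterate
  have contract : ∀ (m : ℕ) (x y : BoundedContinuousFunction ℝ V),
      dist (Φ^[m] x) (Φ^[m] y) ≤ M ^ m / (Nat.factorial m) * dist x y := by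
    intro m x y
    have hc0 : 0 ≤ M ^ m / (Nat.factorial m) * dist x y := by positivity
    rw [BoundedContinuousFunction.dist_le hc0]
    intro t
    rw [dist_eq_norm]
    refine (estimate x y m t).trans ?_
    have h2 : g t ^ m ≤ M ^ m := pow_le_pow_left₀ (hg0 t) (hgM t) m
    have hfac : (0:ℝ) < (Nat.factorial m : ℝ) := by positivity
    refine mul_le_mul_of_nonneg_right ?_ dist_nonneg
    exact (div_le_div_iff_of_pos_right hfac).mpr h2
  -- choose m with contraction constant < 1
  have htend := FloorSemiring.tendsto_pow_div_factorial_atTop (K := ℝ) M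
  have hev : ∀ᶠ m in atTop, M ^ m / (Nat.factorial m : ℝ) < 1 :=
    htend.eventually_lt_const (by norm_num)
  obtain ⟨m, hm⟩ := hev.exists
  set K : NNReal := Real.toNNReal (M ^ m / (Nat.factorial m)) with hK_def
  have hKcoe : (K : ℝ) = M ^ m / (Nat.factorial m) := Real.coe_toNNReal _ (by positivity)
  have hK1 : K < 1 := by
    rw [← NNReal.coe_lt_coe, hKcoe, NNReal.coe_one]
    exact hm
  obtain ⟨x, hx_fix, hx_unique⟩ := iter_fixed Φ K hK1 m
    (fun x y => by rw [hKcoe]; exact contract m x y)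
  refine ⟨x, fun t => ?_, fun y hy => ?_⟩
  · conv_lhs => rw [← hx_fix]
    exact hΦapp x t
  · refine hx_unique y ?_
    ext t
    rw [hΦapp y t, ← hy t]

end Fixed
section FixedInf
variable {V : Type*} [NormedAddCommGroup V] [NormedSpace ℝ V] [CompleteSpace V]
variable {B : ℝ → V →L[ℝ] V} {b : ℝ → V}

lemma fixed_inf (hB : Integrable B) (hb : Integrable b) (z : V) :
    ∃ x : BoundedContinuousFunction ℝ V,
      (∀ t, x t = z - ∫ s in Ioi t, (B s (x s) + b s)) ∧
      ∀ y : BoundedContinuousFunction ℝ V,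
        (∀ t, y t = z - ∫ s in Ioi t, (B s (y s) + b s)) → y = x := by
  classical
  set hnorm : ℝ → ℝ := fun s => ‖B s‖ with hhnorm
  have hh_int : Integrable hnorm := hB.norm
  have hhpos : ∀ s, 0 ≤ hnorm s := fun s => norm_nonneg _
  set M : ℝ := ∫ s, hnorm s with hM_def
  have hM0 : 0 ≤ M := integral_nonneg hhpos
  set g : ℝ → ℝ := fun t => ∫ s in Ioi t, hnorm s with hg_def
  have hgc : Continuous g := continuous_integral_Ioi hh_int
  have hg0 : ∀ t, 0 ≤ g t := fun t =>
    setIntegral_nonneg measurableSet_Ioi (fun u _ => hhpos u)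
  have hgM : ∀ t, g t ≤ M := fun t =>
    setIntegral_le_integral hh_int (Filter.Eventually.of_forall hhpos)
  have hgk_int : ∀ k : ℕ, Integrable (fun s => (hnorm s * g s ^ k)) := by
    intro k
    have hb2 : Integrable (fun s => g s ^ k * hnorm s) :=
      hh_int.bdd_mul (c := M ^ k) ((hgc.pow k).aestronglyMeasurable)
        (Filter.Eventually.of_forall fun s => by
          rw [Real.norm_eq_abs, abs_pow, abs_of_nonneg (hg0 s)]
          exact pow_le_pow_left₀ (hg0 s) (hgM s) k)
    have w : (fun s => hnorm s * g s ^ k) = fun s => g s ^ k * hnorm s := by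
      funext s; ring
    rw [w]
    exact hb2
  have hf : ∀ x : BoundedContinuousFunction ℝ V, Integrable (fun s => B s (x s) + b s) :=
    fun x => integrable_f hB hb x
  have hbound : ∀ (x : BoundedContinuousFunction ℝ V) (t : ℝ),
      ‖z - ∫ s in Ioi t, (B s (x s) + b s)‖ ≤ ‖z‖ + ∫ s, ‖B s (x s) + b s‖ := by
    intro x t
    refine (norm_sub_le _ _).trans ?_
    have h1 : ‖∫ s in Ioi t, (B s (x s) + b s)‖ ≤ ∫ s in Ioi t, ‖B s (x s) + b s‖ :=
      norm_integral_le_integral_norm _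
    have h2 : ∫ s in Ioi t, ‖B s (x s) + b s‖ ≤ ∫ s, ‖B s (x s) + b s‖ :=
      setIntegral_le_integral (hf x).norm
        (Filter.Eventually.of_forall (fun s => norm_nonneg _))
    linarith
  set Φ : (BoundedContinuousFunction ℝ V) → (BoundedContinuousFunction ℝ V) := fun x =>
    BoundedContinuousFunction.ofNormedAddCommGroup
      (fun t => z - ∫ s in Ioi t, (B s (x s) + b s))
      (continuous_const.sub (continuous_integral_Ioi (hf x)))
      (‖z‖ + ∫ s, ‖B s (x s) + b s‖) (hbound x) with hΦ_def
  have hΦapp : ∀ (x : BoundedContinuousFunction ℝ V) (t : ℝ),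
      Φ x t = z - ∫ s in Ioi t, (B s (x s) + b s) := fun x t => rfl
  have estimate : ∀ (x y : BoundedContinuousFunction ℝ V) (k : ℕ) (t : ℝ),
      ‖(Φ^[k] x) t - (Φ^[k] y) t‖ ≤ g t ^ k / (Nat.factorial k) * dist x y := by
    intro x y k
    induction k with
    | zero =>
      intro t
      simp only [Function.iterate_zero_apply, pow_zero, Nat.factorial_zero, Nat.cast_one,
        div_one, one_mul]
      rw [← dist_eq_norm]
      exact BoundedContinuousFunction.dist_coe_le_dist t
    | succ k ih =>
      intro t
      rw [Function.iterate_succ_apply', Function.iterate_succ_apply']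
      set X := Φ^[k] x with hX
      set Y := Φ^[k] y with hY
      set D : ℝ := dist x y with hD
      have hD0 : 0 ≤ D := dist_nonneg
      have hYXint : Integrable (fun s => B s (Y s - X s)) := by
        have w := integrable_app hB (Y - X).continuous ‖Y - X‖
          (fun t => (Y - X).norm_coe_le_norm t)
        refine w.congr (Filter.Eventually.of_forall (fun s => ?_))
        simp
      have sub_eq : Φ X t - Φ Y t = ∫ s in Ioi t, B s (Y s - X s) := by
        rw [hΦapp, hΦapp]
        have e1 : z - (∫ s in Ioi t, (B s (X s) + b s)) - (z - ∫ s in Ioi t, (B s (Y s) + b s))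
            = (∫ s in Ioi t, (B s (Y s) + b s)) - ∫ s in Ioi t, (B s (X s) + b s) := by abel
        rw [e1, ← integral_sub (hf Y).integrableOn (hf X).integrableOn]
        refine setIntegral_congr_fun measurableSet_Ioi (fun s _ => ?_)
        simp only [map_sub]
        abel
      have n1 : ‖Φ X t - Φ Y t‖ ≤ ∫ s in Ioi t, ‖B s (Y s - X s)‖ := by
        rw [sub_eq]
        exact norm_integral_le_integral_norm _
      have n2 : ∫ s in Ioi t, ‖B s (Y s - X s)‖
          ≤ ∫ s in Ioi t, (hnorm s * g s ^ k) * (D / (Nat.factorial k)) := by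
        refine setIntegral_mono_on hYXint.norm.integrableOn
          (((hgk_int k).mul_const _).integrableOn) measurableSet_Ioi (fun s _ => ?_)
        calc ‖B s (Y s - X s)‖ ≤ ‖B s‖ * ‖Y s - X s‖ := (B s).le_opNorm _
          _ ≤ hnorm s * (g s ^ k / (Nat.factorial k) * D) := by
              refine mul_le_mul_of_nonneg_left ?_ (norm_nonneg _)
              rw [norm_sub_rev]
              exact ih s
          _ = (hnorm s * g s ^ k) * (D / (Nat.factorial k)) := by ring
      have n3 : ∫ s in Ioi t, (hnorm s * g s ^ k) * (D / (Nat.factorial k))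
          = (∫ s in Ioi t, hnorm s * g s ^ k) * (D / (Nat.factorial k)) :=
        integral_mul_const _ _
      have n4 : (∫ s in Ioi t, hnorm s * g s ^ k) * (D / (Nat.factorial k))
          ≤ (g t ^ (k+1) / (k+1)) * (D / (Nat.factorial k)) := by
        refine mul_le_mul_of_nonneg_right ?_ (by positivity)
        exact key_tail hnorm hh_int hhpos t k
      have final : ‖Φ X t - Φ Y t‖ ≤ (g t ^ (k+1) / (k+1)) * (D / (Nat.factorial k)) := by
        calc ‖Φ X t - Φ Y t‖ ≤ ∫ s in Ioi t, (hnorm s * g s ^ k) * (D / (Nat.factorial k)) :=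
              le_trans n1 n2
          _ = (∫ s in Ioi t, hnorm s * g s ^ k) * (D / (Nat.factorial k)) := n3
          _ ≤ (g t ^ (k+1) / (k+1)) * (D / (Nat.factorial k)) := n4
      refine final.trans (le_of_eq ?_)
      rw [Nat.factorial_succ]
      push_cast
      field_simp
  have contract : ∀ (m : ℕ) (x y : BoundedContinuousFunction ℝ V),
      dist (Φ^[m] x) (Φ^[m] y) ≤ M ^ m / (Nat.factorial m) * dist x y := by
    intro m x y
    have hc0 : 0 ≤ M ^ m / (Nat.factorial m) * dist x y := by positivity
    rw [BoundedContinuousFunction.dist_le hc0]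
    intro t
    rw [dist_eq_norm]
    refine (estimate x y m t).trans ?_
    have h2 : g t ^ m ≤ M ^ m := pow_le_pow_left₀ (hg0 t) (hgM t) m
    have hfac : (0:ℝ) < (Nat.factorial m : ℝ) := by positivity
    refine mul_le_mul_of_nonneg_right ?_ dist_nonneg
    exact (div_le_div_iff_of_pos_right hfac).mpr h2
  have htend := FloorSemiring.tendsto_pow_div_factorial_atTop (K := ℝ) M
  have hev : ∀ᶠ m in atTop, M ^ m / (Nat.factorial m : ℝ) < 1 :=
    htend.eventually_lt_const (by norm_num)
  obtain ⟨m, hm⟩ := hev.exists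
  set K : NNReal := Real.toNNReal (M ^ m / (Nat.factorial m)) with hK_def
  have hKcoe : (K : ℝ) = M ^ m / (Nat.factorial m) := Real.coe_toNNReal _ (by positivity)
  have hK1 : K < 1 := by
    rw [← NNReal.coe_lt_coe, hKcoe, NNReal.coe_one]
    exact hm
  obtain ⟨x, hx_fix, hx_unique⟩ := iter_fixed Φ K hK1 m
    (fun x y => by rw [hKcoe]; exact contract m x y)
  refine ⟨x, fun t => ?_, fun y hy => ?_⟩
  · conv_lhs => rw [← hx_fix]
    exact hΦapp x t
  · refine hx_unique y ?_
    ext t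
    rw [hΦapp y t, ← hy t]

end FixedInf
section Reg
variable {V : Type*} [NormedAddCommGroup V] [NormedSpace ℝ V] [CompleteSpace V]
variable {B : ℝ → V →L[ℝ] V} {b : ℝ → V}

set_option maxHeartbeats 2000000 in
lemma sol_regular (hB : Integrable B) (hb : Integrable b) {y : ℝ → V}
    (hy : ∀ t, 0 ≤ t → y t = y 0 + ∫ s in (0:ℝ)..t, (B s (y s) + b s)) :
    IntegrableOn (fun s => B s (y s) + b s) (Ici 0) ∧ ContinuousOn y (Ici 0) ∧
      ∀ t, 0 ≤ t → ‖y t‖ ≤ (‖y 0‖ + ∫ s, ‖b s‖) * Real.exp (∫ s, ‖B s‖) := by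
  classical
  set F : ℝ → V := fun s => B s (y s) + b s with hF_def
  set hnorm : ℝ → ℝ := fun s => ‖B s‖ with hhnorm
  have hh_int : Integrable hnorm := hB.norm
  have hhpos : ∀ s, 0 ≤ hnorm s := fun s => norm_nonneg _
  set M : ℝ := ∫ s, hnorm s with hM_def
  have hM0 : 0 ≤ M := integral_nonneg hhpos
  set Cb : ℝ := ∫ s, ‖b s‖ with hCb_def
  have hCb0 : 0 ≤ Cb := integral_nonneg (fun s => norm_nonneg _)
  set CC : ℝ := ‖y 0‖ + Cb with hCC_def
  have hCC0 : 0 ≤ CC := by positivity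
  set G : ℝ → ℝ := fun r => ∫ s in (0:ℝ)..r, hnorm s with hG_def
  have hGc : Continuous G :=
    intervalIntegral.continuous_primitive (fun a b => hh_int.intervalIntegrable) 0
  have hG0 : ∀ r, 0 ≤ r → 0 ≤ G r :=
    fun r hr => intervalIntegral.integral_nonneg hr (fun u _ => hhpos u)
  have hGM : ∀ r, 0 ≤ r → G r ≤ M := by
    intro r hr
    rw [hG_def]
    simp only []
    rw [intervalIntegral.integral_of_le hr]
    exact setIntegral_le_integral hh_int (Filter.Eventually.of_forall hhpos)
  -- the key integral identity, specialised
  have identG : ∀ (i : ℕ) (r : ℝ), 0 ≤ r →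
      ∫ s in (0:ℝ)..r, hnorm s * G s ^ i = G r ^ (i+1) / (i+1) := by
    intro i r hr
    have e : EqOn (fun s => hnorm s * G s ^ i)
        (fun s => hnorm s * ((0:ℝ) + ∫ u in (0:ℝ)..s, hnorm u) ^ i) (uIcc 0 r) := by
      intro s _
      show hnorm s * G s ^ i = hnorm s * ((0:ℝ) + ∫ u in (0:ℝ)..s, hnorm u) ^ i
      rw [zero_add]
    rw [intervalIntegral.integral_congr e, key_right hnorm 0 r 0 i hh_int.integrableOn,
      zero_add, zero_pow (Nat.succ_ne_zero i), sub_zero]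
  -- interval integrability of hnorm * G^i
  have hGi_int : ∀ (i : ℕ) (c t : ℝ), IntervalIntegrable (fun s => hnorm s * G s ^ i) volume c t :=
    fun i c t => hh_int.intervalIntegrable.mul_continuousOn ((hGc.pow i).continuousOn)
  -- the set S of "good" times
  set S : Set ℝ := {t : ℝ | 0 ≤ t ∧ IntegrableOn F (Ioc 0 t)} with hS_def
  have h0S : (0:ℝ) ∈ S := ⟨le_refl 0, by simp [Set.Ioc_self]⟩
  have hdown : ∀ t ∈ S, ∀ t', 0 ≤ t' → t' ≤ t → t' ∈ S := by
    intro t ht t' ht'0 ht't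
    exact ⟨ht'0, ht.2.mono_set (Set.Ioc_subset_Ioc_right ht't)⟩
  -- measurability of F on sets where y is continuous
  have hmeasF : ∀ (s : Set ℝ), MeasurableSet s → ContinuousOn y s →
      AEStronglyMeasurable F (volume.restrict s) := by
    intro s hs hc
    have h1 : AEStronglyMeasurable y (volume.restrict s) := hc.aestronglyMeasurable hs
    have h2 : AEStronglyMeasurable B (volume.restrict s) := hB.aestronglyMeasurable.restrict
    have h3 : AEStronglyMeasurable b (volume.restrict s) := hb.aestronglyMeasurable.restrict
    exact ((isBoundedBilinearMap_apply.continuous).comp_aestronglyMeasurable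
      (h2.prodMk h1)).add h3
  -- continuity on [0,t] for t ∈ S
  have cont_of_mem : ∀ t ∈ S, ContinuousOn y (Icc 0 t) := by
    intro t ht
    set Fb : ℝ → V := indicator (Ioc 0 t) F with hFb_def
    have hFb : Integrable Fb := ht.2.integrable_indicator measurableSet_Ioc
    have heq : EqOn y (fun r => y 0 + ∫ s in (0:ℝ)..r, Fb s) (Icc 0 t) := by
      intro r hr
      rw [hy r hr.1]
      congr 1
      rw [intervalIntegral.integral_of_le hr.1, intervalIntegral.integral_of_le hr.1]
      refine (setIntegral_congr_fun measurableSet_Ioc (fun s hs => ?_))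
      rw [hFb_def]
      exact (Set.indicator_of_mem (Set.Ioc_subset_Ioc_right hr.2 hs) F).symm
    exact ContinuousOn.congr ((continuous_const.add (intervalIntegral.continuous_primitive
      (fun a b => hFb.intervalIntegrable) 0)).continuousOn) heq
  -- interval integrability of F up to times in S
  have hFr : ∀ t ∈ S, ∀ r ∈ Icc (0:ℝ) t, IntervalIntegrable F volume 0 r := by
    intro t ht r hr
    rw [intervalIntegrable_iff, uIoc_of_le hr.1]
    exact ht.2.mono_set (Set.Ioc_subset_Ioc_right hr.2)
  -- a priori bound on [0,t] for t ∈ S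
  have bound_of_mem : ∀ t ∈ S, ∀ r ∈ Icc (0:ℝ) t, ‖y r‖ ≤ CC * Real.exp M := by
    intro t ht
    have hcont := cont_of_mem t ht
    obtain ⟨D, hD⟩ := isCompact_Icc.exists_bound_of_continuousOn hcont
    have ht0 : (0:ℝ) ≤ t := ht.1
    -- basic integral inequality
    have base : ∀ r ∈ Icc (0:ℝ) t, ‖y r‖ ≤ CC + ∫ s in (0:ℝ)..r, hnorm s * ‖y s‖ := by
      intro r hr
      have hyI : IntervalIntegrable (fun s => hnorm s * ‖y s‖) volume 0 r := by
        refine hh_int.intervalIntegrable.mul_continuousOn ?_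
        rw [uIcc_of_le hr.1]
        exact (hcont.mono (Set.Icc_subset_Icc_right hr.2)).norm
      have hbi : IntervalIntegrable (fun s => ‖b s‖) volume 0 r := hb.norm.intervalIntegrable
      have hn1 : ‖∫ s in (0:ℝ)..r, F s‖ ≤ ∫ s in (0:ℝ)..r, ‖F s‖ :=
        intervalIntegral.norm_integral_le_integral_norm hr.1
      have hn2 : ∫ s in (0:ℝ)..r, ‖F s‖
          ≤ ∫ s in (0:ℝ)..r, (hnorm s * ‖y s‖ + ‖b s‖) := by
        refine intervalIntegral.integral_mono_on hr.1 ((hFr t ht r hr).norm)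
          (hyI.add hbi) (fun s _ => ?_)
        rw [hF_def]
        refine (norm_add_le _ _).trans ?_
        exact add_le_add_left ((B s).le_opNorm _) _
      have hn3 : ∫ s in (0:ℝ)..r, (hnorm s * ‖y s‖ + ‖b s‖)
          = (∫ s in (0:ℝ)..r, hnorm s * ‖y s‖) + ∫ s in (0:ℝ)..r, ‖b s‖ :=
        intervalIntegral.integral_add hyI hbi
      have hn4 : ∫ s in (0:ℝ)..r, ‖b s‖ ≤ Cb := by
        rw [intervalIntegral.integral_of_le hr.1, hCb_def]
        exact setIntegral_le_integral hb.norm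
          (Filter.Eventually.of_forall (fun s => norm_nonneg _))
      have := hy r hr.1
      calc ‖y r‖ = ‖y 0 + ∫ s in (0:ℝ)..r, F s‖ := by rw [← this]
        _ ≤ ‖y 0‖ + ‖∫ s in (0:ℝ)..r, F s‖ := norm_add_le _ _
        _ ≤ ‖y 0‖ + ((∫ s in (0:ℝ)..r, hnorm s * ‖y s‖) + Cb) := by
            have := hn1.trans (hn2.trans (le_of_eq hn3))
            linarith
        _ = CC + ∫ s in (0:ℝ)..r, hnorm s * ‖y s‖ := by rw [hCC_def]; ring
    -- iterated bound
    have claim : ∀ k : ℕ, ∀ r ∈ Icc (0:ℝ) t,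
        ‖y r‖ ≤ CC * (∑ i ∈ Finset.range (k+1), G r ^ i / (Nat.factorial i))
          + G r ^ k / (Nat.factorial k) * D := by
      intro k
      induction k with
      | zero =>
        intro r hr
        have h1 := hD r hr
        have h2 : (∑ i ∈ Finset.range (0+1), G r ^ i / (Nat.factorial i : ℝ)) = 1 := by
          simp
        rw [h2]
        simp only [pow_zero, Nat.factorial_zero, Nat.cast_one, div_one, one_mul, mul_one]
        nlinarith [hCC0]
      | succ k ih =>
        intro r hr
        set Psum : ℝ → ℝ := fun s => ∑ i ∈ Finset.range (k+1),
          G s ^ i / (Nat.factorial i : ℝ) with hPsum_def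
        have hPsumc : Continuous Psum :=
          continuous_finset_sum _ (fun i _ => (hGc.pow i).div_const _)
        set Psi : ℝ → ℝ := fun s => CC * Psum s + G s ^ k / (Nat.factorial k : ℝ) * D
          with hPsi_def
        have hPsic : Continuous Psi :=
          (continuous_const.mul hPsumc).add
            (((hGc.pow k).div_const _).mul continuous_const)
        have hyI : IntervalIntegrable (fun s => hnorm s * ‖y s‖) volume 0 r := by
          refine hh_int.intervalIntegrable.mul_continuousOn ?_
          rw [uIcc_of_le hr.1]
          exact (hcont.mono (Set.Icc_subset_Icc_right hr.2)).norm
        have hPsiI : IntervalIntegrable (fun s => hnorm s * Psi s) volume 0 r :=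
          hh_int.intervalIntegrable.mul_continuousOn hPsic.continuousOn
        have hstep : ∫ s in (0:ℝ)..r, hnorm s * ‖y s‖
            ≤ ∫ s in (0:ℝ)..r, hnorm s * Psi s := by
          refine intervalIntegral.integral_mono_on hr.1 hyI hPsiI (fun s hs => ?_)
          exact mul_le_mul_of_nonneg_left (ih s ⟨hs.1, hs.2.trans hr.2⟩) (hhpos s)
        have hsumI : IntervalIntegrable (fun s => ∑ i ∈ Finset.range (k+1),
            (CC / (Nat.factorial i : ℝ)) * (hnorm s * G s ^ i)) volume 0 r := by
          have hfeq : (fun s => ∑ i ∈ Finset.range (k+1),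
              (CC / (Nat.factorial i : ℝ)) * (hnorm s * G s ^ i))
              = fun s => hnorm s * (CC * Psum s) := by
            funext s
            rw [hPsum_def]
            simp only []
            rw [Finset.mul_sum, Finset.mul_sum]
            refine Finset.sum_congr rfl (fun i _ => ?_)
            ring
          rw [hfeq]
          exact hh_int.intervalIntegrable.mul_continuousOn
            ((continuous_const.mul hPsumc).continuousOn)
        have heval : ∫ s in (0:ℝ)..r, hnorm s * Psi s
            = (∑ i ∈ Finset.range (k+1),
                (CC / (Nat.factorial i : ℝ)) * (G r ^ (i+1) / (i+1)))
              + (D / (Nat.factorial k : ℝ)) * (G r ^ (k+1) / (k+1)) := by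
          have e1 : EqOn (fun s => hnorm s * Psi s)
              (fun s => (∑ i ∈ Finset.range (k+1),
                  (CC / (Nat.factorial i : ℝ)) * (hnorm s * G s ^ i))
                + (D / (Nat.factorial k : ℝ)) * (hnorm s * G s ^ k)) (uIcc 0 r) := by
            intro s _
            show hnorm s * Psi s = _
            rw [hPsi_def, hPsum_def]
            simp only []
            rw [mul_add, Finset.mul_sum, Finset.mul_sum]
            congr 1
            · refine Finset.sum_congr rfl (fun i _ => ?_)
              ring
            · ring
          rw [intervalIntegral.integral_congr e1,
            intervalIntegral.integral_add hsumI ((hGi_int k 0 r).const_mul _),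
            intervalIntegral.integral_finset_sum
              (fun i _ => (hGi_int i 0 r).const_mul _)]
          congr 1
          · refine Finset.sum_congr rfl (fun i _ => ?_)
            rw [intervalIntegral.integral_const_mul, identG i r hr.1]
          · rw [intervalIntegral.integral_const_mul, identG k r hr.1]
        have reindex : CC + ∑ i ∈ Finset.range (k+1),
            (CC / (Nat.factorial i : ℝ)) * (G r ^ (i+1) / (i+1))
            = CC * (∑ i ∈ Finset.range (k+2), G r ^ i / (Nat.factorial i : ℝ)) := by
          rw [Finset.sum_range_succ' (fun i => G r ^ i / (Nat.factorial i : ℝ)) (k+1)]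
          simp only [pow_zero, Nat.factorial_zero, Nat.cast_one, div_one]
          rw [mul_add, mul_one, Finset.mul_sum]
          have hterm : ∀ i ∈ Finset.range (k+1),
              (CC / (Nat.factorial i : ℝ)) * (G r ^ (i+1) / ((i:ℝ)+1))
              = CC * (G r ^ (i+1) / (Nat.factorial (i+1) : ℝ)) := by
            intro i _
            have h1 : ((i:ℝ)+1) ≠ 0 := by positivity
            have h2 : ((Nat.factorial i : ℝ)) ≠ 0 :=
              Nat.cast_ne_zero.2 (Nat.factorial_ne_zero _)
            rw [Nat.factorial_succ]
            push_cast
            rw [div_mul_div_comm, mul_div_assoc]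
            congr 1
            rw [mul_comm]
          rw [Finset.sum_congr rfl hterm]
          ring
        have tailer : (D / (Nat.factorial k : ℝ)) * (G r ^ (k+1) / (k+1))
            = G r ^ (k+1) / (Nat.factorial (k+1) : ℝ) * D := by
          rw [Nat.factorial_succ]
          push_cast
          field_simp
        calc ‖y r‖ ≤ CC + ∫ s in (0:ℝ)..r, hnorm s * ‖y s‖ := base r hr
          _ ≤ CC + ∫ s in (0:ℝ)..r, hnorm s * Psi s := by linarith
          _ = CC + ((∑ i ∈ Finset.range (k+1),
                (CC / (Nat.factorial i : ℝ)) * (G r ^ (i+1) / (i+1)))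
              + (D / (Nat.factorial k : ℝ)) * (G r ^ (k+1) / (k+1))) := by rw [heval]
          _ = CC * (∑ i ∈ Finset.range (k+2), G r ^ i / (Nat.factorial i : ℝ))
              + G r ^ (k+1) / (Nat.factorial (k+1) : ℝ) * D := by
              rw [← reindex, tailer]; ring
    -- pass to the limit
    intro r hr
    have hsum : ∀ k : ℕ, CC * (∑ i ∈ Finset.range (k+1), G r ^ i / (Nat.factorial i))
        ≤ CC * Real.exp M := by
      intro k
      refine mul_le_mul_of_nonneg_left ?_ hCC0
      refine (Real.sum_le_exp_of_nonneg (hG0 r hr.1) (k+1)).trans ?_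
      exact Real.exp_le_exp.2 (hGM r hr.1)
    have hk : ∀ k : ℕ, ‖y r‖ ≤ CC * Real.exp M + G r ^ k / (Nat.factorial k) * D :=
      fun k => (claim k r hr).trans (by linarith [hsum k])
    have htend : Tendsto (fun k : ℕ => CC * Real.exp M + G r ^ k / (Nat.factorial k) * D)
        atTop (𝓝 (CC * Real.exp M + 0 * D)) :=
      tendsto_const_nhds.add
        (((FloorSemiring.tendsto_pow_div_factorial_atTop (K := ℝ) (G r))).mul_const D)
    rw [zero_mul, add_zero] at htend
    exact ge_of_tendsto htend (Filter.Eventually.of_forall hk)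
  -- every nonnegative time is in S
  have hall : ∀ t, 0 ≤ t → t ∈ S := by
    by_contra hc
    push_neg at hc
    obtain ⟨t₀, ht₀0, ht₀⟩ := hc
    have hbddS : BddAbove S := by
      refine ⟨t₀, fun s hs => ?_⟩
      by_contra hlt
      push_neg at hlt
      exact ht₀ (hdown s hs t₀ ht₀0 hlt.le)
    have hne : S.Nonempty := ⟨0, h0S⟩
    set t' : ℝ := sSup S with ht'_def
    have ht'0 : 0 ≤ t' := le_csSup hbddS h0S
    have hlt : ∀ u, 0 ≤ u → u < t' → u ∈ S := by
      intro u hu0 hu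
      obtain ⟨s, hsS, hus⟩ := exists_lt_of_lt_csSup hne hu
      exact hdown s hsS u hu0 hus.le
    have ht'S : t' ∈ S := by
      refine ⟨ht'0, ?_⟩
      rcases eq_or_lt_of_le ht'0 with heq | hpos
      · rw [← heq]
        simp [Set.Ioc_self]
      · have hcont' : ContinuousOn y (Ico 0 t') := by
          intro r hr
          set u : ℝ := (r + t') / 2 with hu_def
          have hru : r < u := by rw [hu_def]; linarith [hr.2]
          have hut : u < t' := by rw [hu_def]; linarith [hr.2]
          have hu0 : 0 ≤ u := by rw [hu_def]; linarith [hr.1]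
          have huS : u ∈ S := hlt u hu0 hut
          have hcw : ContinuousWithinAt y (Icc 0 u) r :=
            (cont_of_mem u huS).continuousWithinAt ⟨hr.1, hru.le⟩
          refine hcw.mono_of_mem_nhdsWithin ?_
          have hmem : Ico 0 t' ∩ Iio u ∈ 𝓝[Ico 0 t'] r :=
            inter_mem_nhdsWithin _ (Iio_mem_nhds hru)
          refine Filter.mem_of_superset hmem (fun x hx => ⟨hx.1.1, hx.2.le⟩)
        have hmeas : AEStronglyMeasurable F (volume.restrict (Ioo 0 t')) :=
          hmeasF _ measurableSet_Ioo (hcont'.mono (fun x hx => ⟨hx.1.le, hx.2⟩))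
        have hbnd : ∀ s ∈ Ioo (0:ℝ) t', ‖F s‖ ≤ hnorm s * (CC * Real.exp M) + ‖b s‖ := by
          intro s hs
          have hsS : s ∈ S := hlt s hs.1.le hs.2
          have hys : ‖y s‖ ≤ CC * Real.exp M :=
            bound_of_mem s hsS s ⟨hs.1.le, le_refl s⟩
          rw [hF_def]
          refine (norm_add_le _ _).trans ?_
          refine add_le_add_left ?_ _
          refine ((B s).le_opNorm _).trans ?_
          exact mul_le_mul_of_nonneg_left hys (norm_nonneg _)
        have hint : IntegrableOn F (Ioo 0 t') := by
          refine Integrable.mono' (((hh_int.mul_const (CC * Real.exp M)).add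
            hb.norm).integrableOn) hmeas ?_
          refine (ae_restrict_iff' measurableSet_Ioo).2
            (Filter.Eventually.of_forall (fun s hs => hbnd s hs))
        exact hint.congr_set_ae Ioo_ae_eq_Ioc.symm
    have hjunk : ∀ u, t' < u → y u = y 0 := by
      intro u hu
      have h0u : 0 ≤ u := ht'0.trans hu.le
      have hnotint : ¬ IntervalIntegrable F volume 0 u := by
        intro hcon
        have huS : u ∈ S := by
          refine ⟨h0u, ?_⟩
          rwa [intervalIntegrable_iff, uIoc_of_le h0u] at hcon
        have := le_csSup hbddS huS
        linarith
      rw [hy u h0u, intervalIntegral.integral_undef hnotint, add_zero]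
    have ht1S : (t' + 1) ∈ S := by
      refine ⟨by linarith, ?_⟩
      have hsplit : Ioc (0:ℝ) (t'+1) = Ioc 0 t' ∪ Ioc t' (t'+1) :=
        (Set.Ioc_union_Ioc_eq_Ioc ht'0 (by linarith)).symm
      rw [hsplit]
      refine ht'S.2.union ?_
      have hnice : Integrable (fun s => B s (y 0) + b s) :=
        (integrable_app hB continuous_const ‖y 0‖ (fun _ => le_refl _)).add hb
      refine (hnice.integrableOn).congr_fun (fun s hs => ?_) measurableSet_Ioc
      rw [hF_def]
      simp only []
      rw [hjunk s hs.1]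
    have := le_csSup hbddS ht1S
    linarith
  -- final conclusions
  have hcontIci : ContinuousOn y (Ici 0) := by
    intro r hr
    have hr0 : (0:ℝ) ≤ r := hr
    have hS1 : (r + 1) ∈ S := hall (r+1) (by linarith)
    have hcw : ContinuousWithinAt y (Icc 0 (r+1)) r :=
      (cont_of_mem (r+1) hS1).continuousWithinAt ⟨hr0, by linarith⟩
    refine hcw.mono_of_mem_nhdsWithin ?_
    have hmem : Ici (0:ℝ) ∩ Iio (r+1) ∈ 𝓝[Ici 0] r :=
      inter_mem_nhdsWithin _ (Iio_mem_nhds (by linarith))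
    exact Filter.mem_of_superset hmem (fun x hx => ⟨hx.1, hx.2.le⟩)
  have hboundIci : ∀ t, 0 ≤ t → ‖y t‖ ≤ CC * Real.exp M := by
    intro t ht
    exact bound_of_mem t (hall t ht) t ⟨ht, le_refl t⟩
  have hintIci : IntegrableOn F (Ici 0) := by
    have hmeas : AEStronglyMeasurable F (volume.restrict (Ioi 0)) :=
      hmeasF _ measurableSet_Ioi (hcontIci.mono Ioi_subset_Ici_self)
    have hint : IntegrableOn F (Ioi 0) := by
      refine Integrable.mono' (((hh_int.mul_const (CC * Real.exp M)).add
        hb.norm).integrableOn) hmeas ?_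
      refine (ae_restrict_iff' measurableSet_Ioi).2
        (Filter.Eventually.of_forall (fun s hs => ?_))
      have hys : ‖y s‖ ≤ CC * Real.exp M := hboundIci s hs.le
      rw [hF_def]
      refine (norm_add_le _ _).trans ?_
      refine add_le_add_left ?_ _
      refine ((B s).le_opNorm _).trans ?_
      exact mul_le_mul_of_nonneg_left hys (norm_nonneg _)
    exact hint.congr_set_ae Ioi_ae_eq_Ici.symm
  exact ⟨hintIci, hcontIci, hboundIci⟩

end Reg
end LinODEAux

open LinODEAux

set_option maxHeartbeats 2000000 in
/-- For `A`, `a` integrable on `[0,∞)`, every `z ∈ ℝⁿ` and every `τ ∈ [0,∞]` (including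
`τ = ∞`), there is a unique Carathéodory solution (expressed in integral form) of
`ẋ = A(t)x + a(t)` on `[0,∞)` belonging to `C_lim([0,∞),ℝⁿ)` with `x(τ) = z`
(for `τ = ∞` this means `lim_{t→∞} x(t) = z`). -/
theorem linear_ode_boundary_value (n : ℕ)
    (A : ℝ → (EuclideanSpace ℝ (Fin n) →L[ℝ] EuclideanSpace ℝ (Fin n)))
    (a : ℝ → EuclideanSpace ℝ (Fin n))
    (hA : IntegrableOn A (Ici (0:ℝ))) (ha : IntegrableOn a (Ici (0:ℝ)))
    (z : EuclideanSpace ℝ (Fin n)) (τ : ℝ≥0∞) :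
    ∃ x : ℝ → EuclideanSpace ℝ (Fin n),
      ((∀ t ≥ (0:ℝ), x t = x 0 + ∫ s in (0:ℝ)..t, (A s (x s) + a s)) ∧
        (∃ L, Tendsto x atTop (𝓝 L)) ∧
        (τ = ⊤ → Tendsto x atTop (𝓝 z)) ∧ (τ ≠ ⊤ → x τ.toReal = z)) ∧
      ∀ y : ℝ → EuclideanSpace ℝ (Fin n),
        ((∀ t ≥ (0:ℝ), y t = y 0 + ∫ s in (0:ℝ)..t, (A s (y s) + a s)) ∧
          (∃ L, Tendsto y atTop (𝓝 L)) ∧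
          (τ = ⊤ → Tendsto y atTop (𝓝 z)) ∧ (τ ≠ ⊤ → y τ.toReal = z)) →
        ∀ t ≥ (0:ℝ), y t = x t := by
  classical
  set B : ℝ → EuclideanSpace ℝ (Fin n) →L[ℝ] EuclideanSpace ℝ (Fin n) := (Ici (0:ℝ)).indicator A with hB_def
  set bb : ℝ → EuclideanSpace ℝ (Fin n) := (Ici (0:ℝ)).indicator a with hbb_def
  have hBint : Integrable B := hA.integrable_indicator (ε' := EuclideanSpace ℝ (Fin n) →L[ℝ] EuclideanSpace ℝ (Fin n)) measurableSet_Ici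
  have hbint : Integrable bb := ha.integrable_indicator measurableSet_Ici
  have hBeq : ∀ s : ℝ, 0 ≤ s → B s = A s := fun s hs => Set.indicator_of_mem (Set.mem_Ici.mpr hs) A
  have hbeq : ∀ s : ℝ, 0 ≤ s → bb s = a s := fun s hs => Set.indicator_of_mem (Set.mem_Ici.mpr hs) a
  have hB0 : ∀ s : ℝ, s < 0 → B s = 0 := fun s hs =>
    Set.indicator_of_notMem (fun hmem => (not_le.2 hs) (Set.mem_Ici.mp hmem)) A
  have hb0 : ∀ s : ℝ, s < 0 → bb s = 0 := fun s hs =>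
    Set.indicator_of_notMem (fun hmem => (not_le.2 hs) (Set.mem_Ici.mp hmem)) a
  have hmemIcc : ∀ t : ℝ, 0 ≤ t → ∀ s ∈ uIcc (0:ℝ) t, 0 ≤ s := by
    intro t ht s hs
    rw [uIcc_of_le ht] at hs
    exact hs.1
  have hfint : ∀ w : BoundedContinuousFunction ℝ (EuclideanSpace ℝ (Fin n)),
      Integrable (fun s => B s (w s) + bb s) := fun w => integrable_f hBint hbint w
  have mkY : ∀ y : ℝ → EuclideanSpace ℝ (Fin n),
      (∀ t ≥ (0:ℝ), y t = y 0 + ∫ s in (0:ℝ)..t, (A s (y s) + a s)) →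
      ∃ Y : BoundedContinuousFunction ℝ (EuclideanSpace ℝ (Fin n)),
        (∀ s, 0 ≤ s → Y s = y s) ∧ (∀ s, s ≤ 0 → Y s = y 0) ∧
        ((fun s => B s (Y s) + bb s)
          = (Ici (0:ℝ)).indicator (fun s => B s (y s) + bb s)) ∧
        IntegrableOn (fun s => B s (y s) + bb s) (Ici 0) ∧
        (∀ t, 0 ≤ t → y t = y 0 + ∫ s in (0:ℝ)..t,
          (Ici (0:ℝ)).indicator (fun s => B s (y s) + bb s) s) := by
    intro y hy_eq
    have hyB : ∀ t, 0 ≤ t → y t = y 0 + ∫ s in (0:ℝ)..t, (B s (y s) + bb s) := by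
      intro t ht
      rw [hy_eq t ht]
      congr 1
      refine intervalIntegral.integral_congr (fun s hs => ?_)
      have hs0 := hmemIcc t ht s hs
      show A s (y s) + a s = B s (y s) + bb s
      rw [hBeq s hs0, hbeq s hs0]
    obtain ⟨hFint, hycont, hybnd⟩ := sol_regular hBint hbint hyB
    have hyBi : ∀ t, 0 ≤ t → y t = y 0 + ∫ s in (0:ℝ)..t,
        (Ici (0:ℝ)).indicator (fun s => B s (y s) + bb s) s := by
      intro t ht
      rw [hyB t ht]
      congr 1
      refine intervalIntegral.integral_congr (fun s hs => ?_)
      have hs0 := hmemIcc t ht s hs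
      exact (Set.indicator_of_mem (Set.mem_Ici.mpr hs0) (fun s => B s (y s) + bb s)).symm
    set CE : ℝ := (‖y 0‖ + ∫ s, ‖bb s‖) * Real.exp (∫ s, ‖B s‖) with hCE_def
    set yt : ℝ → EuclideanSpace ℝ (Fin n) := fun t => y (max t 0) with hyt_def
    have hytc : Continuous yt := by
      refine hycont.comp_continuous (continuous_id.max continuous_const) ?_
      intro t
      exact le_max_right t 0
    have hytb : ∀ t, ‖yt t‖ ≤ CE := fun t => hybnd (max t 0) (le_max_right t 0)
    refine ⟨BoundedContinuousFunction.ofNormedAddCommGroup yt hytc CE hytb,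
      ?_, ?_, ?_, hFint, hyBi⟩
    · intro s hs
      show yt s = y s
      rw [hyt_def]
      simp only []
      rw [max_eq_left hs]
    · intro s hs
      show yt s = y 0
      rw [hyt_def]
      simp only []
      rw [max_eq_right hs]
    · funext s
      rcases le_or_gt 0 s with hs | hs
      · rw [Set.indicator_of_mem (Set.mem_Ici.mpr hs)]
        show B s (yt s) + bb s = B s (y s) + bb s
        rw [hyt_def]
        simp only []
        rw [max_eq_left hs]
      · rw [Set.indicator_of_notMem (fun hmem => (not_le.2 hs) (Set.mem_Ici.mp hmem))]
        show B s (yt s) + bb s = 0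
        rw [hB0 s hs, hb0 s hs]
        simp
  have hvanish : ∀ (F : ℝ → EuclideanSpace ℝ (Fin n)) (t : ℝ),
      ∫ s in Ioc t 0, (Ici (0:ℝ)).indicator F s = 0 := by
    intro F t
    rw [setIntegral_indicator measurableSet_Ici]
    have hsub : Ioc t 0 ∩ Ici 0 ⊆ {(0:ℝ)} := by
      rintro s ⟨⟨-, h2⟩, h3⟩
      exact le_antisymm h2 h3
    have hnull : volume (Ioc t 0 ∩ Ici 0) = 0 :=
      measure_mono_null hsub (measure_singleton 0)
    rw [Measure.restrict_eq_zero.mpr hnull]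
    exact integral_zero_measure _
  by_cases hτ : τ = ⊤
  · -- ∞ case
    obtain ⟨X, hX_eq, hX_uniq⟩ := fixed_inf hBint hbint z
    have hfB : Integrable (fun s => B s (X s) + bb s) := hfint X
    have hP1 : ∀ t, 0 ≤ t → X t = X 0 + ∫ s in (0:ℝ)..t, (A s (X s) + a s) := by
      intro t ht
      have hsp := integral_Ioi_split hfB (u := (0:ℝ)) (v := t) ht
      have hIoit : ∫ s in Ioi t, (B s (X s) + bb s)
          = (∫ s in Ioi 0, (B s (X s) + bb s)) - ∫ s in (0:ℝ)..t, (B s (X s) + bb s) := by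
        rw [hsp]; abel
      have e1 : X t = (z - ∫ s in Ioi 0, (B s (X s) + bb s))
          + ∫ s in (0:ℝ)..t, (B s (X s) + bb s) := by
        rw [hX_eq t, hIoit]; abel
      rw [e1, ← hX_eq 0]
      congr 1
      refine intervalIntegral.integral_congr (fun s hs => ?_)
      have hs0 := hmemIcc t ht s hs
      show B s (X s) + bb s = A s (X s) + a s
      rw [hBeq s hs0, hbeq s hs0]
    have hP3 : Tendsto (⇑X) atTop (𝓝 z) := by
      have h1 : Tendsto (fun t => z - ∫ s in Ioi t, (B s (X s) + bb s)) atTop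
          (𝓝 (z - 0)) := tendsto_const_nhds.sub (tendsto_integral_Ioi_zero hfB)
      rw [sub_zero] at h1
      exact h1.congr (fun t => (hX_eq t).symm)
    refine ⟨⇑X, ⟨fun t ht => hP1 t ht, ⟨z, hP3⟩, fun _ => hP3, fun h => absurd hτ h⟩, ?_⟩
    rintro y ⟨hy_eq, -, hy_lim, -⟩ t ht
    have hy_lim' : Tendsto y atTop (𝓝 z) := hy_lim hτ
    obtain ⟨Y, hY_pos, hY_neg, hind, hFyint, hyBi⟩ := mkY y hy_eq
    set FyI : ℝ → EuclideanSpace ℝ (Fin n) := (Ici (0:ℝ)).indicator (fun s => B s (y s) + bb s) with hFyI_def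
    have hFyI_int : Integrable FyI := hFyint.integrable_indicator measurableSet_Ici
    have hzid : z = y 0 + ∫ s in Ioi 0, FyI s := by
      have h1 : Tendsto (fun u : ℝ => y 0 + ∫ s in (0:ℝ)..u, FyI s) atTop
          (𝓝 (y 0 + ∫ s in Ioi 0, FyI s)) :=
        tendsto_const_nhds.add
          (MeasureTheory.intervalIntegral_tendsto_integral_Ioi 0
            hFyI_int.integrableOn tendsto_id)
      have h2 : Tendsto y atTop (𝓝 (y 0 + ∫ s in Ioi 0, FyI s)) := by
        refine h1.congr' ?_
        filter_upwards [eventually_ge_atTop (0:ℝ)] with u hu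
        exact (hyBi u hu).symm
      exact tendsto_nhds_unique hy_lim' h2
    have hy_from : ∀ u, 0 ≤ u → y u = z - ∫ s in Ioi u, FyI s := by
      intro u hu
      have hsp := integral_Ioi_split hFyI_int (u := (0:ℝ)) (v := u) hu
      rw [hyBi u hu, hzid, hsp]
      abel
    have hYfix : ∀ u, Y u = z - ∫ s in Ioi u, (B s (Y s) + bb s) := by
      intro u
      have hconv : ∫ s in Ioi u, (B s (Y s) + bb s) = ∫ s in Ioi u, FyI s := by
        rw [hFyI_def, hind]
      rcases le_or_gt 0 u with hu | hu
      · rw [hconv, hY_pos u hu]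
        exact hy_from u hu
      · rw [hconv, hY_neg u hu.le]
        have hsp := integral_Ioi_split hFyI_int (u := u) (v := 0) hu.le
        have hv : ∫ s in u..(0:ℝ), FyI s = 0 := by
          rw [intervalIntegral.integral_of_le hu.le, hFyI_def]
          exact hvanish _ u
        rw [hy_from 0 le_rfl, hsp, hv, zero_add]
    have hYX : Y = X := hX_uniq Y hYfix
    have h3 : Y t = X t := by rw [hYX]
    rw [← hY_pos t ht, h3]
  · -- finite case
    obtain ⟨X, hX_eq, hX_uniq⟩ := fixed_finite hBint hbint τ.toReal z
    set c : ℝ := τ.toReal with hc_def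
    have hc : 0 ≤ c := ENNReal.toReal_nonneg
    have hfB : Integrable (fun s => B s (X s) + bb s) := hfint X
    have hadjX : ∀ u v w : ℝ, (∫ s in u..v, (B s (X s) + bb s))
        + ∫ s in v..w, (B s (X s) + bb s) = ∫ s in u..w, (B s (X s) + bb s) :=
      fun u v w => intervalIntegral.integral_add_adjacent_intervals
        hfB.intervalIntegrable hfB.intervalIntegrable
    have hP1 : ∀ t, 0 ≤ t → X t = X 0 + ∫ s in (0:ℝ)..t, (A s (X s) + a s) := by
      intro t ht
      have e1 : X t = X 0 + ∫ s in (0:ℝ)..t, (B s (X s) + bb s) := by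
        rw [hX_eq t, hX_eq 0, ← hadjX c 0 t]
        abel
      rw [e1]
      congr 1
      refine intervalIntegral.integral_congr (fun s hs => ?_)
      have hs0 := hmemIcc t ht s hs
      show B s (X s) + bb s = A s (X s) + a s
      rw [hBeq s hs0, hbeq s hs0]
    have hP2 : Tendsto (⇑X) atTop (𝓝 (z + ∫ s in Ioi c, (B s (X s) + bb s))) := by
      have h1 : Tendsto (fun t => z + ∫ s in c..t, (B s (X s) + bb s)) atTop
          (𝓝 (z + ∫ s in Ioi c, (B s (X s) + bb s))) :=
        tendsto_const_nhds.add
          (MeasureTheory.intervalIntegral_tendsto_integral_Ioi c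
            hfB.integrableOn tendsto_id)
      exact h1.congr (fun t => (hX_eq t).symm)
    have hP4 : X c = z := by
      rw [hX_eq c, intervalIntegral.integral_same, add_zero]
    refine ⟨⇑X, ⟨fun t ht => hP1 t ht, ⟨_, hP2⟩, fun h => absurd h hτ, fun _ => hP4⟩, ?_⟩
    rintro y ⟨hy_eq, -, -, hy_tau⟩ t ht
    have hyc : y c = z := hy_tau hτ
    obtain ⟨Y, hY_pos, hY_neg, hind, hFyint, hyBi⟩ := mkY y hy_eq
    set FyI : ℝ → EuclideanSpace ℝ (Fin n) := (Ici (0:ℝ)).indicator (fun s => B s (y s) + bb s) with hFyI_def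
    have hFyI_int : Integrable FyI := hFyint.integrable_indicator measurableSet_Ici
    have hadjI : ∀ u v w : ℝ, (∫ s in u..v, FyI s)
        + ∫ s in v..w, FyI s = ∫ s in u..w, FyI s :=
      fun u v w => intervalIntegral.integral_add_adjacent_intervals
        hFyI_int.intervalIntegrable hFyI_int.intervalIntegrable
    have hy_from : ∀ u, 0 ≤ u → y u = z + ∫ s in c..u, FyI s := by
      intro u hu
      calc y u = y 0 + ∫ s in (0:ℝ)..u, FyI s := hyBi u hu
        _ = y 0 + ((∫ s in (0:ℝ)..c, FyI s) + ∫ s in c..u, FyI s) := by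
            rw [hadjI 0 c u]
        _ = (y 0 + ∫ s in (0:ℝ)..c, FyI s) + ∫ s in c..u, FyI s := by abel
        _ = y c + ∫ s in c..u, FyI s := by rw [← hyBi c hc]
        _ = z + ∫ s in c..u, FyI s := by rw [hyc]
    have hYfix : ∀ u, Y u = z + ∫ s in c..u, (B s (Y s) + bb s) := by
      intro u
      have hconv : ∫ s in c..u, (B s (Y s) + bb s) = ∫ s in c..u, FyI s := by
        rw [hFyI_def, hind]
      rcases le_or_gt 0 u with hu | hu
      · rw [hconv, hY_pos u hu]
        exact hy_from u hu
      · rw [hconv, hY_neg u hu.le]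
        have hv : ∫ s in (0:ℝ)..u, FyI s = 0 := by
          rw [intervalIntegral.integral_symm, intervalIntegral.integral_of_le hu.le,
            hFyI_def]
          rw [hvanish _ u, neg_zero]
        have e2 : ∫ s in c..u, FyI s = ∫ s in c..(0:ℝ), FyI s := by
          rw [← hadjI c 0 u, hv, add_zero]
        rw [e2, hy_from 0 le_rfl]
    have hYX : Y = X := hX_uniq Y hYfix
    have h3 : Y t = X t := by rw [hYX]
    rw [← hY_pos t ht, h3]
end

section
/- (Generalized needle variation lemma for step functions) Let K ⊂ [0,∞) be compact with Lebesgue measure |K| > 0, and let y : K → ℝᵖ be a step function y(t) = Σ_{j=1}^m y_j χ_{A_j}(t) where {A₁,…,A_m} is a measurable partition of K, with C = max_j ‖y_j‖. For δ > 0, choose a partition {Δ₁,…,Δ_r} of K into measurable sets, ordered along the line, each of measure at most δ/(2C). For α ∈ [0,1] define M(α) = ⋃_{i,j} { t ∈ A_j ∩ Δ_i : ∫_0^t χ_{A_j∩Δ_i}(τ) dτ < α·|A_j ∩ Δ_i| }. Then: (i) |M(α)| = α|K|; (ii) α' ≤ α implies M(α') ⊆ M(α); (iii) for all t ∈ K and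 all 0 ≤ α' ≤ α ≤ 1, ‖∫_{[0,t]∩K} (χ_{M(α)}(τ) − χ_{M(α')}(τ)) y(τ) dτ − (α−α') ∫_{[0,t]∩K} y(τ) dτ‖ ≤ δ|α−α'|. -/
open MeasureTheory Filter Topology Set


lemma indicator_integrable (B : Set ℝ) (hB : MeasurableSet B) (hfin : volume B ≠ ⊤) :
    Integrable (B.indicator (1 : ℝ → ℝ)) := by
  rw [integrable_indicator_iff hB]
  exact integrableOn_const hfin

lemma primitive_eq (B : Set ℝ) (hB : MeasurableSet B) (hB0 : B ⊆ Ici 0) (hfin : volume B ≠ ⊤)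
    (s : ℝ) :
    (∫ τ in (0:ℝ)..s, B.indicator (1:ℝ→ℝ) τ) = (volume (B ∩ Iic s)).toReal := by
  rcases le_or_gt 0 s with hs | hs
  · rw [intervalIntegral.integral_of_le hs, integral_indicator_one hB, measureReal_def,
      Measure.restrict_apply hB]
    congr 1
    apply le_antisymm
    · exact measure_mono (inter_subset_inter_right _ Ioc_subset_Iic_self)
    · calc volume (B ∩ Iic s) ≤ volume ((B ∩ Ioc 0 s) ∪ {0}) := by
            apply measure_mono
            rintro x ⟨hxB, hxs⟩
            rcases eq_or_lt_of_le (mem_Ici.1 (hB0 hxB)) with h0 | h0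
            · exact Or.inr (by simp [← h0])
            · exact Or.inl ⟨hxB, h0, hxs⟩
          _ ≤ volume (B ∩ Ioc 0 s) + volume ({0} : Set ℝ) := measure_union_le _ _
          _ = volume (B ∩ Ioc 0 s) := by simp
  · have h1 : B ∩ Iic s = ∅ := by
      ext x
      simp only [mem_inter_iff, mem_Iic, mem_empty_iff_false, iff_false, not_and, not_le]
      intro hxB
      exact lt_of_lt_of_le hs (hB0 hxB)
    rw [h1, intervalIntegral.integral_of_ge hs.le, integral_indicator_one hB, measureReal_def,
      Measure.restrict_apply hB]
    have h2 : volume (B ∩ Ioc s 0) = 0 := by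
      have : B ∩ Ioc s 0 ⊆ {0} := by
        rintro x ⟨hxB, _, hx0⟩
        exact le_antisymm hx0 (hB0 hxB)
      exact le_antisymm (le_trans (measure_mono this) (by simp)) (zero_le)
    simp [h2]

lemma primitive_cont (B : Set ℝ) (hB : MeasurableSet B) (hfin : volume B ≠ ⊤) :
    Continuous (fun s => ∫ τ in (0:ℝ)..s, B.indicator (1:ℝ→ℝ) τ) :=
  (indicator_integrable B hB hfin).continuous_primitive 0

lemma primitive_mono (B : Set ℝ) (hB : MeasurableSet B) (hB0 : B ⊆ Ici 0) (hfin : volume B ≠ ⊤) :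
    Monotone (fun s => ∫ τ in (0:ℝ)..s, B.indicator (1:ℝ→ℝ) τ) := by
  intro a b hab
  simp only [primitive_eq B hB hB0 hfin]
  exact ENNReal.toReal_mono (lt_of_le_of_lt (measure_mono inter_subset_left) hfin.lt_top).ne
    (measure_mono (inter_subset_inter_right _ (Iic_subset_Iic.2 hab)))

lemma level_measure (B : Set ℝ) (hB : MeasurableSet B) (hB0 : B ⊆ Ici 0) (hfin : volume B ≠ ⊤)
    (c : ℝ) (hc0 : 0 ≤ c) (hc1 : c ≤ (volume B).toReal) :
    volume {s ∈ B | (∫ τ in (0:ℝ)..s, B.indicator (1:ℝ→ℝ) τ) < c} = ENNReal.ofReal c := by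
  set F := fun s => ∫ τ in (0:ℝ)..s, B.indicator (1:ℝ→ℝ) τ with hF
  have hFeq : ∀ s, F s = (volume (B ∩ Iic s)).toReal := fun s => primitive_eq B hB hB0 hfin s
  have hFc : Continuous F := primitive_cont B hB hfin
  have hFm : Monotone F := primitive_mono B hB hB0 hfin
  have hFnn : ∀ s, 0 ≤ F s := fun s => by rw [hFeq]; exact ENNReal.toReal_nonneg
  have hsub : ∀ u : ℝ, volume (B ∩ Iic u) ≠ ⊤ := fun u =>
    (lt_of_le_of_lt (measure_mono inter_subset_left) hfin.lt_top).ne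
  rcases eq_or_lt_of_le hc0 with hc | hc
  · have : {s ∈ B | F s < c} = ∅ := by
      ext x; simp only [mem_setOf_eq, mem_empty_iff_false, iff_false, not_and, not_lt]
      exact fun _ => hc ▸ hFnn x
    rw [this, ← hc]; simp
  have hSeq : {s ∈ B | F s < c} = B ∩ {x | F x < c} := rfl
  have h0S : (0:ℝ) ∈ {x | F x < c} := by
    have : F 0 = 0 := by
      rw [hFeq]
      have : volume (B ∩ Iic (0:ℝ)) = 0 := by
        have : B ∩ Iic (0:ℝ) ⊆ {0} := fun x ⟨hxB, hx⟩ => le_antisymm hx (hB0 hxB)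
        exact le_antisymm (le_trans (measure_mono this) (by simp)) (zero_le)
      simp [this]
    simpa [this]
  by_cases hbdd : BddAbove {x | F x < c}
  · set u := sSup {x | F x < c} with hu
    have hIio : Iio u ⊆ {x | F x < c} := by
      intro x hx
      obtain ⟨y, hy, hxy⟩ := exists_lt_of_lt_csSup ⟨0, h0S⟩ hx
      exact lt_of_le_of_lt (hFm hxy.le) hy
    have hIic : {x | F x < c} ⊆ Iic u := fun x hx => le_csSup hbdd hx
    have hFu_le : F u ≤ c := by
      refine le_of_tendsto (((hFc.tendsto u).mono_left nhdsWithin_le_nhds) :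
        Tendsto F (𝓝[<] u) (𝓝 (F u))) ?_
      filter_upwards [self_mem_nhdsWithin] with x hx
      exact (hIio hx).le
    have hFu_ge : c ≤ F u := by
      refine ge_of_tendsto (((hFc.tendsto u).mono_left nhdsWithin_le_nhds) :
        Tendsto F (𝓝[>] u) (𝓝 (F u))) ?_
      filter_upwards [self_mem_nhdsWithin] with x hx
      by_contra h
      exact absurd (hIic (not_le.1 h)) (by simpa using hx)
    have hvol : volume (B ∩ {x | F x < c}) = volume (B ∩ Iic u) := by
      apply le_antisymm
      · exact measure_mono (inter_subset_inter_right _ hIic)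
      · calc volume (B ∩ Iic u) ≤ volume ((B ∩ Iio u) ∪ {u}) := by
              apply measure_mono
              rintro x ⟨hxB, hx⟩
              rcases lt_or_eq_of_le (mem_Iic.1 hx) with h | h
              · exact Or.inl ⟨hxB, h⟩
              · exact Or.inr (by simp [h])
            _ ≤ volume (B ∩ Iio u) + volume ({u} : Set ℝ) := measure_union_le _ _
            _ = volume (B ∩ Iio u) := by simp
            _ ≤ volume (B ∩ {x | F x < c}) :=
              measure_mono (inter_subset_inter_right _ hIio)
    rw [hSeq, hvol]
    have : (volume (B ∩ Iic u)).toReal = c := le_antisymm (by rw [← hFeq]; exact hFu_le)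
      (by rw [← hFeq]; exact hFu_ge)
    rw [← this, ENNReal.ofReal_toReal (hsub u)]
  · have hall : ∀ x, F x < c := by
      intro x
      obtain ⟨y, hy, hxy⟩ := not_bddAbove_iff.1 hbdd x
      exact lt_of_le_of_lt (hFm hxy.le) hy
    have hset : {s ∈ B | F s < c} = B := by
      ext x; simp [hall x]
    rw [hset]
    -- show volume B = ofReal c, i.e. (volume B).toReal = c
    have htends : Tendsto (fun n : ℕ => volume (B ∩ Iic (n:ℝ))) atTop (𝓝 (volume B)) := by
      have hU : ⋃ n : ℕ, B ∩ Iic (n:ℝ) = B := by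
        apply Subset.antisymm (iUnion_subset fun n => inter_subset_left)
        intro x hx
        obtain ⟨n, hn⟩ := exists_nat_ge x
        exact mem_iUnion.2 ⟨n, hx, hn⟩
      have := tendsto_measure_iUnion_atTop (μ := volume)
        (s := fun n : ℕ => B ∩ Iic (n:ℝ))
        (fun a b hab => inter_subset_inter_right _ (Iic_subset_Iic.2 (by exact_mod_cast hab)))
      rwa [hU] at this
    have htoReal : Tendsto (fun n : ℕ => F (n:ℝ)) atTop (𝓝 (volume B).toReal) := by
      have h2 : Tendsto ENNReal.toReal (𝓝 (volume B)) (𝓝 (volume B).toReal) :=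
        ENNReal.tendsto_toReal hfin
      have := h2.comp htends
      simpa [Function.comp_def, hFeq] using this
    have hle : (volume B).toReal ≤ c := le_of_tendsto htoReal
      (Eventually.of_forall fun n => (hall _).le)
    have : (volume B).toReal = c := le_antisymm hle hc1
    rw [← this, ENNReal.ofReal_toReal hfin]

/-- Generalized needle variation lemma for step functions: for a step function
`y = Σ_j y_j χ_{A_j}` on a compact set `K ⊆ [0,∞)` of positive measure, given a sorted
partition `Δ_i = [t_{i−1},t_i] ∩ K` of `K` into pieces of measure at most `δ/(2C)`
(`C = max_j ‖y_j‖`), the sets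
`M(α) = ⋃_{i,j} {s ∈ A_j ∩ Δ_i : ∫_0^s χ_{A_j∩Δ_i} < α·|A_j∩Δ_i|}` satisfy
(i) `|M(α)| = α|K|`, (ii) monotonicity in `α`, and (iii) the needle variation estimate. -/
theorem needle_variation_step (p m r : ℕ) (hm : 0 < m)
    (K : Set ℝ) (hK : IsCompact K) (hK0 : K ⊆ Ici (0:ℝ)) (hKpos : 0 < volume K)
    (yv : Fin m → EuclideanSpace ℝ (Fin p)) (A : Fin m → Set ℝ)
    (hAm : ∀ j, MeasurableSet (A j))
    (hAdisj : Pairwise (Function.onFun Disjoint A))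
    (hAcover : (⋃ j, A j) = K)
    (C : ℝ) (hC : C = ⨆ j, ‖yv j‖) (hCpos : 0 < C)
    (δ : ℝ) (hδ : 0 < δ)
    (t : Fin (r + 1) → ℝ) (ht : Monotone t)
    (Δ : Fin r → Set ℝ)
    (hΔ : ∀ i : Fin r, Δ i = Icc (t i.castSucc) (t i.succ) ∩ K)
    (hΔcover : (⋃ i, Δ i) = K)
    (hΔsmall : ∀ i, (volume (Δ i)).toReal ≤ δ / (2 * C))
    (y : ℝ → EuclideanSpace ℝ (Fin p))
    (hy : ∀ τ, y τ = ∑ j, (A j).indicator (fun _ => yv j) τ)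
    (M : ℝ → Set ℝ)
    (hM : ∀ α, M α = ⋃ i : Fin r, ⋃ j : Fin m,
      {s ∈ A j ∩ Δ i |
        (∫ τ in (0:ℝ)..s, (A j ∩ Δ i).indicator (1 : ℝ → ℝ) τ) <
          α * (volume (A j ∩ Δ i)).toReal}) :
    (∀ α ∈ Icc (0:ℝ) 1, volume (M α) = ENNReal.ofReal α * volume K) ∧
    (∀ α α' : ℝ, 0 ≤ α' → α' ≤ α → α ≤ 1 → M α' ⊆ M α) ∧
    (∀ s ∈ K, ∀ α α' : ℝ, 0 ≤ α' → α' ≤ α → α ≤ 1 →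
      ‖(∫ τ in Icc 0 s ∩ K,
          (((M α).indicator (1 : ℝ → ℝ) τ - (M α').indicator (1 : ℝ → ℝ) τ) • y τ)) -
        (α - α') • ∫ τ in Icc 0 s ∩ K, y τ‖ ≤ δ * |α - α'|) := by
  classical
  have hKm : MeasurableSet K := hK.isClosed.measurableSet
  have hKfin : volume K ≠ ⊤ := hK.measure_lt_top.ne
  have hΔm : ∀ i, MeasurableSet (Δ i) := fun i => (hΔ i) ▸ (measurableSet_Icc.inter hKm)
  have hΔsubK : ∀ i, Δ i ⊆ K := fun i => (hΔ i) ▸ inter_subset_right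
  have hAsubK : ∀ j, A j ⊆ K := fun j => hAcover ▸ subset_iUnion A j
  have hBm : ∀ (i : Fin r) (j : Fin m), MeasurableSet (A j ∩ Δ i) :=
    fun i j => (hAm j).inter (hΔm i)
  have hBsubK : ∀ (i : Fin r) (j : Fin m), A j ∩ Δ i ⊆ K :=
    fun i j => inter_subset_right.trans (hΔsubK i)
  have hB0 : ∀ (i : Fin r) (j : Fin m), A j ∩ Δ i ⊆ Ici 0 :=
    fun i j => (hBsubK i j).trans hK0
  have hBfin : ∀ (i : Fin r) (j : Fin m), volume (A j ∩ Δ i) ≠ ⊤ :=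
    fun i j => ((measure_mono (hBsubK i j)).trans_lt hKfin.lt_top).ne
  set P : ℝ → Fin r → Fin m → Set ℝ := fun α i j =>
    {s ∈ A j ∩ Δ i |
      (∫ τ in (0:ℝ)..s, (A j ∩ Δ i).indicator (1 : ℝ → ℝ) τ) <
        α * (volume (A j ∩ Δ i)).toReal} with hP
  have hMP : ∀ α, M α = ⋃ i, ⋃ j, P α i j := hM
  have hPsub : ∀ α i j, P α i j ⊆ A j ∩ Δ i := fun α i j x hx => hx.1
  have hPm : ∀ α i j, MeasurableSet (P α i j) := by
    intro α i j
    have : MeasurableSet {x : ℝ |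
        (∫ τ in (0:ℝ)..x, (A j ∩ Δ i).indicator (1 : ℝ → ℝ) τ) <
          α * (volume (A j ∩ Δ i)).toReal} :=
      measurableSet_lt (primitive_cont _ (hBm i j) (hBfin i j)).measurable measurable_const
    exact (hBm i j).inter this
  have hPmono : ∀ (α α' : ℝ), α' ≤ α → ∀ i j, P α' i j ⊆ P α i j := by
    intro α α' h i j x hx
    refine ⟨hx.1, lt_of_lt_of_le hx.2 ?_⟩
    exact mul_le_mul_of_nonneg_right h ENNReal.toReal_nonneg
  have hPvol : ∀ (α : ℝ), 0 ≤ α → α ≤ 1 → ∀ i j,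
      volume (P α i j) = ENNReal.ofReal (α * (volume (A j ∩ Δ i)).toReal) := by
    intro α h0 h1 i j
    exact level_measure _ (hBm i j) (hB0 i j) (hBfin i j) _
      (mul_nonneg h0 ENNReal.toReal_nonneg)
      (mul_le_of_le_one_left ENNReal.toReal_nonneg h1)
  -- intersections of distinct Δ's are null
  have hΔnull : ∀ i i' : Fin r, i ≠ i' → volume (Δ i ∩ Δ i') = 0 := by
    have key : ∀ i i' : Fin r, i < i' → volume (Δ i ∩ Δ i') = 0 := by
      intro i i' hii
      have hsub : Δ i ∩ Δ i' ⊆ {t i.succ} := by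
        rintro x ⟨hx1, hx2⟩
        rw [hΔ i] at hx1; rw [hΔ i'] at hx2
        have h1 : x ≤ t i.succ := hx1.1.2
        have h2 : t i'.castSucc ≤ x := hx2.1.1
        have h3 : t i.succ ≤ t i'.castSucc := ht (Fin.succ_le_castSucc_iff.2 hii)
        have : x = t i.succ := le_antisymm h1 (le_trans h3 h2)
        simp [this]
      exact le_antisymm (le_trans (measure_mono hsub) (by simp)) (zero_le)
    intro i i' h
    rcases h.lt_or_gt with h' | h'
    · exact key i i' h'
    · rw [inter_comm]; exact key i' i h'
  -- sum of the pieces equals volume K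
  have hsumΔ : ∀ (i : Fin r) (μ : Measure ℝ), μ ≤ volume →
      ∑ j, μ (A j ∩ Δ i) = μ (Δ i) := by
    intro i μ hμ
    have h1 : (⋃ j, A j ∩ Δ i) = Δ i := by
      rw [← iUnion_inter, hAcover, inter_eq_right.2 (hΔsubK i)]
    have hdis : Pairwise (Function.onFun Disjoint fun j => A j ∩ Δ i) := fun j j' hjj =>
      (hAdisj hjj).mono inter_subset_left inter_subset_left
    have h2 := measure_iUnion (μ := μ) hdis (fun j => hBm i j)
    rw [h1, tsum_fintype] at h2
    exact h2.symm
  have hsumK : ∀ (μ : Measure ℝ), μ ≤ volume →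
      ∑ i, μ (Δ i) = μ K := by
    intro μ hμ
    rw [← hΔcover, measure_iUnion₀ ?_ (fun i => (hΔm i).nullMeasurableSet), tsum_fintype]
    intro i i' h
    exact le_antisymm (le_trans (hμ _) (le_of_eq (hΔnull i i' h))) (zero_le)
  refine ⟨?_, ?_, ?_⟩
  · -- part (i)
    intro α ⟨hα0, hα1⟩
    rw [hMP]
    have houter : volume (⋃ i, ⋃ j, P α i j) = ∑ i, volume (⋃ j, P α i j) := by
      rw [measure_iUnion₀ ?_ ?_, tsum_fintype]
      · intro i i' h
        have : (⋃ j, P α i j) ∩ (⋃ j, P α i' j) ⊆ Δ i ∩ Δ i' := by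
          apply inter_subset_inter
          · exact iUnion_subset fun j => (hPsub α i j).trans inter_subset_right
          · exact iUnion_subset fun j => (hPsub α i' j).trans inter_subset_right
        exact le_antisymm (le_trans (measure_mono this) (le_of_eq (hΔnull i i' h))) (zero_le)
      · exact fun i => (MeasurableSet.iUnion (fun j => hPm α i j)).nullMeasurableSet
    have hinner : ∀ i, volume (⋃ j, P α i j) = ∑ j, volume (P α i j) := by
      intro i
      rw [measure_iUnion ?_ (fun j => hPm α i j), tsum_fintype]
      intro j j' hjj
      exact (hAdisj hjj).mono ((hPsub α i j).trans inter_subset_left)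
        ((hPsub α i j').trans inter_subset_left)
    rw [houter]
    simp_rw [hinner, hPvol α hα0 hα1]
    have : ∀ i j, ENNReal.ofReal (α * (volume (A j ∩ Δ i)).toReal)
        = ENNReal.ofReal α * volume (A j ∩ Δ i) := by
      intro i j
      rw [ENNReal.ofReal_mul hα0, ENNReal.ofReal_toReal (hBfin i j)]
    simp_rw [this, ← Finset.mul_sum]
    congr 1
    calc ∑ i, ∑ j, volume (A j ∩ Δ i) = ∑ i, volume (Δ i) := by
          exact Finset.sum_congr rfl fun i _ => hsumΔ i volume le_rfl
      _ = volume K := hsumK volume le_rfl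
  · -- part (ii)
    intro α α' h0 h1 h2
    rw [hMP, hMP]
    exact iUnion_mono fun i => iUnion_mono fun j => hPmono α α' h1 i j
  · -- part (iii)
    intro s hs α α' hα'0 hα'α hα1
    have hα0 : 0 ≤ α := le_trans hα'0 hα'α
    have hα'1 : α' ≤ 1 := le_trans hα'α hα1
    set T := Icc 0 s ∩ K with hT
    set ν := volume.restrict T with hν
    have hνle : ∀ V : Set ℝ, ν V ≤ volume V := fun V => Measure.restrict_apply_le T V
    have hνfin : ∀ V : Set ℝ, ν V ≠ ⊤ := by
      intro V
      have h1 : ν V ≤ ν univ := measure_mono (subset_univ V)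
      have h2 : ν univ = volume T := Measure.restrict_apply_univ T
      have h3 : volume T ≤ volume K := measure_mono inter_subset_right
      exact ((h1.trans (h2 ▸ h3)).trans_lt hKfin.lt_top).ne
    have hMm : ∀ β : ℝ, MeasurableSet (M β) := by
      intro β
      rw [hMP]
      exact MeasurableSet.iUnion fun i => MeasurableSet.iUnion fun j => hPm β i j
    have hIndInt : ∀ (V : Set ℝ), MeasurableSet V →
        ∀ v : EuclideanSpace ℝ (Fin p), Integrable (V.indicator (fun _ => v)) ν := by
      intro V hV v
      rw [integrable_indicator_iff hV]
      exact integrableOn_const (hνfin V)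
    have hpt : ∀ (W : Set ℝ) (τ : ℝ), W.indicator (1:ℝ→ℝ) τ • y τ
        = ∑ j, ((W ∩ A j).indicator (fun _ => yv j) τ) := by
      intro W τ
      rw [hy, Finset.smul_sum]
      refine Finset.sum_congr rfl fun j _ => ?_
      by_cases h1 : τ ∈ W <;> by_cases h2 : τ ∈ A j <;>
        simp [indicator_of_mem, indicator_of_notMem, h1, h2, mem_inter_iff]
    have hint_sum : ∀ (W : Set ℝ), MeasurableSet W →
        Integrable (fun τ => W.indicator (1:ℝ→ℝ) τ • y τ) ν := by
      intro W hW
      have heq : (fun τ => W.indicator (1:ℝ→ℝ) τ • y τ)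
          = fun τ => ∑ j, ((W ∩ A j).indicator (fun _ => yv j) τ) := funext (hpt W)
      rw [heq]
      exact integrable_finset_sum _ (fun j _ => hIndInt (W ∩ A j) (hW.inter (hAm j)) (yv j))
    have hWint : ∀ (W : Set ℝ), MeasurableSet W →
        (∫ τ, W.indicator (1:ℝ→ℝ) τ • y τ ∂ν) = ∑ j, (ν (W ∩ A j)).toReal • yv j := by
      intro W hW
      calc (∫ τ, W.indicator (1:ℝ→ℝ) τ • y τ ∂ν)
          = ∫ τ, (∑ j, ((W ∩ A j).indicator (fun _ => yv j) τ)) ∂ν := by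
            exact integral_congr_ae (Eventually.of_forall fun τ => hpt W τ)
        _ = ∑ j, ∫ τ, ((W ∩ A j).indicator (fun _ => yv j) τ) ∂ν :=
            integral_finset_sum _ (fun j _ => hIndInt (W ∩ A j) (hW.inter (hAm j)) (yv j))
        _ = ∑ j, (ν (W ∩ A j)).toReal • yv j := by
            refine Finset.sum_congr rfl fun j _ => ?_
            exact integral_indicator_const (yv j) (hW.inter (hAm j))
    have hYint : (∫ τ, y τ ∂ν) = ∑ j, (ν (A j)).toReal • yv j := by
      calc (∫ τ, y τ ∂ν) = ∫ τ, (∑ j, ((A j).indicator (fun _ => yv j) τ)) ∂ν := by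
            exact integral_congr_ae (Eventually.of_forall fun τ => hy τ)
        _ = ∑ j, ∫ τ, ((A j).indicator (fun _ => yv j) τ) ∂ν :=
            integral_finset_sum _ (fun j _ => hIndInt (A j) (hAm j) (yv j))
        _ = ∑ j, (ν (A j)).toReal • yv j := by
            refine Finset.sum_congr rfl fun j _ => ?_
            exact integral_indicator_const (yv j) (hAm j)
    have hsplit : (∫ τ, (((M α).indicator (1:ℝ→ℝ) τ - (M α').indicator (1:ℝ→ℝ) τ) • y τ) ∂ν)
        = (∫ τ, (M α).indicator (1:ℝ→ℝ) τ • y τ ∂ν)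
          - ∫ τ, (M α').indicator (1:ℝ→ℝ) τ • y τ ∂ν := by
      rw [← integral_sub (hint_sum _ (hMm α)) (hint_sum _ (hMm α'))]
      refine integral_congr_ae (Eventually.of_forall fun τ => ?_)
      simp only [sub_smul]
    -- decomposition over Δ i
    have hdecj : ∀ (V : Set ℝ), MeasurableSet V → V ⊆ K → ν V = ∑ i, ν (V ∩ Δ i) := by
      intro V hV hVK
      have h1 : V = ⋃ i, V ∩ Δ i := by
        rw [← inter_iUnion, hΔcover, inter_eq_left.2 hVK]
      have h2 := measure_iUnion₀ (μ := ν) ?_ (fun i => (hV.inter (hΔm i)).nullMeasurableSet)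
      · rw [← h1, tsum_fintype] at h2
        exact h2
      · intro i i' h
        refine le_antisymm (le_trans (hνle _) ?_) (zero_le)
        refine le_trans (measure_mono ?_) (le_of_eq (hΔnull i i' h))
        exact inter_subset_inter inter_subset_right inter_subset_right
    have haeP : ∀ (β : ℝ) (i : Fin r) (j : Fin m), ν (M β ∩ A j ∩ Δ i) = ν (P β i j) := by
      intro β i j
      have hPsubM : P β i j ⊆ M β ∩ A j ∩ Δ i := by
        intro x hx
        refine ⟨⟨?_, hx.1.1⟩, hx.1.2⟩
        rw [hMP β]
        exact mem_iUnion.2 ⟨i, mem_iUnion.2 ⟨j, hx⟩⟩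
      have hdiff : volume ((M β ∩ A j ∩ Δ i) \ P β i j) = 0 := by
        have hsub : (M β ∩ A j ∩ Δ i) \ P β i j ⊆
            ⋃ i' : Fin r, ⋃ _h : i' ≠ i, Δ i ∩ Δ i' := by
          rintro x ⟨⟨⟨hxM, hxA⟩, hxΔ⟩, hxP⟩
          rw [hMP] at hxM
          simp only [mem_iUnion] at hxM
          obtain ⟨i', j', hx'⟩ := hxM
          have hj : j' = j := by
            by_contra hne
            exact Set.disjoint_left.1 (hAdisj hne) hx'.1.1 hxA
          subst hj
          have hi : i' ≠ i := by rintro rfl; exact hxP hx'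
          exact mem_iUnion.2 ⟨i', mem_iUnion.2 ⟨hi, ⟨hxΔ, hx'.1.2⟩⟩⟩
        refine measure_mono_null hsub ?_
        rw [measure_iUnion_null_iff]
        intro i'
        rw [measure_iUnion_null_iff]
        intro hi'
        exact hΔnull i i' (Ne.symm hi')
      have hdiff2 : volume ((P β i j) \ (M β ∩ A j ∩ Δ i)) = 0 := by
        rw [diff_eq_empty.2 hPsubM]; simp
      have hae : ((M β ∩ A j ∩ Δ i : Set ℝ)) =ᵐ[volume] ((P β i j : Set ℝ)) :=
        (MeasureTheory.ae_eq_set).2 ⟨hdiff, hdiff2⟩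
      exact measure_congr (hae.filter_mono (ae_mono Measure.restrict_le_self))
    -- the coefficient functions
    set d : Fin r → Fin m → ℝ := fun i j =>
      (ν (P α i j)).toReal - (ν (P α' i j)).toReal
        - (α - α') * (ν (A j ∩ Δ i)).toReal with hd
    have hL : (∫ τ, (((M α).indicator (1:ℝ→ℝ) τ - (M α').indicator (1:ℝ→ℝ) τ) • y τ) ∂ν)
        - (α - α') • (∫ τ, y τ ∂ν) = ∑ j, ∑ i, d i j • yv j := by
      rw [hsplit, hWint _ (hMm α), hWint _ (hMm α'), hYint, Finset.smul_sum,
        ← Finset.sum_sub_distrib, ← Finset.sum_sub_distrib]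
      refine Finset.sum_congr rfl fun j _ => ?_
      have e1 : ν (M α ∩ A j) = ∑ i, ν (P α i j) := by
        rw [hdecj (M α ∩ A j) ((hMm α).inter (hAm j))
          (inter_subset_right.trans (hAsubK j))]
        exact Finset.sum_congr rfl fun i _ => haeP α i j
      have e2 : ν (M α' ∩ A j) = ∑ i, ν (P α' i j) := by
        rw [hdecj (M α' ∩ A j) ((hMm α').inter (hAm j))
          (inter_subset_right.trans (hAsubK j))]
        exact Finset.sum_congr rfl fun i _ => haeP α' i j
      have e3 : ν (A j) = ∑ i, ν (A j ∩ Δ i) := hdecj (A j) (hAm j) (hAsubK j)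
      rw [e1, e2, e3, ENNReal.toReal_sum (fun i _ => hνfin _),
        ENNReal.toReal_sum (fun i _ => hνfin _), ENNReal.toReal_sum (fun i _ => hνfin _),
        smul_smul, ← sub_smul, ← sub_smul, ← Finset.sum_smul]
      congr 1
      rw [hd]
      rw [Finset.mul_sum, ← Finset.sum_sub_distrib, ← Finset.sum_sub_distrib]
    -- bound on each |d i j|
    have hyC : ∀ j, ‖yv j‖ ≤ C := by
      intro j
      rw [hC]
      exact le_ciSup (f := fun j => ‖yv j‖) (Set.Finite.bddAbove (finite_range _)) j
    have hcomplete : ∀ i : Fin r, t i.succ ≤ s → ∀ V : Set ℝ, MeasurableSet V → V ⊆ Δ i →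
        ν V = volume V := by
      intro i hi V hV hVΔ
      rw [hν, Measure.restrict_apply hV]
      congr 1
      refine inter_eq_left.2 fun x hx => ?_
      have hxΔ := hVΔ hx
      have hxK : x ∈ K := hΔsubK i hxΔ
      rw [hΔ i] at hxΔ
      exact ⟨⟨hK0 hxK, le_trans hxΔ.1.2 hi⟩, hxK⟩
    have hempty : ∀ i : Fin r, s < t i.castSucc → ∀ V : Set ℝ, MeasurableSet V → V ⊆ Δ i →
        ν V = 0 := by
      intro i hi V hV hVΔ
      rw [hν, Measure.restrict_apply hV]
      have : V ∩ T = ∅ := by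
        refine eq_empty_iff_forall_notMem.2 ?_
        rintro x ⟨hxV, hxT, _⟩
        have h1 : t i.castSucc ≤ x := ((hΔ i ▸ hVΔ hxV) : x ∈ Icc _ _ ∩ K).1.1
        have h2 : x ≤ s := hxT.2
        linarith
      rw [this, measure_empty]
    have hd0 : ∀ i j, (t i.succ ≤ s ∨ s < t i.castSucc) → d i j = 0 := by
      rintro i j (hcase | hcase)
      · have e1 : ν (P α i j) = ENNReal.ofReal (α * (volume (A j ∩ Δ i)).toReal) := by
          rw [hcomplete i hcase _ (hPm α i j) ((hPsub α i j).trans inter_subset_right),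
            hPvol α hα0 hα1 i j]
        have e2 : ν (P α' i j) = ENNReal.ofReal (α' * (volume (A j ∩ Δ i)).toReal) := by
          rw [hcomplete i hcase _ (hPm α' i j) ((hPsub α' i j).trans inter_subset_right),
            hPvol α' hα'0 hα'1 i j]
        have e3 : ν (A j ∩ Δ i) = volume (A j ∩ Δ i) :=
          hcomplete i hcase _ (hBm i j) inter_subset_right
        rw [hd]
        simp only [e1, e2, e3,
          ENNReal.toReal_ofReal (mul_nonneg hα0 ENNReal.toReal_nonneg),
          ENNReal.toReal_ofReal (mul_nonneg hα'0 ENNReal.toReal_nonneg)]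
        ring
      · have e1 : ν (P α i j) = 0 :=
          hempty i hcase _ (hPm α i j) ((hPsub α i j).trans inter_subset_right)
        have e2 : ν (P α' i j) = 0 :=
          hempty i hcase _ (hPm α' i j) ((hPsub α' i j).trans inter_subset_right)
        have e3 : ν (A j ∩ Δ i) = 0 := hempty i hcase _ (hBm i j) inter_subset_right
        rw [hd]
        simp only [e1, e2, e3]
        simp
    have hdb : ∀ i j, |d i j| ≤ 2 * (α - α') * (volume (A j ∩ Δ i)).toReal := by
      intro i j
      set b := (volume (A j ∩ Δ i)).toReal with hb
      have hbnn : 0 ≤ b := ENNReal.toReal_nonneg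
      have hle1 : ν (P α i j) ≤ ν (P α' i j) + ENNReal.ofReal ((α - α') * b) := by
        calc ν (P α i j) ≤ ν (P α' i j ∪ (P α i j \ P α' i j)) := by
              refine measure_mono fun x hx => ?_
              by_cases hx' : x ∈ P α' i j
              · exact Or.inl hx'
              · exact Or.inr ⟨hx, hx'⟩
          _ ≤ ν (P α' i j) + ν (P α i j \ P α' i j) := measure_union_le _ _
          _ ≤ ν (P α' i j) + volume (P α i j \ P α' i j) := add_le_add le_rfl (hνle _)
          _ = ν (P α' i j) + ENNReal.ofReal ((α - α') * b) := by
              rw [measure_diff (hPmono α α' hα'α i j) ((hPm α' i j).nullMeasurableSet)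
                  ((measure_mono ((hPsub α' i j).trans (hBsubK i j))).trans_lt
                    hKfin.lt_top).ne,
                hPvol α hα0 hα1 i j, hPvol α' hα'0 hα'1 i j,
                ← ENNReal.ofReal_sub _ (mul_nonneg hα'0 ENNReal.toReal_nonneg)]
              congr 1
              rw [hb]; congr 1; ring
      have ha1 : (ν (P α i j)).toReal ≤ (ν (P α' i j)).toReal + (α - α') * b := by
        have := ENNReal.toReal_mono (by
          exact ENNReal.add_ne_top.2 ⟨hνfin _, ENNReal.ofReal_ne_top⟩) hle1
        rwa [ENNReal.toReal_add (hνfin _) ENNReal.ofReal_ne_top,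
          ENNReal.toReal_ofReal (mul_nonneg (sub_nonneg.2 hα'α) hbnn)] at this
      have ha0 : (ν (P α' i j)).toReal ≤ (ν (P α i j)).toReal :=
        ENNReal.toReal_mono (hνfin _) (measure_mono (hPmono α α' hα'α i j))
      have ha2 : (ν (A j ∩ Δ i)).toReal ≤ b :=
        ENNReal.toReal_mono (hBfin i j) (hνle _)
      have ha3 : 0 ≤ (ν (A j ∩ Δ i)).toReal := ENNReal.toReal_nonneg
      simp only [hd, abs_le]
      constructor <;> nlinarith [sub_nonneg.2 hα'α, mul_le_mul_of_nonneg_left ha2 (sub_nonneg.2 hα'α)]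
    set g : Fin r → ℝ := fun i => ∑ j, |d i j| with hg
    have hgnn : ∀ i, 0 ≤ g i := fun i => Finset.sum_nonneg fun j _ => abs_nonneg _
    have hg0 : ∀ i, ¬(t i.castSucc ≤ s ∧ s < t i.succ) → g i = 0 := by
      intro i hi
      rw [hg]
      refine Finset.sum_eq_zero fun j _ => ?_
      rw [abs_eq_zero]
      by_cases h1 : t i.succ ≤ s
      · exact hd0 i j (Or.inl h1)
      · by_cases h2 : t i.castSucc ≤ s
        · exact absurd ⟨h2, not_le.1 h1⟩ hi
        · exact hd0 i j (Or.inr (not_le.1 h2))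
    have hg1 : ∀ i, g i ≤ 2 * (α - α') * (δ / (2 * C)) := by
      intro i
      rw [hg]
      calc ∑ j, |d i j| ≤ ∑ j, 2 * (α - α') * (volume (A j ∩ Δ i)).toReal :=
            Finset.sum_le_sum fun j _ => hdb i j
        _ = 2 * (α - α') * ∑ j, (volume (A j ∩ Δ i)).toReal := by rw [Finset.mul_sum]
        _ = 2 * (α - α') * (volume (Δ i)).toReal := by
            congr 1
            rw [← ENNReal.toReal_sum (fun j _ => hBfin i j), hsumΔ i volume le_rfl]
        _ ≤ 2 * (α - α') * (δ / (2 * C)) := by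
            refine mul_le_mul_of_nonneg_left (hΔsmall i) ?_
            nlinarith [sub_nonneg.2 hα'α]
    have huniq : ∀ i i' : Fin r, (t i.castSucc ≤ s ∧ s < t i.succ) →
        (t i'.castSucc ≤ s ∧ s < t i'.succ) → i = i' := by
      intro i i' h h'
      by_contra hne
      rcases Ne.lt_or_gt hne with hlt | hlt
      · have := ht (Fin.succ_le_castSucc_iff.2 hlt)
        linarith [h.2, h'.1]
      · have := ht (Fin.succ_le_castSucc_iff.2 hlt)
        linarith [h'.2, h.1]
    have hgsum : ∑ i, g i ≤ 2 * (α - α') * (δ / (2 * C)) := by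
      by_cases hex : ∃ i : Fin r, t i.castSucc ≤ s ∧ s < t i.succ
      · obtain ⟨i₀, hi₀⟩ := hex
        have heq : ∑ i, g i = g i₀ := by
          refine Finset.sum_eq_single i₀ (fun i _ hne => hg0 i fun hb => hne (huniq i i₀ hb hi₀))
            (fun h => absurd (Finset.mem_univ i₀) h)
        rw [heq]
        exact hg1 i₀
      · have hz : ∀ i, g i = 0 := fun i => hg0 i fun hb => hex ⟨i, hb⟩
        rw [Finset.sum_eq_zero fun i _ => hz i]
        have := sub_nonneg.2 hα'α
        positivity
    -- put everything together
    rw [hL]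
    have hnorm : ‖∑ j, ∑ i, d i j • yv j‖ ≤ (∑ i, g i) * C := by
      calc ‖∑ j, ∑ i, d i j • yv j‖ ≤ ∑ j, ‖∑ i, d i j • yv j‖ := norm_sum_le _ _
        _ ≤ ∑ j, ∑ i, ‖d i j • yv j‖ :=
            Finset.sum_le_sum fun j _ => norm_sum_le _ _
        _ ≤ ∑ j, ∑ i, |d i j| * C := by
            refine Finset.sum_le_sum fun j _ => Finset.sum_le_sum fun i _ => ?_
            rw [norm_smul, Real.norm_eq_abs]
            exact mul_le_mul_of_nonneg_left (hyC j) (abs_nonneg _)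
        _ = ∑ i, ∑ j, |d i j| * C := Finset.sum_comm
        _ = (∑ i, g i) * C := by
            rw [Finset.sum_mul]
            refine Finset.sum_congr rfl fun i _ => ?_
            rw [hg, Finset.sum_mul]
    refine le_trans hnorm ?_
    have hfinal : 2 * (α - α') * (δ / (2 * C)) * C = δ * (α - α') := by
      field_simp
    calc (∑ i, g i) * C ≤ 2 * (α - α') * (δ / (2 * C)) * C :=
          mul_le_mul_of_nonneg_right hgsum hCpos.le
      _ = δ * (α - α') := hfinal
      _ = δ * |α - α'| := by rw [abs_of_nonneg (sub_nonneg.2 hα'α)]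
end
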